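/- arXiv:1305.2533 — 7 statements merged into one kernel-verified Lean document; each statement's English description precedes it below -/
import Mathlib

section
/- Let A be an n×n real matrix with δ ≤ a_{ij} ≤ 1 for all i,j, where 0 < δ < 1. Under the probability measure P(σ) = (∏_{i=1}^n a_{iσ(i)}) / per(A) on S_n, the expected number of cycles of a random permutation σ is at most 2 + 2δ^{-2} ln n. -/
open scoped Classical

/-- The number of cycles of a permutation, counting fixed points as cycles. -/
def cycleCount {n : ℕ} (σ : Equiv.Perm (Fin n)) : ℕ :=
  σ.cycleType.card + (Finset.univ.filter fun i => σ i = i).card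

namespace ECCAux

open Equiv Equiv.Perm Finset Function

variable {n : ℕ}


noncomputable def orb (σ : Equiv.Perm (Fin n)) (i : Fin n) : Finset (Fin n) :=
  Finset.univ.filter fun j => σ.SameCycle i j

lemma mem_orb {σ : Equiv.Perm (Fin n)} {i j : Fin n} : j ∈ orb σ i ↔ σ.SameCycle i j := by
  simp [orb]

lemma mem_periodicPts (σ : Equiv.Perm (Fin n)) (i : Fin n) : i ∈ periodicPts ⇑σ := by
  refine mk_mem_periodicPts (orderOf_pos σ) ?_
  show (⇑σ)^[orderOf σ] i = i
  rw [← Equiv.Perm.coe_pow, pow_orderOf_eq_one]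
  rfl

lemma minPer_pos (σ : Equiv.Perm (Fin n)) (i : Fin n) : 0 < minimalPeriod ⇑σ i :=
  minimalPeriod_pos_of_mem_periodicPts (mem_periodicPts σ i)

lemma pow_minPer (σ : Equiv.Perm (Fin n)) (i : Fin n) : (σ ^ minimalPeriod ⇑σ i) i = i := by
  have := iterate_minimalPeriod (f := ⇑σ) (x := i)
  rwa [← Equiv.Perm.coe_pow] at this

lemma pow_ne_of_lt (σ : Equiv.Perm (Fin n)) (i : Fin n) {k : ℕ} (h0 : 0 < k)
    (h : k < minimalPeriod ⇑σ i) : (σ ^ k) i ≠ i := by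
  intro hcon
  exact not_isPeriodicPt_of_pos_of_lt_minimalPeriod h0.ne' h
    (by show (⇑σ)^[k] i = i; rwa [← Equiv.Perm.coe_pow])

lemma orb_eq_image (σ : Equiv.Perm (Fin n)) (i : Fin n) :
    orb σ i = (Finset.range (minimalPeriod ⇑σ i)).image (fun k => (σ ^ k) i) := by
  ext j
  simp only [mem_orb, Finset.mem_image, Finset.mem_range]
  constructor
  · intro hs
    obtain ⟨k, -, hk⟩ := hs.exists_pow_eq'
    refine ⟨k % minimalPeriod ⇑σ i, Nat.mod_lt _ (minPer_pos σ i), ?_⟩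
    have := iterate_mod_minimalPeriod_eq (f := ⇑σ) (x := i) (n := k)
    rw [← Equiv.Perm.coe_pow, ← Equiv.Perm.coe_pow] at this
    rw [this]; exact hk
  · rintro ⟨k, -, rfl⟩
    exact ⟨(k : ℤ), by rw [zpow_natCast]⟩

lemma orb_card (σ : Equiv.Perm (Fin n)) (i : Fin n) :
    (orb σ i).card = minimalPeriod ⇑σ i := by
  rw [orb_eq_image, Finset.card_image_of_injOn, Finset.card_range]
  intro a ha b hb hab
  simp only [Finset.coe_range, Set.mem_Iio] at ha hb
  refine iterate_injOn_Iio_minimalPeriod ha hb ?_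
  simpa only [← Equiv.Perm.coe_pow] using hab

lemma minPer_le (σ : Equiv.Perm (Fin n)) (i : Fin n) : minimalPeriod ⇑σ i ≤ n := by
  rw [← orb_card]
  simpa using Finset.card_le_univ (orb σ i)

lemma orb_eq_orb_iff {σ : Equiv.Perm (Fin n)} {i j : Fin n} :
    orb σ i = orb σ j ↔ σ.SameCycle i j := by
  constructor
  · intro h
    have : i ∈ orb σ j := h ▸ mem_orb.2 (Equiv.Perm.SameCycle.refl σ i)
    exact (mem_orb.1 this).symm
  · intro h
    ext k
    rw [mem_orb, mem_orb]
    exact ⟨fun hik => h.symm.trans hik, fun hjk => h.trans hjk⟩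

lemma orb_of_fixed {σ : Equiv.Perm (Fin n)} {i : Fin n} (h : σ i = i) : orb σ i = {i} := by
  ext j
  simp only [mem_orb, Finset.mem_singleton]
  exact ⟨fun hs => (hs.eq_of_left h).symm, fun hj => hj ▸ Equiv.Perm.SameCycle.refl σ i⟩

lemma orb_of_mem_support {σ : Equiv.Perm (Fin n)} {i : Fin n} (h : i ∈ σ.support) :
    orb σ i = (σ.cycleOf i).support := by
  ext j
  rw [mem_orb, Equiv.Perm.mem_support_cycleOf_iff]
  exact ⟨fun hs => ⟨hs, h⟩, fun hs => hs.1⟩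

lemma splice_pow {σ : Equiv.Perm (Fin n)} {i j : Fin n} {ℓ : ℕ}
    (hp : minimalPeriod ⇑σ i = ℓ) (hns : ¬ σ.SameCycle i j) :
    ((σ * Equiv.swap i j) ^ ℓ) j = i := by
  have hip : 0 < ℓ := hp ▸ minPer_pos σ i
  have key : ∀ k, 0 < k → k ≤ ℓ → ((σ * Equiv.swap i j) ^ k) j = (σ ^ k) i := by
    intro k
    induction k with
    | zero => omega
    | succ k ih =>
      intro _ hk1
      rcases Nat.eq_zero_or_pos k with rfl | hk0
      · simp [Equiv.swap_apply_right]
      · have hx1 : (σ ^ k) i ≠ i := pow_ne_of_lt σ i hk0 (by omega)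
        have hx2 : (σ ^ k) i ≠ j := fun h => hns ⟨(k : ℤ), by rw [zpow_natCast]; exact h⟩
        rw [pow_succ', Equiv.Perm.mul_apply, ih hk0 (by omega), Equiv.Perm.mul_apply,
          Equiv.swap_apply_of_ne_of_ne hx1 hx2, pow_succ', Equiv.Perm.mul_apply]
  rw [key ℓ hip le_rfl, ← hp, pow_minPer]


lemma card_image_orb (σ : Equiv.Perm (Fin n)) :
    (Finset.univ.image (orb σ)).card = cycleCount σ := by
  have himg : Finset.univ.image (orb σ)
      = σ.support.image (orb σ) ∪ σ.supportᶜ.image (orb σ) := by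
    rw [← Finset.image_union]
    congr 1
    simp
  have hA : σ.support.image (orb σ) = σ.cycleFactorsFinset.image Equiv.Perm.support := by
    ext s
    simp only [mem_image]
    constructor
    · rintro ⟨i, hi, rfl⟩
      exact ⟨σ.cycleOf i, cycleOf_mem_cycleFactorsFinset_iff.2 hi, (orb_of_mem_support hi).symm⟩
    · rintro ⟨c, hc, rfl⟩
      have hcyc := (mem_cycleFactorsFinset_iff.1 hc).1
      obtain ⟨a, ha, -⟩ := hcyc
      have has : a ∈ c.support := Equiv.Perm.mem_support.2 ha
      have haσ : a ∈ σ.support := by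
        rw [Equiv.Perm.mem_support, ← (mem_cycleFactorsFinset_iff.1 hc).2 a has]
        exact ha
      refine ⟨a, haσ, ?_⟩
      rw [orb_of_mem_support haσ, ← cycle_is_cycleOf has hc]
  have hcardA : (σ.cycleFactorsFinset.image Equiv.Perm.support).card
      = σ.cycleFactorsFinset.card := by
    apply Finset.card_image_of_injOn
    intro c hc d hd hcd
    by_contra hne
    have hdisj := (cycleFactorsFinset_pairwise_disjoint σ) (by exact_mod_cast hc)
      (by exact_mod_cast hd) hne
    have : Disjoint c.support d.support := Equiv.Perm.Disjoint.disjoint_support hdisj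
    rw [hcd, disjoint_self] at this
    have h2 := (mem_cycleFactorsFinset_iff.1 hd).1.two_le_card_support
    rw [this] at h2
    simp at h2
  have hB : σ.supportᶜ.image (orb σ) = σ.supportᶜ.image (fun i => ({i} : Finset (Fin n))) := by
    apply Finset.image_congr
    intro i hi
    simp only [Finset.mem_coe, Finset.mem_compl, Equiv.Perm.mem_support, not_not] at hi
    exact orb_of_fixed hi
  have hcardB : (σ.supportᶜ.image (orb σ)).card = σ.supportᶜ.card := by
    rw [hB]
    exact Finset.card_image_of_injOn (Finset.singleton_injective.injOn)
  have hdisj2 : Disjoint (σ.support.image (orb σ)) (σ.supportᶜ.image (orb σ)) := by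
    rw [Finset.disjoint_left]
    rintro s hsA hsB
    rw [hA] at hsA
    rw [hB] at hsB
    obtain ⟨c, hc, rfl⟩ := mem_image.1 hsA
    obtain ⟨i, -, hi⟩ := mem_image.1 hsB
    have h2 := (mem_cycleFactorsFinset_iff.1 hc).1.two_le_card_support
    rw [← hi] at h2
    simp at h2
  have hfix : (Finset.univ.filter fun i => σ i = i) = σ.supportᶜ := by
    ext i
    simp [Equiv.Perm.mem_support]
  rw [himg, Finset.card_union_of_disjoint hdisj2, hA, hcardA, hcardB]
  unfold cycleCount
  rw [hfix]
  congr 1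
  rw [cycleType_def]
  simp

lemma sum_inv_minPer (σ : Equiv.Perm (Fin n)) :
    ∑ i : Fin n, ((minimalPeriod ⇑σ i : ℝ))⁻¹ = cycleCount σ := by
  have h1 : ∀ i : Fin n, ((minimalPeriod ⇑σ i : ℝ))⁻¹ = (((orb σ i).card : ℝ))⁻¹ := fun i => by
    rw [orb_card]
  calc ∑ i : Fin n, ((minimalPeriod ⇑σ i : ℝ))⁻¹
      = ∑ i : Fin n, (((orb σ i).card : ℝ))⁻¹ := by simp only [h1]
    _ = ∑ s ∈ Finset.univ.image (orb σ),
        (Finset.univ.filter fun i => orb σ i = s).card • ((s.card : ℝ))⁻¹ :=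
        Finset.sum_comp (fun s : Finset (Fin n) => ((s.card : ℝ))⁻¹) (orb σ)
    _ = ∑ s ∈ Finset.univ.image (orb σ), 1 := by
        apply Finset.sum_congr rfl
        intro s hs
        obtain ⟨j, -, rfl⟩ := mem_image.1 hs
        have hfib : (Finset.univ.filter fun i => orb σ i = orb σ j) = orb σ j := by
          ext i
          simp only [Finset.mem_filter, Finset.mem_univ, true_and, mem_orb, orb_eq_orb_iff]
          exact ⟨fun h => h.symm, fun h => h.symm⟩
        rw [hfib, nsmul_eq_mul]
        have hne : ((orb σ j).card : ℝ) ≠ 0 := by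
          have : j ∈ orb σ j := mem_orb.2 (Equiv.Perm.SameCycle.refl σ j)
          have := Finset.card_pos.2 ⟨j, this⟩
          positivity
        exact mul_inv_cancel₀ hne
    _ = (Finset.univ.image (orb σ)).card := by simp
    _ = cycleCount σ := by rw [card_image_orb]

/-- weight of a permutation -/

noncomputable def w (A : Matrix (Fin n) (Fin n) ℝ) (σ : Equiv.Perm (Fin n)) : ℝ :=
  ∏ k, A k (σ k)

section wts
variable {δ : ℝ} {A : Matrix (Fin n) (Fin n) ℝ}

lemma w_pos (hδ0 : 0 < δ) (hA : ∀ i j, δ ≤ A i j ∧ A i j ≤ 1) (σ : Equiv.Perm (Fin n)) :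
    0 < w A σ :=
  Finset.prod_pos fun k _ => lt_of_lt_of_le hδ0 (hA k (σ k)).1

lemma w_nonneg (hδ0 : 0 < δ) (hA : ∀ i j, δ ≤ A i j ∧ A i j ≤ 1) (σ : Equiv.Perm (Fin n)) :
    0 ≤ w A σ := (w_pos hδ0 hA σ).le

lemma w_swap_ge (hδ0 : 0 < δ) (hA : ∀ i j, δ ≤ A i j ∧ A i j ≤ 1)
    (σ : Equiv.Perm (Fin n)) {i j : Fin n} (hij : i ≠ j) :
    δ ^ 2 * w A σ ≤ w A (σ * Equiv.swap i j) := by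
  have hsplit : ∀ f : Fin n → ℝ, ∏ k, f k
      = f i * (f j * ∏ k ∈ (Finset.univ.erase i).erase j, f k) := by
    intro f
    rw [← Finset.mul_prod_erase Finset.univ f (Finset.mem_univ i),
      ← Finset.mul_prod_erase (Finset.univ.erase i) f
        (Finset.mem_erase.2 ⟨hij.symm, Finset.mem_univ j⟩)]
  have hrest : ∏ k ∈ (Finset.univ.erase i).erase j, A k ((σ * Equiv.swap i j) k)
      = ∏ k ∈ (Finset.univ.erase i).erase j, A k (σ k) := by
    apply Finset.prod_congr rfl
    intro k hk
    have hk1 : k ≠ j := (Finset.mem_erase.1 hk).1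
    have hk2 : k ≠ i := (Finset.mem_erase.1 (Finset.mem_erase.1 hk).2).1
    rw [Equiv.Perm.mul_apply, Equiv.swap_apply_of_ne_of_ne hk2 hk1]
  unfold w
  rw [hsplit (fun k => A k ((σ * Equiv.swap i j) k)), hsplit (fun k => A k (σ k)), hrest]
  simp only [Equiv.Perm.mul_apply, Equiv.swap_apply_left, Equiv.swap_apply_right]
  set R := ∏ k ∈ (Finset.univ.erase i).erase j, A k (σ k) with hR
  have hRnn : 0 ≤ R := Finset.prod_nonneg fun k _ => le_trans hδ0.le (hA k (σ k)).1
  have h1 := hA i (σ i); have h2 := hA j (σ j); have h3 := hA i (σ j); have h4 := hA j (σ i)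
  calc δ ^ 2 * (A i (σ i) * (A j (σ j) * R))
      = (A i (σ i) * A j (σ j)) * (δ ^ 2 * R) := by ring
    _ ≤ 1 * (δ ^ 2 * R) := by
        apply mul_le_mul_of_nonneg_right
        · nlinarith [h1.1, h1.2, h2.1, h2.2, hδ0.le]
        · positivity
    _ = (δ * δ) * R := by ring
    _ ≤ (A i (σ j) * A j (σ i)) * R := by
        apply mul_le_mul_of_nonneg_right _ hRnn
        exact mul_le_mul h3.1 h4.1 hδ0.le (le_trans hδ0.le h3.1)
    _ = A i (σ j) * (A j (σ i) * R) := by ring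
end wts

/-- The admissible set for the splice argument. -/
noncomputable def adm (n : ℕ) (ℓ : ℕ) : Finset (Equiv.Perm (Fin n) × Fin n × Fin n) :=
  Finset.univ.filter fun t =>
    minimalPeriod ⇑t.1 t.2.1 = ℓ ∧ ¬ t.1.SameCycle t.2.1 t.2.2

/-- The splice map. -/
noncomputable def spl (t : Equiv.Perm (Fin n) × Fin n × Fin n) :
    Equiv.Perm (Fin n) × Fin n :=
  (t.1 * Equiv.swap t.2.1 t.2.2, t.2.1)

lemma spl_injOn {ℓ : ℕ} : ∀ t ∈ adm n ℓ, ∀ u ∈ adm n ℓ, spl t = spl u → t = u := by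
  rintro ⟨σ, i, j⟩ ht ⟨σ', i', j'⟩ hu heq
  simp only [adm, Finset.mem_filter, Finset.mem_univ, true_and] at ht hu
  obtain ⟨hp, hns⟩ := ht
  obtain ⟨hp', hns'⟩ := hu
  have hi : i = i' := congrArg Prod.snd heq
  subst hi
  have hτ : σ * Equiv.swap i j = σ' * Equiv.swap i j' := congrArg Prod.fst heq
  have h1 : ((σ * Equiv.swap i j) ^ ℓ) j = i := splice_pow hp hns
  have h2 : ((σ * Equiv.swap i j) ^ ℓ) j' = i := by rw [hτ]; exact splice_pow hp' hns'
  have hj : j = j' := Equiv.injective _ (h1.trans h2.symm)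
  subst hj
  have hσ : σ = σ' := by
    have := congrArg (fun τ => τ * Equiv.swap i j) hτ
    simpa [mul_assoc] using this
  rw [hσ]

section main
variable {δ : ℝ} {A : Matrix (Fin n) (Fin n) ℝ}

/-- count of elements in cycles of length ℓ -/
noncomputable def cnt (σ : Equiv.Perm (Fin n)) (ℓ : ℕ) : ℕ :=
  (Finset.univ.filter fun i : Fin n => minimalPeriod ⇑σ i = ℓ).card

lemma sum_adm_w (ℓ : ℕ) :
    ∑ t ∈ adm n ℓ, w A t.1
      = ∑ σ : Equiv.Perm (Fin n), ((n - ℓ : ℕ) : ℝ) * (cnt σ ℓ : ℝ) * w A σ := by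
  rw [adm, Finset.sum_filter]
  rw [Fintype.sum_prod_type]
  apply Finset.sum_congr rfl
  intro σ _
  rw [Fintype.sum_prod_type]
  have hinner : ∀ i : Fin n,
      (∑ j : Fin n, if minimalPeriod ⇑σ i = ℓ ∧ ¬σ.SameCycle i j then w A σ else 0)
        = if minimalPeriod ⇑σ i = ℓ then ((n - ℓ : ℕ) : ℝ) * w A σ else 0 := by
    intro i
    by_cases hC : minimalPeriod ⇑σ i = ℓ
    · simp only [hC, true_and, if_true]
      rw [Finset.sum_ite, Finset.sum_const, Finset.sum_const_zero, add_zero]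
      have hcard : (Finset.univ.filter fun j => ¬σ.SameCycle i j).card = n - ℓ := by
        rw [Finset.filter_not, Finset.card_sdiff_of_subset (Finset.filter_subset _ _)]
        have horb : (Finset.univ.filter fun j => σ.SameCycle i j) = orb σ i := rfl
        rw [horb, orb_card σ i, hC]
        simp
      rw [hcard, nsmul_eq_mul]
    · simp only [hC, false_and, if_false, Finset.sum_const_zero]
  rw [Finset.sum_congr rfl fun i _ => hinner i]
  rw [Finset.sum_ite, Finset.sum_const, Finset.sum_const_zero, add_zero, nsmul_eq_mul]
  unfold cnt
  ring

lemma key_ineq (hδ0 : 0 < δ) (hA : ∀ i j, δ ≤ A i j ∧ A i j ≤ 1) (ℓ : ℕ) :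
    δ ^ 2 * (((n - ℓ : ℕ) : ℝ) * ∑ σ : Equiv.Perm (Fin n), (cnt σ ℓ : ℝ) * w A σ)
      ≤ (n : ℝ) * ∑ σ : Equiv.Perm (Fin n), w A σ := by
  have step1 : ∑ t ∈ adm n ℓ, δ ^ 2 * w A t.1
      = δ ^ 2 * (((n - ℓ : ℕ) : ℝ) * ∑ σ : Equiv.Perm (Fin n), (cnt σ ℓ : ℝ) * w A σ) := by
    rw [← Finset.mul_sum, sum_adm_w ℓ]
    congr 1
    rw [Finset.mul_sum]
    apply Finset.sum_congr rfl
    intro σ _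
    ring
  rw [← step1]
  have step2 : ∑ t ∈ adm n ℓ, δ ^ 2 * w A t.1 ≤ ∑ t ∈ adm n ℓ, w A (spl t).1 := by
    apply Finset.sum_le_sum
    rintro ⟨σ, i, j⟩ ht
    simp only [adm, Finset.mem_filter, Finset.mem_univ, true_and] at ht
    have hij : i ≠ j := fun h => ht.2 (h ▸ Equiv.Perm.SameCycle.refl σ i)
    exact w_swap_ge hδ0 hA σ hij
  have step3 : ∑ t ∈ adm n ℓ, w A (spl t).1
      = ∑ u ∈ (adm n ℓ).image spl, w A u.1 :=
    (Finset.sum_image (f := fun u : Equiv.Perm (Fin n) × Fin n => w A u.1) spl_injOn).symm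
  have step4 : ∑ u ∈ (adm n ℓ).image spl, w A u.1
      ≤ ∑ u : Equiv.Perm (Fin n) × Fin n, w A u.1 := by
    apply Finset.sum_le_sum_of_subset_of_nonneg (Finset.subset_univ _)
    intro u _ _
    exact w_nonneg hδ0 hA u.1
  have step5 : ∑ u : Equiv.Perm (Fin n) × Fin n, w A u.1
      = (n : ℝ) * ∑ σ : Equiv.Perm (Fin n), w A σ := by
    rw [Fintype.sum_prod_type]
    rw [Finset.mul_sum]
    apply Finset.sum_congr rfl
    intro σ _
    simp [Finset.sum_const, Finset.card_univ, mul_comm]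
  calc _ ≤ _ := step2
    _ = _ := step3
    _ ≤ _ := step4
    _ = _ := step5

end main

lemma cnt_partition (σ : Equiv.Perm (Fin n)) :
    ∑ ℓ ∈ Finset.Icc 1 n, cnt σ ℓ = n := by
  have h := Finset.card_eq_sum_card_fiberwise
    (f := fun i : Fin n => minimalPeriod ⇑σ i) (t := Finset.Icc 1 n) (s := Finset.univ)
    (fun i _ => Finset.mem_Icc.2 ⟨minPer_pos σ i, minPer_le σ i⟩)
  simpa [cnt] using h.symm

lemma cycleCount_eq_sum (σ : Equiv.Perm (Fin n)) :
    (cycleCount σ : ℝ) = ∑ ℓ ∈ Finset.Icc 1 n, (cnt σ ℓ : ℝ) * ((ℓ : ℝ))⁻¹ := by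
  rw [← sum_inv_minPer]
  rw [← Finset.sum_fiberwise_of_maps_to (g := fun i : Fin n => minimalPeriod ⇑σ i)
    (t := Finset.Icc 1 n)
    (fun i _ => Finset.mem_Icc.2 ⟨minPer_pos σ i, minPer_le σ i⟩)
    (fun i : Fin n => ((minimalPeriod ⇑σ i : ℝ))⁻¹)]
  apply Finset.sum_congr rfl
  intro ℓ _
  have : ∀ i ∈ Finset.univ.filter fun i : Fin n => minimalPeriod ⇑σ i = ℓ,
      ((minimalPeriod ⇑σ i : ℝ))⁻¹ = ((ℓ : ℝ))⁻¹ := by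
    intro i hi
    rw [(Finset.mem_filter.1 hi).2]
  rw [Finset.sum_congr rfl this, Finset.sum_const, nsmul_eq_mul]
  rfl

lemma cycleCount_le (σ : Equiv.Perm (Fin n)) : cycleCount σ ≤ n := by
  have h1 : σ.cycleType.card ≤ σ.support.card := by
    rw [← Equiv.Perm.sum_cycleType]
    have := Multiset.card_nsmul_le_sum (s := σ.cycleType) (a := 1)
      (fun x hx => le_trans one_le_two (Equiv.Perm.two_le_of_mem_cycleType hx))
    simpa using this
  have h2 : (Finset.univ.filter fun i => σ i = i) = σ.supportᶜ := by
    ext i; simp [Equiv.Perm.mem_support]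
  have h3 : σ.supportᶜ.card = n - σ.support.card := by
    rw [Finset.card_compl]; simp
  have h4 : σ.support.card ≤ n := by
    simpa using Finset.card_le_univ σ.support
  unfold cycleCount
  rw [h2, h3]
  omega

lemma log5 : (3 : ℝ) / 2 ≤ Real.log 5 := by
  rw [Real.le_log_iff_exp_le (by norm_num)]
  have h1 : Real.exp (3 / 2) ^ 2 = Real.exp 3 := by
    rw [sq, ← Real.exp_add]
    norm_num
  have h2 : Real.exp 3 = Real.exp 1 ^ 3 := by
    rw [← Real.exp_nat_mul]
    norm_num
  have h3 := Real.exp_one_lt_d9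
  have h4 : Real.exp 3 < 25 := by
    rw [h2]
    have h5' : Real.exp 1 ^ 3 < 2.7182818286 ^ 3 :=
      pow_lt_pow_left₀ h3 (Real.exp_pos 1).le (by norm_num)
    have h6' : (2.7182818286 : ℝ) ^ 3 < 25 := by norm_num
    linarith
  nlinarith [Real.exp_pos (3 / 2 : ℝ)]

lemma harm_bound {n : ℕ} (h5 : 5 ≤ n) :
    ∑ ℓ ∈ Finset.Icc 1 (n / 2), (((ℓ : ℝ))⁻¹ + ((n : ℝ) - (ℓ : ℝ))⁻¹) ≤ 2 * Real.log n := by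
  set m := n / 2 with hm
  have hm2 : 2 ≤ m := by omega
  have hmn : m + 1 ≤ n := by omega
  have hnm : m ≤ n - m := by omega
  rw [Finset.sum_add_distrib]
  -- first sum is harmonic m
  have hH : ∀ k : ℕ, ∑ ℓ ∈ Finset.Icc 1 k, ((ℓ : ℝ))⁻¹ = ((harmonic k : ℚ) : ℝ) := by
    intro k
    rw [harmonic_eq_sum_Icc]
    push_cast
    rfl
  -- second sum: reindex by k = n - ℓ
  have hre : ∑ ℓ ∈ Finset.Icc 1 m, ((n : ℝ) - (ℓ : ℝ))⁻¹
      = ∑ k ∈ Finset.Icc (n - m) (n - 1), ((k : ℝ))⁻¹ := by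
    apply Finset.sum_nbij' (i := fun ℓ => n - ℓ) (j := fun k => n - k)
    · intro a ha
      simp only [Finset.mem_Icc] at ha ⊢
      omega
    · intro a ha
      simp only [Finset.mem_Icc] at ha ⊢
      omega
    · intro a ha
      simp only [Finset.mem_Icc] at ha
      omega
    · intro a ha
      simp only [Finset.mem_Icc] at ha
      omega
    · intro a ha
      simp only [Finset.mem_Icc] at ha
      congr 1
      have : ((n - a : ℕ) : ℝ) = (n : ℝ) - (a : ℝ) := by
        have : a ≤ n := by omega
        push_cast [this]
        ring
      rw [this]
  have hsub : ∑ k ∈ Finset.Icc (n - m) (n - 1), ((k : ℝ))⁻¹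
      ≤ ∑ k ∈ Finset.Icc m (n - 1), ((k : ℝ))⁻¹ := by
    apply Finset.sum_le_sum_of_subset_of_nonneg
    · apply Finset.Icc_subset_Icc_left hnm
    · intro k _ _
      positivity
  have hsplit2 : ∑ k ∈ Finset.Icc m (n - 1), ((k : ℝ))⁻¹
      = ((m : ℝ))⁻¹ + ∑ k ∈ Finset.Icc (m + 1) (n - 1), ((k : ℝ))⁻¹ := by
    have e1 : Finset.Icc m (n - 1) = Finset.Ico m n := by
      rw [← Finset.Ico_add_one_right_eq_Icc]
      congr 1
      omega
    have e2 : Finset.Icc (m + 1) (n - 1) = Finset.Ico (m + 1) n := by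
      rw [← Finset.Ico_add_one_right_eq_Icc]
      congr 1
      omega
    rw [e1, e2]
    exact Finset.sum_eq_sum_Ico_succ_bot (by omega) _
  have hjoin : ∑ ℓ ∈ Finset.Icc 1 m, ((ℓ : ℝ))⁻¹
        + ∑ k ∈ Finset.Icc (m + 1) (n - 1), ((k : ℝ))⁻¹
      = ∑ k ∈ Finset.Icc 1 (n - 1), ((k : ℝ))⁻¹ := by
    have e1 : Finset.Icc 1 m = Finset.Ico 1 (m + 1) := by rw [Finset.Ico_add_one_right_eq_Icc]
    have e2 : Finset.Icc (m + 1) (n - 1) = Finset.Ico (m + 1) n := by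
      rw [← Finset.Ico_add_one_right_eq_Icc]; congr 1; omega
    have e3 : Finset.Icc 1 (n - 1) = Finset.Ico 1 n := by
      rw [← Finset.Ico_add_one_right_eq_Icc]; congr 1; omega
    rw [e1, e2, e3]
    exact Finset.sum_Ico_consecutive _ (by omega) (by omega)
  have hharm : ∑ k ∈ Finset.Icc 1 (n - 1), ((k : ℝ))⁻¹ ≤ 1 + Real.log (n - 1 : ℕ) := by
    rw [hH (n - 1)]
    exact harmonic_le_one_add_log (n - 1)
  have hlogmono : Real.log ((n - 1 : ℕ) : ℝ) ≤ Real.log n := by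
    apply Real.log_le_log
    · have h1 : (1 : ℕ) ≤ n - 1 := by omega
      have : (1 : ℝ) ≤ ((n - 1 : ℕ) : ℝ) := by exact_mod_cast h1
      linarith
    · exact_mod_cast Nat.sub_le n 1
  have hlog32 : (3 : ℝ) / 2 ≤ Real.log n := by
    refine le_trans log5 (Real.log_le_log (by norm_num) ?_)
    exact_mod_cast h5
  have h1m : ((m : ℝ))⁻¹ ≤ (2 : ℝ)⁻¹ := by
    have h2m : (2 : ℝ) ≤ (m : ℝ) := by exact_mod_cast hm2
    exact inv_anti₀ (by norm_num) h2m
  calc ∑ ℓ ∈ Finset.Icc 1 m, ((ℓ : ℝ))⁻¹ + ∑ ℓ ∈ Finset.Icc 1 m, ((n : ℝ) - (ℓ : ℝ))⁻¹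
      = ∑ ℓ ∈ Finset.Icc 1 m, ((ℓ : ℝ))⁻¹
        + ∑ k ∈ Finset.Icc (n - m) (n - 1), ((k : ℝ))⁻¹ := by rw [hre]
    _ ≤ ∑ ℓ ∈ Finset.Icc 1 m, ((ℓ : ℝ))⁻¹
        + ∑ k ∈ Finset.Icc m (n - 1), ((k : ℝ))⁻¹ := by linarith [hsub]
    _ = ((m : ℝ))⁻¹ + (∑ ℓ ∈ Finset.Icc 1 m, ((ℓ : ℝ))⁻¹
        + ∑ k ∈ Finset.Icc (m + 1) (n - 1), ((k : ℝ))⁻¹) := by rw [hsplit2]; ring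
    _ = ((m : ℝ))⁻¹ + ∑ k ∈ Finset.Icc 1 (n - 1), ((k : ℝ))⁻¹ := by rw [hjoin]
    _ ≤ (2 : ℝ)⁻¹ + (1 + Real.log ((n - 1 : ℕ) : ℝ)) := add_le_add h1m hharm
    _ ≤ 2 * Real.log n := by linarith

lemma small_n{n : ℕ} (h4 : n ≤ 4) : (n : ℝ) ≤ 2 + 2 * Real.log n := by
  have hl2 := Real.log_two_gt_d9
  interval_cases n
  · simp
  · simp [Real.log_one]
  · push_cast
    nlinarith [Real.log_nonneg (by norm_num : (1:ℝ) ≤ 2)]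
  · push_cast
    have h23 : Real.log 2 ≤ Real.log 3 := Real.log_le_log (by norm_num) (by norm_num)
    nlinarith
  · push_cast
    have h4' : Real.log 4 = 2 * Real.log 2 := by
      rw [show (4 : ℝ) = 2 ^ 2 by norm_num, Real.log_pow]
      push_cast; ring
    nlinarith

end ECCAux

/-- Under `P(σ) = (∏ a_{iσ(i)})/per A`, with `δ ≤ a_{ij} ≤ 1`,
the expected number of cycles is at most `2 + 2δ⁻² ln n`. -/
theorem expected_cycle_count_bound (n : ℕ) (δ : ℝ) (hδ0 : 0 < δ) (hδ1 : δ < 1)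
    (A : Matrix (Fin n) (Fin n) ℝ)
    (hA : ∀ i j, δ ≤ A i j ∧ A i j ≤ 1) :
    (∑ σ : Equiv.Perm (Fin n), (cycleCount σ : ℝ) * ∏ k, A k (σ k)) /
      (∑ σ : Equiv.Perm (Fin n), ∏ k, A k (σ k)) ≤
    2 + 2 * Real.log n / δ ^ 2 := by
  classical
  have hw : ∀ σ : Equiv.Perm (Fin n), (∏ k, A k (σ k)) = ECCAux.w A σ := fun _ => rfl
  simp only [hw]
  have hwpos : ∀ σ : Equiv.Perm (Fin n), 0 < ECCAux.w A σ := ECCAux.w_pos hδ0 hA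
  set per := ∑ σ : Equiv.Perm (Fin n), ECCAux.w A σ with hper
  have hper_pos : 0 < per := Finset.sum_pos (fun σ _ => hwpos σ) Finset.univ_nonempty
  rw [div_le_iff₀ hper_pos]
  have hδ2pos : (0 : ℝ) < δ ^ 2 := by positivity
  have hδ21 : δ ^ 2 ≤ 1 := by nlinarith
  rcases le_or_gt n 4 with h4 | h5'
  · -- trivial case
    have hE : ∑ σ : Equiv.Perm (Fin n), (cycleCount σ : ℝ) * ECCAux.w A σ
        ≤ (n : ℝ) * per := by
      rw [hper, Finset.mul_sum]
      apply Finset.sum_le_sum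
      intro σ _
      apply mul_le_mul_of_nonneg_right _ (hwpos σ).le
      exact_mod_cast ECCAux.cycleCount_le σ
    have hlog0 : 0 ≤ Real.log n := Real.log_natCast_nonneg n
    have hfrac : 2 * Real.log n ≤ 2 * Real.log n / δ ^ 2 := by
      rw [le_div_iff₀ hδ2pos]
      nlinarith
    have hn24 : (n : ℝ) ≤ 2 + 2 * Real.log n := ECCAux.small_n h4
    calc ∑ σ : Equiv.Perm (Fin n), (cycleCount σ : ℝ) * ECCAux.w A σ
        ≤ (n : ℝ) * per := hE
      _ ≤ (2 + 2 * Real.log n) * per :=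
          mul_le_mul_of_nonneg_right hn24 hper_pos.le
      _ ≤ (2 + 2 * Real.log n / δ ^ 2) * per :=
          mul_le_mul_of_nonneg_right (by linarith) hper_pos.le
  · -- main case
    have h5 : 5 ≤ n := by omega
    set m := n / 2 with hm
    set G : ℕ → ℝ := fun ℓ => ∑ σ : Equiv.Perm (Fin n), (ECCAux.cnt σ ℓ : ℝ) * ECCAux.w A σ
      with hG
    have hGnn : ∀ ℓ, 0 ≤ G ℓ := fun ℓ =>
      Finset.sum_nonneg fun σ _ => mul_nonneg (by positivity) (hwpos σ).le
    have hGtot : ∑ ℓ ∈ Finset.Icc 1 n, G ℓ = (n : ℝ) * per := by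
      rw [hG, hper, Finset.sum_comm, Finset.mul_sum]
      apply Finset.sum_congr rfl
      intro σ _
      rw [← Finset.sum_mul]
      congr 1
      have := ECCAux.cnt_partition σ
      exact_mod_cast congrArg (fun k : ℕ => (k : ℝ)) this
    have hE : ∑ σ : Equiv.Perm (Fin n), (cycleCount σ : ℝ) * ECCAux.w A σ
        = ∑ ℓ ∈ Finset.Icc 1 n, ((ℓ : ℝ))⁻¹ * G ℓ := by
      calc ∑ σ : Equiv.Perm (Fin n), (cycleCount σ : ℝ) * ECCAux.w A σ
          = ∑ σ : Equiv.Perm (Fin n), ∑ ℓ ∈ Finset.Icc 1 n,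
              (ECCAux.cnt σ ℓ : ℝ) * ((ℓ : ℝ))⁻¹ * ECCAux.w A σ := by
            apply Finset.sum_congr rfl
            intro σ _
            rw [ECCAux.cycleCount_eq_sum σ, Finset.sum_mul]
        _ = ∑ ℓ ∈ Finset.Icc 1 n, ∑ σ : Equiv.Perm (Fin n),
              (ECCAux.cnt σ ℓ : ℝ) * ((ℓ : ℝ))⁻¹ * ECCAux.w A σ := Finset.sum_comm
        _ = ∑ ℓ ∈ Finset.Icc 1 n, ((ℓ : ℝ))⁻¹ * G ℓ := by
            apply Finset.sum_congr rfl
            intro ℓ _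
            rw [hG, Finset.mul_sum]
            apply Finset.sum_congr rfl
            intro σ _
            ring
    have hsplit : ∑ ℓ ∈ Finset.Icc 1 n, ((ℓ : ℝ))⁻¹ * G ℓ
        = ∑ ℓ ∈ Finset.Icc 1 m, ((ℓ : ℝ))⁻¹ * G ℓ
          + ∑ ℓ ∈ Finset.Icc (m + 1) n, ((ℓ : ℝ))⁻¹ * G ℓ := by
      have e1 : Finset.Icc 1 m = Finset.Ico 1 (m + 1) := by rw [Finset.Ico_add_one_right_eq_Icc]
      have e2 : Finset.Icc (m + 1) n = Finset.Ico (m + 1) (n + 1) := by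
        rw [Finset.Ico_add_one_right_eq_Icc]
      have e3 : Finset.Icc 1 n = Finset.Ico 1 (n + 1) := by rw [Finset.Ico_add_one_right_eq_Icc]
      rw [e1, e2, e3]
      exact (Finset.sum_Ico_consecutive _ (by omega) (by omega)).symm
    have hhead : ∑ ℓ ∈ Finset.Icc 1 m, ((ℓ : ℝ))⁻¹ * G ℓ
        ≤ (per / δ ^ 2) * (2 * Real.log n) := by
      have hterm : ∀ ℓ ∈ Finset.Icc 1 m, ((ℓ : ℝ))⁻¹ * G ℓ
          ≤ (per / δ ^ 2) * (((ℓ : ℝ))⁻¹ + ((n : ℝ) - (ℓ : ℝ))⁻¹) := by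
        intro ℓ hℓ
        rw [Finset.mem_Icc] at hℓ
        have hℓn : ℓ ≤ n := by omega
        have hℓltn : ℓ < n := by omega
        have hc : ((n - ℓ : ℕ) : ℝ) = (n : ℝ) - (ℓ : ℝ) := by
          push_cast [hℓn]; ring
        have hℓpos : (0 : ℝ) < (ℓ : ℝ) := by exact_mod_cast hℓ.1
        have hnl : (0 : ℝ) < (n : ℝ) - (ℓ : ℝ) := by
          have : (ℓ : ℝ) < (n : ℝ) := by exact_mod_cast hℓltn
          linarith
        have key' : δ ^ 2 * (((n : ℝ) - (ℓ : ℝ)) * G ℓ) ≤ (n : ℝ) * per := by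
          rw [← hc]
          exact ECCAux.key_ineq hδ0 hA ℓ
        have hGb : G ℓ ≤ (n : ℝ) * per / (δ ^ 2 * ((n : ℝ) - (ℓ : ℝ))) := by
          rw [le_div_iff₀ (by positivity)]
          calc G ℓ * (δ ^ 2 * ((n : ℝ) - (ℓ : ℝ)))
              = δ ^ 2 * (((n : ℝ) - (ℓ : ℝ)) * G ℓ) := by ring
            _ ≤ (n : ℝ) * per := key'
        calc ((ℓ : ℝ))⁻¹ * G ℓ
            ≤ ((ℓ : ℝ))⁻¹ * ((n : ℝ) * per / (δ ^ 2 * ((n : ℝ) - (ℓ : ℝ)))) :=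
              mul_le_mul_of_nonneg_left hGb (by positivity)
          _ = (per / δ ^ 2) * (((ℓ : ℝ))⁻¹ + ((n : ℝ) - (ℓ : ℝ))⁻¹) := by
              field_simp
              ring
      calc ∑ ℓ ∈ Finset.Icc 1 m, ((ℓ : ℝ))⁻¹ * G ℓ
          ≤ ∑ ℓ ∈ Finset.Icc 1 m, (per / δ ^ 2) * (((ℓ : ℝ))⁻¹ + ((n : ℝ) - (ℓ : ℝ))⁻¹) :=
            Finset.sum_le_sum hterm
        _ = (per / δ ^ 2) * ∑ ℓ ∈ Finset.Icc 1 m, (((ℓ : ℝ))⁻¹ + ((n : ℝ) - (ℓ : ℝ))⁻¹) := by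
            rw [Finset.mul_sum]
        _ ≤ (per / δ ^ 2) * (2 * Real.log n) := by
            apply mul_le_mul_of_nonneg_left (ECCAux.harm_bound h5) (by positivity)
    have htail : ∑ ℓ ∈ Finset.Icc (m + 1) n, ((ℓ : ℝ))⁻¹ * G ℓ ≤ 2 * per := by
      have hterm : ∀ ℓ ∈ Finset.Icc (m + 1) n, ((ℓ : ℝ))⁻¹ * G ℓ
          ≤ (((m : ℝ) + 1))⁻¹ * G ℓ := by
        intro ℓ hℓ
        rw [Finset.mem_Icc] at hℓ
        apply mul_le_mul_of_nonneg_right _ (hGnn ℓ)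
        apply inv_anti₀ (by positivity)
        exact_mod_cast hℓ.1
      calc ∑ ℓ ∈ Finset.Icc (m + 1) n, ((ℓ : ℝ))⁻¹ * G ℓ
          ≤ ∑ ℓ ∈ Finset.Icc (m + 1) n, (((m : ℝ) + 1))⁻¹ * G ℓ := Finset.sum_le_sum hterm
        _ = (((m : ℝ) + 1))⁻¹ * ∑ ℓ ∈ Finset.Icc (m + 1) n, G ℓ := by rw [Finset.mul_sum]
        _ ≤ (((m : ℝ) + 1))⁻¹ * ((n : ℝ) * per) := by
            apply mul_le_mul_of_nonneg_left _ (by positivity)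
            rw [← hGtot]
            apply Finset.sum_le_sum_of_subset_of_nonneg
            · exact Finset.Icc_subset_Icc_left (by omega)
            · intro ℓ _ _
              exact hGnn ℓ
        _ ≤ 2 * per := by
            rw [inv_mul_le_iff₀ (by positivity)]
            have hc2 : (n : ℝ) ≤ 2 * ((m : ℝ) + 1) := by
              have : n ≤ 2 * (m + 1) := by omega
              exact_mod_cast this
            nlinarith
    calc ∑ σ : Equiv.Perm (Fin n), (cycleCount σ : ℝ) * ECCAux.w A σ
        = ∑ ℓ ∈ Finset.Icc 1 m, ((ℓ : ℝ))⁻¹ * G ℓ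
          + ∑ ℓ ∈ Finset.Icc (m + 1) n, ((ℓ : ℝ))⁻¹ * G ℓ := by rw [hE, hsplit]
      _ ≤ (per / δ ^ 2) * (2 * Real.log n) + 2 * per := add_le_add hhead htail
      _ = (2 + 2 * Real.log n / δ ^ 2) * per := by
          field_simp
          ring
end

section
/- Let 0 < δ < 1 and let A = (a_{ij}) be an n×n real matrix with δ ≤ a_{ij} ≤ 1 for all i,j. Then Σ_{σ ∈ S_n, c(σ) ≤ 4 + 4δ^{-2} ln n} ∏_{i=1}^n a_{iσ(i)} ≥ (1/2) per(A). -/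
open scoped Classical

open Equiv Finset

variable {n : ℕ}


/-- The orbit of `i` under `σ`. -/
noncomputable def orb (σ : Equiv.Perm (Fin n)) (i : Fin n) : Finset (Fin n) :=
  Finset.univ.filter fun j => σ.SameCycle i j

/-- Size of the orbit of `i` under `σ`. -/
noncomputable def ocard (σ : Equiv.Perm (Fin n)) (i : Fin n) : ℕ := (orb σ i).card

lemma mem_orb {σ : Equiv.Perm (Fin n)} {i j : Fin n} : j ∈ orb σ i ↔ σ.SameCycle i j := by
  simp [orb]

lemma self_mem_orb (σ : Equiv.Perm (Fin n)) (i : Fin n) : i ∈ orb σ i :=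
  mem_orb.2 (Equiv.Perm.SameCycle.refl _ _)

lemma one_le_ocard (σ : Equiv.Perm (Fin n)) (i : Fin n) : 1 ≤ ocard σ i :=
  Finset.card_pos.2 ⟨i, self_mem_orb σ i⟩

lemma ocard_le_n (σ : Equiv.Perm (Fin n)) (i : Fin n) : ocard σ i ≤ n := by
  simpa [ocard] using Finset.card_le_card (Finset.subset_univ (orb σ i))

lemma orb_eq_of_fixed {σ : Equiv.Perm (Fin n)} {i : Fin n} (h : σ i = i) : orb σ i = {i} := by
  ext j
  simp only [mem_orb, Finset.mem_singleton]
  constructor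
  · intro hs; exact (hs.eq_of_left h).symm
  · rintro rfl; exact Equiv.Perm.SameCycle.refl _ _

lemma ocard_of_fixed {σ : Equiv.Perm (Fin n)} {i : Fin n} (h : σ i = i) : ocard σ i = 1 := by
  rw [ocard, orb_eq_of_fixed h, Finset.card_singleton]

lemma orb_eq_support_cycleOf {σ : Equiv.Perm (Fin n)} {i : Fin n} (h : σ i ≠ i) :
    orb σ i = (σ.cycleOf i).support := by
  ext j
  rw [mem_orb, Equiv.Perm.mem_support_cycleOf_iff]
  simp [Equiv.Perm.mem_support, h]

lemma pow_ocard_apply (σ : Equiv.Perm (Fin n)) (i : Fin n) : (σ ^ ocard σ i) i = i := by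
  by_cases h : σ i = i
  · rw [ocard_of_fixed h, pow_one, h]
  · have hc := Equiv.Perm.isCycleOn_support_cycleOf σ i
    have hi : i ∈ (σ.cycleOf i).support := by
      rw [← orb_eq_support_cycleOf h]; exact self_mem_orb σ i
    have := (hc.pow_apply_eq hi (n := ocard σ i)).2
    rw [ocard, orb_eq_support_cycleOf h] at *
    exact this dvd_rfl

lemma pow_apply_ne_of_lt {σ : Equiv.Perm (Fin n)} {i : Fin n} {s : ℕ}
    (h1 : 1 ≤ s) (h2 : s < ocard σ i) : (σ ^ s) i ≠ i := by
  by_cases h : σ i = i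
  · rw [ocard_of_fixed h] at h2; omega
  · have hc := Equiv.Perm.isCycleOn_support_cycleOf σ i
    have hi : i ∈ (σ.cycleOf i).support := by
      rw [← orb_eq_support_cycleOf h]; exact self_mem_orb σ i
    intro hcon
    have := (hc.pow_apply_eq hi (n := s)).1 hcon
    rw [← orb_eq_support_cycleOf h] at this
    exact absurd (Nat.le_of_dvd (by omega) this) (by rw [ocard] at h2; omega)

lemma sameCycle_pow (σ : Equiv.Perm (Fin n)) (i : Fin n) (s : ℕ) :
    σ.SameCycle i ((σ ^ s) i) := ⟨(s : ℤ), by rw [zpow_natCast]⟩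

/-- the number of cycles equals the sum of reciprocal orbit sizes -/
lemma cycleCount_eq_sum (σ : Equiv.Perm (Fin n)) :
    (cycleCount σ : ℝ) = ∑ i, ((ocard σ i : ℝ))⁻¹ := by
  have hsplit : (Finset.univ : Finset (Fin n)) = σ.support ∪ (univ.filter fun i => σ i = i) := by
    ext i
    simp [Equiv.Perm.mem_support]
    tauto
  have hdisj : Disjoint σ.support (univ.filter fun i => σ i = i) := by
    rw [Finset.disjoint_left]
    intro a ha hb
    simp only [Equiv.Perm.mem_support] at ha
    simp only [mem_filter] at hb
    exact ha hb.2
  rw [hsplit, Finset.sum_union hdisj]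
  have hfix : ∑ i ∈ (univ.filter fun i => σ i = i), ((ocard σ i : ℝ))⁻¹
      = ((univ.filter fun i => σ i = i).card : ℝ) := by
    rw [Finset.sum_congr rfl (fun i hi => ?_), Finset.sum_const, nsmul_eq_mul, mul_one]
    rw [ocard_of_fixed (Finset.mem_filter.1 hi).2]
    norm_num
  have hsupp : ∑ i ∈ σ.support, ((ocard σ i : ℝ))⁻¹ = (σ.cycleType.card : ℝ) := by
    have hmaps : ∀ i ∈ σ.support, σ.cycleOf i ∈ σ.cycleFactorsFinset := fun i hi =>
      Equiv.Perm.cycleOf_mem_cycleFactorsFinset_iff.2 hi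
    rw [← Finset.sum_fiberwise_of_maps_to hmaps fun i => ((ocard σ i : ℝ))⁻¹]
    have hcard : (σ.cycleType.card : ℝ) = ((σ.cycleFactorsFinset.card : ℝ)) := by
      rw [Equiv.Perm.cycleType_def, Multiset.card_map]; rfl
    have hone : ∀ c ∈ σ.cycleFactorsFinset,
        (∑ i ∈ σ.support.filter (fun i => σ.cycleOf i = c), ((ocard σ i : ℝ))⁻¹) = 1 := by
      intro c hc
      have hfib : σ.support.filter (fun i => σ.cycleOf i = c) = c.support := by
        ext i
        simp only [Finset.mem_filter]
        constructor
        · rintro ⟨hi, rfl⟩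
          rw [Equiv.Perm.mem_support_cycleOf_iff]
          exact ⟨Equiv.Perm.SameCycle.refl _ _, hi⟩
        · intro hi
          have hic : c = σ.cycleOf i := Equiv.Perm.cycle_is_cycleOf hi hc
          have hsub : c.support ⊆ σ.support := by
            rw [hic]; exact Equiv.Perm.support_cycleOf_le σ i
          exact ⟨hsub hi, hic.symm⟩
      have hval : ∀ i ∈ c.support, ((ocard σ i : ℝ))⁻¹ = ((c.support.card : ℝ))⁻¹ := by
        intro i hi
        have hic : c = σ.cycleOf i := Equiv.Perm.cycle_is_cycleOf hi hc
        have hine : σ i ≠ i := by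
          have hsub : c.support ⊆ σ.support := by
            rw [hic]; exact Equiv.Perm.support_cycleOf_le σ i
          exact Equiv.Perm.mem_support.1 (hsub hi)
        rw [ocard, orb_eq_support_cycleOf hine, ← hic]
      have hpos : 0 < c.support.card := by
        have hcy : c.IsCycle := (Equiv.Perm.mem_cycleFactorsFinset_iff.1 hc).1
        have := hcy.two_le_card_support
        omega
      rw [hfib, Finset.sum_congr rfl hval, Finset.sum_const, nsmul_eq_mul]
      exact mul_inv_cancel₀ (Nat.cast_ne_zero.2 hpos.ne')
    rw [Finset.sum_congr rfl hone, Finset.sum_const, nsmul_eq_mul, mul_one, hcard]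
  rw [hsupp, hfix, cycleCount]
  push_cast
  ring

section Count

variable {n : ℕ} {δ : ℝ} {A : Matrix (Fin n) (Fin n) ℝ}

lemma swap_weight (hδ0 : 0 < δ) (hA : ∀ i j, δ ≤ A i j ∧ A i j ≤ 1)
    (σ : Equiv.Perm (Fin n)) {i j : Fin n} (hij : i ≠ j) :
    δ ^ 2 * ∏ k, A k (σ k) ≤ ∏ k, A k ((σ * Equiv.swap i j) k) := by
  have hnn : ∀ a b, 0 ≤ A a b := fun a b => le_trans hδ0.le (hA a b).1
  have hsplit : ∀ τ : Equiv.Perm (Fin n), ∏ k, A k (τ k) =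
      A i (τ i) * (A j (τ j) * ∏ k ∈ (Finset.univ.erase i).erase j, A k (τ k)) := by
    intro τ
    rw [← Finset.mul_prod_erase Finset.univ _ (Finset.mem_univ i),
      ← Finset.mul_prod_erase (Finset.univ.erase i) _
        (Finset.mem_erase.2 ⟨hij.symm, Finset.mem_univ j⟩)]
  rw [hsplit σ, hsplit (σ * Equiv.swap i j)]
  have hrest : ∏ k ∈ (Finset.univ.erase i).erase j, A k ((σ * Equiv.swap i j) k)
      = ∏ k ∈ (Finset.univ.erase i).erase j, A k (σ k) := by
    apply Finset.prod_congr rfl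
    intro k hk
    simp only [Finset.mem_erase] at hk
    rw [Equiv.Perm.mul_apply, Equiv.swap_apply_of_ne_of_ne hk.2.1 hk.1]
  rw [hrest]
  have h1 : (σ * Equiv.swap i j) i = σ j := by rw [Equiv.Perm.mul_apply, Equiv.swap_apply_left]
  have h2 : (σ * Equiv.swap i j) j = σ i := by rw [Equiv.Perm.mul_apply, Equiv.swap_apply_right]
  rw [h1, h2]
  have hS : (0:ℝ) ≤ ∏ k ∈ (Finset.univ.erase i).erase j, A k (σ k) :=
    Finset.prod_nonneg fun k _ => hnn _ _
  have hab : A i (σ i) * A j (σ j) ≤ 1 := by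
    have := mul_le_mul (hA i (σ i)).2 (hA j (σ j)).2 (hnn j (σ j)) zero_le_one
    linarith
  have hcd : δ ^ 2 ≤ A i (σ j) * A j (σ i) := by
    rw [sq]; exact mul_le_mul (hA _ _).1 (hA _ _).1 hδ0.le (hnn _ _)
  calc δ ^ 2 * (A i (σ i) * (A j (σ j) * ∏ k ∈ (Finset.univ.erase i).erase j, A k (σ k)))
      = (A i (σ i) * A j (σ j)) * (δ ^ 2 * ∏ k ∈ (Finset.univ.erase i).erase j, A k (σ k)) := by
        ring
    _ ≤ 1 * (δ ^ 2 * ∏ k ∈ (Finset.univ.erase i).erase j, A k (σ k)) :=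
        mul_le_mul_of_nonneg_right hab (mul_nonneg (sq_nonneg δ) hS)
    _ = δ ^ 2 * ∏ k ∈ (Finset.univ.erase i).erase j, A k (σ k) := one_mul _
    _ ≤ (A i (σ j) * A j (σ i)) * ∏ k ∈ (Finset.univ.erase i).erase j, A k (σ k) :=
        mul_le_mul_of_nonneg_right hcd hS
    _ = A i (σ j) * (A j (σ i) * ∏ k ∈ (Finset.univ.erase i).erase j, A k (σ k)) := by ring

lemma tau_pow {σ : Equiv.Perm (Fin n)} {i j : Fin n} (hj : ¬ σ.SameCycle i j) :
    ∀ s, 1 ≤ s → s ≤ ocard σ i → ((σ * Equiv.swap i j) ^ s) j = (σ ^ s) i := by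
  intro s
  induction s with
  | zero => omega
  | succ s ih =>
    intro _ hs
    rcases Nat.eq_or_lt_of_le (Nat.one_le_iff_ne_zero.2 (Nat.succ_ne_zero s)) with h1 | h1
    · -- s + 1 = 1
      have hs0 : s = 0 := by omega
      subst hs0
      show ((σ * Equiv.swap i j) ^ 1) j = (σ ^ 1) i
      rw [pow_one, pow_one, Equiv.Perm.mul_apply, Equiv.swap_apply_right]
    · have hs1 : 1 ≤ s := by omega
      have hrec := ih hs1 (by omega)
      rw [pow_succ', Equiv.Perm.mul_apply, hrec]
      have hne_i : (σ ^ s) i ≠ i := pow_apply_ne_of_lt hs1 (by omega)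
      have hne_j : (σ ^ s) i ≠ j := fun hcon => hj (hcon ▸ sameCycle_pow σ i s)
      rw [Equiv.Perm.mul_apply, Equiv.swap_apply_of_ne_of_ne hne_i hne_j, pow_succ',
        Equiv.Perm.mul_apply]

lemma tau_pow_ocard {σ : Equiv.Perm (Fin n)} {i j : Fin n} (hj : ¬ σ.SameCycle i j) :
    ((σ * Equiv.swap i j) ^ ocard σ i) j = i := by
  rw [tau_pow hj (ocard σ i) (one_le_ocard σ i) le_rfl, pow_ocard_apply]

/-- key counting inequality -/
lemma count_key (hδ0 : 0 < δ) (hA : ∀ i j, δ ≤ A i j ∧ A i j ≤ 1)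
    {k : ℕ} (hk1 : 1 ≤ k) (hkn : k < n) :
    δ ^ 2 * ((n : ℝ) - k) *
      ∑ σ : Equiv.Perm (Fin n), ((Finset.univ.filter fun i => ocard σ i = k).card : ℝ) * ∏ l, A l (σ l)
    ≤ (n : ℝ) * ∑ σ : Equiv.Perm (Fin n), ∏ l, A l (σ l) := by
  classical
  set W : Equiv.Perm (Fin n) → ℝ := fun σ => ∏ l, A l (σ l) with hW
  have hWnn : ∀ σ, 0 ≤ W σ := fun σ => Finset.prod_nonneg fun l _ => le_trans hδ0.le (hA _ _).1
  set T : Finset (Equiv.Perm (Fin n) × Fin n × Fin n) :=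
    Finset.univ.filter fun q => ocard q.1 q.2.1 = k ∧ ¬ q.1.SameCycle q.2.1 q.2.2 with hT
  -- step 1 : LHS = ∑ over T of δ^2 * W
  have hLHS : ∑ q ∈ T, δ ^ 2 * W q.1 =
      δ ^ 2 * ((n : ℝ) - k) * ∑ σ : Equiv.Perm (Fin n),
        ((Finset.univ.filter fun i => ocard σ i = k).card : ℝ) * W σ := by
    rw [hT, Finset.sum_filter, Fintype.sum_prod_type]
    rw [Finset.mul_sum]
    apply Finset.sum_congr rfl
    intro σ _
    rw [Fintype.sum_prod_type]
    have hinner : ∀ i : Fin n, (∑ j : Fin n,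
        if ocard σ i = k ∧ ¬ σ.SameCycle i j then δ ^ 2 * W σ else 0) =
        if ocard σ i = k then ((n : ℝ) - k) * (δ ^ 2 * W σ) else 0 := by
      intro i
      by_cases hoc : ocard σ i = k
      · simp only [hoc, true_and, if_true]
        rw [Finset.sum_ite, Finset.sum_const, Finset.sum_const_zero, add_zero, nsmul_eq_mul]
        congr 1
        have hcomp : (Finset.univ.filter fun j => ¬ σ.SameCycle i j).card = n - k := by
          have hnot : (Finset.univ.filter fun j => ¬ σ.SameCycle i j)
              = Finset.univ \ (Finset.univ.filter fun j => σ.SameCycle i j) := by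
            rw [Finset.filter_not]
          have horb : (Finset.univ.filter fun j => σ.SameCycle i j).card = k := by
            rw [← hoc]; rfl
          rw [hnot, Finset.card_sdiff_of_subset (Finset.filter_subset _ _), horb,
            Finset.card_univ, Fintype.card_fin]
        rw [hcomp]
        have hkn' : k ≤ n := le_of_lt hkn
        push_cast [Nat.cast_sub hkn']
        ring
      · simp only [hoc, false_and, if_false, Finset.sum_const_zero]
    rw [Finset.sum_congr rfl fun i _ => hinner i]
    rw [Finset.sum_ite, Finset.sum_const, Finset.sum_const_zero, add_zero, nsmul_eq_mul]
    ring
  -- step 2 : termwise bound by swapped weight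
  have hstep2 : ∑ q ∈ T, δ ^ 2 * W q.1 ≤ ∑ q ∈ T, W (q.1 * Equiv.swap q.2.1 q.2.2) := by
    apply Finset.sum_le_sum
    intro q hq
    rw [hT, Finset.mem_filter] at hq
    have hij : q.2.1 ≠ q.2.2 := by
      intro hcon
      exact hq.2.2 (hcon ▸ Equiv.Perm.SameCycle.refl _ _)
    exact swap_weight hδ0 hA q.1 hij
  -- step 3 : inject into pairs (τ, i)
  have hstep3 : ∑ q ∈ T, W (q.1 * Equiv.swap q.2.1 q.2.2) ≤
      (n : ℝ) * ∑ σ : Equiv.Perm (Fin n), W σ := by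
    set Φ : Equiv.Perm (Fin n) × Fin n × Fin n → Equiv.Perm (Fin n) × Fin n :=
      fun q => (q.1 * Equiv.swap q.2.1 q.2.2, q.2.1) with hΦ
    have hinj : Set.InjOn Φ T := by
      intro q hq q' hq' heq
      rw [hT, Finset.mem_coe, Finset.mem_filter] at hq hq'
      obtain ⟨σ, i, j⟩ := q
      obtain ⟨σ', i', j'⟩ := q'
      simp only [hΦ, Prod.mk.injEq] at heq
      obtain ⟨hτ, hi⟩ := heq
      subst hi
      have hj : ((σ * Equiv.swap i j) ^ k) j = i := by
        rw [← hq.2.1]; exact tau_pow_ocard hq.2.2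
      have hj' : ((σ' * Equiv.swap i j') ^ k) j' = i := by
        rw [← hq'.2.1]; exact tau_pow_ocard hq'.2.2
      rw [hτ] at hj
      have hjj : j = j' := by
        have := hj.trans hj'.symm
        exact Equiv.injective _ this
      subst hjj
      have hσ : σ = σ' := by
        have := hτ
        calc σ = σ * Equiv.swap i j * Equiv.swap i j := by
                rw [mul_assoc, Equiv.swap_mul_self, mul_one]
          _ = σ' * Equiv.swap i j * Equiv.swap i j := by rw [this]
          _ = σ' := by rw [mul_assoc, Equiv.swap_mul_self, mul_one]
      simp [hσ]
    calc ∑ q ∈ T, W (q.1 * Equiv.swap q.2.1 q.2.2) = ∑ p ∈ T.image Φ, W p.1 := by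
          rw [Finset.sum_image (fun x hx y hy h => hinj (Finset.mem_coe.2 hx) (Finset.mem_coe.2 hy) h)]
      _ ≤ ∑ p : Equiv.Perm (Fin n) × Fin n, W p.1 := by
          apply Finset.sum_le_sum_of_subset_of_nonneg (Finset.subset_univ _)
          intro p _ _
          exact hWnn p.1
      _ = (n : ℝ) * ∑ σ : Equiv.Perm (Fin n), W σ := by
          rw [Fintype.sum_prod_type]
          have hrow : ∀ σ : Equiv.Perm (Fin n), (∑ _y : Fin n, W σ) = (n : ℝ) * W σ := by
            intro σ
            rw [Finset.sum_const, Finset.card_univ, Fintype.card_fin, nsmul_eq_mul]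
          rw [Finset.sum_congr rfl fun σ _ => hrow σ, ← Finset.mul_sum]
  rw [← hLHS]
  exact le_trans hstep2 hstep3

end Count
lemma harm_le : ∀ m : ℕ, ∑ k ∈ Finset.Icc 1 m, ((k : ℝ))⁻¹ ≤ 1 + Real.log m := by
  intro m
  induction m with
  | zero => simp
  | succ m ih =>
    rcases Nat.eq_zero_or_pos m with rfl | hm
    · norm_num
    · rw [Finset.sum_Icc_succ_top (by omega : 1 ≤ m + 1)]
      have hmR : (0:ℝ) < m := by exact_mod_cast hm
      have hkey : Real.log m + ((m + 1 : ℕ) : ℝ)⁻¹ ≤ Real.log ((m + 1 : ℕ)) := by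
        have hpos : (0:ℝ) < (m : ℝ) / ((m + 1 : ℕ) : ℝ) := by positivity
        have := Real.log_le_sub_one_of_pos hpos
        rw [Real.log_div (ne_of_gt hmR) (by positivity)] at this
        have hexp : (m : ℝ) / ((m + 1 : ℕ) : ℝ) - 1 = -(((m + 1 : ℕ) : ℝ))⁻¹ := by
          push_cast
          field_simp
          ring
        rw [hexp] at this
        linarith
      push_cast at hkey ⊢
      linarith

lemma cycleCount_le_n (σ : Equiv.Perm (Fin n)) : cycleCount σ ≤ n := by
  have h1 : σ.cycleType.card ≤ σ.cycleType.sum := by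
    have := Multiset.card_nsmul_le_sum (s := σ.cycleType) (a := 1)
      (fun x hx => (Equiv.Perm.one_lt_of_mem_cycleType hx).le)
    simpa using this
  have h2 : σ.cycleType.sum = σ.support.card := Equiv.Perm.sum_cycleType σ
  have h3 : (Finset.univ.filter fun i => σ i = i).card + σ.support.card = n := by
    have hsupp : (Finset.univ.filter fun i => ¬ σ i = i) = σ.support := by
      ext i; simp [Equiv.Perm.mem_support]
    have := Finset.card_filter_add_card_filter_not
      (s := (Finset.univ : Finset (Fin n))) (p := fun i => σ i = i)
    rw [hsupp] at this
    simpa using this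
  unfold cycleCount
  omega

lemma one_le_cycleCount (hn : 0 < n) (σ : Equiv.Perm (Fin n)) : 1 ≤ cycleCount σ := by
  unfold cycleCount
  by_cases h : ∃ i, σ i = i
  · obtain ⟨i, hi⟩ := h
    have : i ∈ Finset.univ.filter fun i => σ i = i := Finset.mem_filter.2 ⟨Finset.mem_univ i, hi⟩
    have := Finset.card_pos.2 ⟨i, this⟩
    omega
  · push_neg at h
    have hi : (⟨0, hn⟩ : Fin n) ∈ σ.support := Equiv.Perm.mem_support.2 (h _)
    have hsum : 0 < σ.cycleType.sum := by
      rw [Equiv.Perm.sum_cycleType]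
      exact Finset.card_pos.2 ⟨_, hi⟩
    have : σ.cycleType ≠ 0 := by
      intro hcon; rw [hcon] at hsum; simp at hsum
    have := Multiset.card_pos.2 this
    omega
lemma cc_decomp (σ : Equiv.Perm (Fin n)) (m0 : ℕ) (hm : n ≤ 4 * (m0 + 1)) :
    (cycleCount σ : ℝ) ≤ 4 + ∑ k ∈ Finset.Icc 1 m0,
      ((Finset.univ.filter fun i => ocard σ i = k).card : ℝ) * ((k : ℝ))⁻¹ := by
  rw [cycleCount_eq_sum σ]
  rw [← Finset.sum_filter_add_sum_filter_not Finset.univ (fun i => ocard σ i ≤ m0)]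
  have hbig : ∑ i ∈ Finset.univ.filter (fun i => ¬ ocard σ i ≤ m0), ((ocard σ i : ℝ))⁻¹ ≤ 4 := by
    have hterm : ∀ i ∈ Finset.univ.filter (fun i => ¬ ocard σ i ≤ m0),
        ((ocard σ i : ℝ))⁻¹ ≤ ((m0 + 1 : ℕ) : ℝ)⁻¹ := by
      intro i hi
      have : m0 + 1 ≤ ocard σ i := by
        have := (Finset.mem_filter.1 hi).2; omega
      apply inv_anti₀ (by positivity)
      exact_mod_cast this
    calc ∑ i ∈ Finset.univ.filter (fun i => ¬ ocard σ i ≤ m0), ((ocard σ i : ℝ))⁻¹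
        ≤ ∑ _i ∈ Finset.univ.filter (fun i => ¬ ocard σ i ≤ m0), ((m0 + 1 : ℕ) : ℝ)⁻¹ :=
          Finset.sum_le_sum hterm
      _ = ((Finset.univ.filter (fun i => ¬ ocard σ i ≤ m0)).card : ℝ) * ((m0 + 1 : ℕ) : ℝ)⁻¹ := by
          rw [Finset.sum_const, nsmul_eq_mul]
      _ ≤ (n : ℝ) * ((m0 + 1 : ℕ) : ℝ)⁻¹ := by
          apply mul_le_mul_of_nonneg_right _ (by positivity)
          have := Finset.card_le_card (Finset.filter_subset
            (fun i => ¬ ocard σ i ≤ m0) (Finset.univ : Finset (Fin n)))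
          simpa using this
      _ ≤ 4 := by
          rw [← div_eq_mul_inv, div_le_iff₀ (by positivity : (0:ℝ) < ((m0 + 1 : ℕ) : ℝ))]
          exact_mod_cast hm
  have hsml : ∑ i ∈ Finset.univ.filter (fun i => ocard σ i ≤ m0), ((ocard σ i : ℝ))⁻¹ =
      ∑ k ∈ Finset.Icc 1 m0,
        ((Finset.univ.filter fun i => ocard σ i = k).card : ℝ) * ((k : ℝ))⁻¹ := by
    have hmaps : ∀ i ∈ Finset.univ.filter (fun i => ocard σ i ≤ m0),
        ocard σ i ∈ Finset.Icc 1 m0 := by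
      intro i hi
      rw [Finset.mem_Icc]
      exact ⟨one_le_ocard σ i, (Finset.mem_filter.1 hi).2⟩
    rw [← Finset.sum_fiberwise_of_maps_to hmaps fun i => ((ocard σ i : ℝ))⁻¹]
    apply Finset.sum_congr rfl
    intro k hk
    rw [Finset.mem_Icc] at hk
    have hfib : (Finset.univ.filter (fun i => ocard σ i ≤ m0)).filter (fun i => ocard σ i = k)
        = Finset.univ.filter fun i => ocard σ i = k := by
      rw [Finset.filter_filter]
      apply Finset.filter_congr
      intro i _
      constructor
      · exact fun h => h.2
      · exact fun h => ⟨by omega, h⟩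
    rw [hfib]
    have : ∀ i ∈ Finset.univ.filter (fun i => ocard σ i = k),
        ((ocard σ i : ℝ))⁻¹ = ((k : ℝ))⁻¹ := by
      intro i hi
      rw [(Finset.mem_filter.1 hi).2]
    rw [Finset.sum_congr rfl this, Finset.sum_const, nsmul_eq_mul]
  rw [hsml]
  linarith
set_option maxHeartbeats 1000000

/-- If `δ ≤ a_{ij} ≤ 1`, then the permutations with at most
`4 + 4δ⁻² ln n` cycles contribute at least half of the permanent. -/
theorem few_cycles_dominate (n : ℕ) (δ : ℝ) (hδ0 : 0 < δ) (hδ1 : δ < 1)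
    (A : Matrix (Fin n) (Fin n) ℝ)
    (hA : ∀ i j, δ ≤ A i j ∧ A i j ≤ 1) :
    (1 / 2) * (∑ σ : Equiv.Perm (Fin n), ∏ k, A k (σ k)) ≤
      ∑ σ ∈ Finset.univ.filter
        (fun σ : Equiv.Perm (Fin n) =>
          (cycleCount σ : ℝ) ≤ 4 + 4 * Real.log n / δ ^ 2),
        ∏ k, A k (σ k) := by
  classical
  have hWnn : ∀ σ : Equiv.Perm (Fin n), 0 ≤ ∏ k, A k (σ k) :=
    fun σ => Finset.prod_nonneg fun l _ => le_trans hδ0.le (hA _ _).1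
  set W : Equiv.Perm (Fin n) → ℝ := fun σ => ∏ k, A k (σ k) with hW
  set P : ℝ := ∑ σ : Equiv.Perm (Fin n), W σ with hP
  have hPnn : 0 ≤ P := Finset.sum_nonneg fun σ _ => hWnn σ
  set t : ℝ := 4 + 4 * Real.log n / δ ^ 2 with ht
  have hδ2 : (0:ℝ) < δ ^ 2 := by positivity
  have hδ2le : δ ^ 2 ≤ 1 := by nlinarith
  have hL0 : 0 ≤ Real.log n := by
    rcases Nat.eq_zero_or_pos n with rfl | hn
    · simp
    · exact Real.log_nonneg (by exact_mod_cast hn)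
  have ht4 : (4:ℝ) ≤ t := by
    rw [ht]
    have : 0 ≤ 4 * Real.log n / δ ^ 2 := by positivity
    linarith
  by_cases hbig : (n : ℝ) ≤ t
  · -- trivial case : all permutations are good
    have hfil : Finset.univ.filter
        (fun σ : Equiv.Perm (Fin n) => (cycleCount σ : ℝ) ≤ t) = Finset.univ := by
      apply Finset.filter_true_of_mem
      intro σ _
      calc (cycleCount σ : ℝ) ≤ (n : ℝ) := by exact_mod_cast cycleCount_le_n σ
        _ ≤ t := hbig
    rw [hfil]
    linarith
  · push_neg at hbig
    have hn5 : 5 ≤ n := by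
      have h4 : (4:ℝ) < (n:ℝ) := lt_of_le_of_lt ht4 hbig
      have : 4 < n := by exact_mod_cast h4
      omega
    have hn0 : 0 < n := by omega
    set m0 : ℕ := n / 4 with hm0
    have hm01 : 1 ≤ m0 := by omega
    have hm04 : 4 * m0 ≤ n := by omega
    have hm0n : m0 < n := by omega
    have hm0big : n ≤ 4 * (m0 + 1) := by omega
    set u : ℝ := (δ ^ 2)⁻¹ with hu
    have hu0 : 0 < u := by positivity
    have hu1 : 1 ≤ u := by
      rw [hu]
      rw [le_inv_comm₀ (by norm_num) hδ2]
      simpa using hδ2le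
    have htu : t = 4 + 4 * Real.log n * u := by rw [ht, hu, div_eq_mul_inv]
    -- bound on each S_k
    have hSk : ∀ k ∈ Finset.Icc 1 m0,
        (∑ σ : Equiv.Perm (Fin n),
          ((Finset.univ.filter fun i => ocard σ i = k).card : ℝ) * W σ)
        ≤ (4 / 3) * P * u := by
      intro k hk
      rw [Finset.mem_Icc] at hk
      have hk1 : 1 ≤ k := hk.1
      have hkn : k < n := lt_of_le_of_lt hk.2 hm0n
      have h1 := count_key hδ0 hA hk1 hkn
      have hnk : (0:ℝ) < (n:ℝ) - k := by
        have : (k:ℝ) < n := by exact_mod_cast hkn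
        linarith
      have h4k : 4 * (k:ℝ) ≤ n := by
        have : 4 * k ≤ n := le_trans (by omega : 4 * k ≤ 4 * m0) hm04
        exact_mod_cast this
      have h2 : (n:ℝ) * P ≤ (4 / 3) * ((n:ℝ) - k) * P := by
        apply mul_le_mul_of_nonneg_right _ hPnn
        linarith
      rw [hu, ← div_eq_mul_inv, le_div_iff₀ hδ2]
      nlinarith [h1, h2, hnk, hδ2]
    -- regrouped small-orbit sum
    have hD : ∑ σ : Equiv.Perm (Fin n), (∑ k ∈ Finset.Icc 1 m0,
          ((Finset.univ.filter fun i => ocard σ i = k).card : ℝ) * ((k : ℝ))⁻¹) * W σ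
        ≤ (1 + Real.log m0) * ((4 / 3) * P * u) := by
      have hswap : ∑ σ : Equiv.Perm (Fin n), (∑ k ∈ Finset.Icc 1 m0,
            ((Finset.univ.filter fun i => ocard σ i = k).card : ℝ) * ((k : ℝ))⁻¹) * W σ
          = ∑ k ∈ Finset.Icc 1 m0, ((k : ℝ))⁻¹ * ∑ σ : Equiv.Perm (Fin n),
            ((Finset.univ.filter fun i => ocard σ i = k).card : ℝ) * W σ := by
        have h1 : ∀ σ : Equiv.Perm (Fin n), (∑ k ∈ Finset.Icc 1 m0,
              ((Finset.univ.filter fun i => ocard σ i = k).card : ℝ) * ((k : ℝ))⁻¹) * W σ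
            = ∑ k ∈ Finset.Icc 1 m0, ((k : ℝ))⁻¹ *
              (((Finset.univ.filter fun i => ocard σ i = k).card : ℝ) * W σ) := by
          intro σ
          rw [Finset.sum_mul]
          apply Finset.sum_congr rfl
          intro k _
          ring
        rw [Finset.sum_congr rfl fun σ _ => h1 σ, Finset.sum_comm]
        apply Finset.sum_congr rfl
        intro k _
        rw [Finset.mul_sum]
      rw [hswap]
      calc ∑ k ∈ Finset.Icc 1 m0, ((k : ℝ))⁻¹ * ∑ σ : Equiv.Perm (Fin n),
            ((Finset.univ.filter fun i => ocard σ i = k).card : ℝ) * W σ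
          ≤ ∑ k ∈ Finset.Icc 1 m0, ((k : ℝ))⁻¹ * ((4 / 3) * P * u) :=
            Finset.sum_le_sum fun k hk =>
              mul_le_mul_of_nonneg_left (hSk k hk) (by positivity)
        _ = (∑ k ∈ Finset.Icc 1 m0, ((k : ℝ))⁻¹) * ((4 / 3) * P * u) := by
            rw [← Finset.sum_mul]
        _ ≤ (1 + Real.log m0) * ((4 / 3) * P * u) :=
            mul_le_mul_of_nonneg_right (harm_le m0) (by positivity)
    -- total expected cycle count bound
    have hEtot : ∑ σ : Equiv.Perm (Fin n), (cycleCount σ : ℝ) * W σ ≤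
        4 * P + (1 + Real.log m0) * ((4 / 3) * P * u) := by
      calc ∑ σ : Equiv.Perm (Fin n), (cycleCount σ : ℝ) * W σ
          ≤ ∑ σ : Equiv.Perm (Fin n), (4 + ∑ k ∈ Finset.Icc 1 m0,
              ((Finset.univ.filter fun i => ocard σ i = k).card : ℝ) * ((k : ℝ))⁻¹) * W σ :=
            Finset.sum_le_sum fun σ _ =>
              mul_le_mul_of_nonneg_right (cc_decomp σ m0 hm0big) (hWnn σ)
        _ = 4 * P + ∑ σ : Equiv.Perm (Fin n), (∑ k ∈ Finset.Icc 1 m0,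
              ((Finset.univ.filter fun i => ocard σ i = k).card : ℝ) * ((k : ℝ))⁻¹) * W σ := by
            have h1 : ∀ σ : Equiv.Perm (Fin n), (4 + ∑ k ∈ Finset.Icc 1 m0,
                ((Finset.univ.filter fun i => ocard σ i = k).card : ℝ) * ((k : ℝ))⁻¹) * W σ
                = 4 * W σ + (∑ k ∈ Finset.Icc 1 m0,
                ((Finset.univ.filter fun i => ocard σ i = k).card : ℝ) * ((k : ℝ))⁻¹) * W σ := by
              intro σ; ring
            rw [Finset.sum_congr rfl fun σ _ => h1 σ, Finset.sum_add_distrib, ← Finset.mul_sum, hP]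
        _ ≤ 4 * P + (1 + Real.log m0) * ((4 / 3) * P * u) := add_le_add_right hD _
    -- log m0 bound
    have hlog4 : Real.log 4 = 2 * Real.log 2 := by
      rw [show (4:ℝ) = 2 ^ 2 by norm_num, Real.log_pow]
      push_cast; ring
    have hlogm0 : Real.log m0 ≤ Real.log n - 2 * Real.log 2 := by
      have hm0pos : (0:ℝ) < (m0:ℝ) := by exact_mod_cast hm01
      have h1 : (m0:ℝ) ≤ (n:ℝ) / 4 := by
        rw [le_div_iff₀ (by norm_num : (0:ℝ) < 4)]
        have : (4:ℝ) * m0 ≤ n := by exact_mod_cast hm04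
        linarith
      calc Real.log m0 ≤ Real.log ((n:ℝ) / 4) := Real.log_le_log hm0pos h1
        _ = Real.log n - Real.log 4 := Real.log_div (by positivity) (by norm_num)
        _ = Real.log n - 2 * Real.log 2 := by rw [hlog4]
    have hlog2 : (0.6931471803:ℝ) < Real.log 2 := Real.log_two_gt_d9
    have hlog5 : 2 * Real.log 2 + 1 / 5 ≤ Real.log n := by
      have h5n : (5:ℝ) ≤ (n:ℝ) := by exact_mod_cast hn5
      have hlog5n : Real.log 5 ≤ Real.log n := Real.log_le_log (by norm_num) h5n
      have h45 : Real.log ((4:ℝ)/5) ≤ (4:ℝ)/5 - 1 := Real.log_le_sub_one_of_pos (by norm_num)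
      rw [Real.log_div (by norm_num) (by norm_num), hlog4] at h45
      linarith
    -- Markov
    set G : Finset (Equiv.Perm (Fin n)) :=
      Finset.univ.filter (fun σ : Equiv.Perm (Fin n) => (cycleCount σ : ℝ) ≤ t) with hG
    set B : Finset (Equiv.Perm (Fin n)) :=
      Finset.univ.filter (fun σ : Equiv.Perm (Fin n) => ¬ (cycleCount σ : ℝ) ≤ t) with hB
    have hGB : ∑ σ ∈ G, W σ + ∑ σ ∈ B, W σ = P := by
      rw [hG, hB, hP]
      exact Finset.sum_filter_add_sum_filter_not _ _ _
    have hsplitcc : ∑ σ ∈ G, (cycleCount σ : ℝ) * W σ + ∑ σ ∈ B, (cycleCount σ : ℝ) * W σ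
        = ∑ σ : Equiv.Perm (Fin n), (cycleCount σ : ℝ) * W σ := by
      rw [hG, hB]
      exact Finset.sum_filter_add_sum_filter_not _ _ _
    have hGlow : ∑ σ ∈ G, W σ ≤ ∑ σ ∈ G, (cycleCount σ : ℝ) * W σ := by
      apply Finset.sum_le_sum
      intro σ _
      have h1 : (1:ℝ) ≤ (cycleCount σ : ℝ) := by exact_mod_cast one_le_cycleCount hn0 σ
      nlinarith [hWnn σ]
    have hBlow : t * ∑ σ ∈ B, W σ ≤ ∑ σ ∈ B, (cycleCount σ : ℝ) * W σ := by
      rw [Finset.mul_sum]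
      apply Finset.sum_le_sum
      intro σ hσ
      rw [hB, Finset.mem_filter] at hσ
      have : t ≤ (cycleCount σ : ℝ) := le_of_lt (lt_of_not_ge hσ.2)
      exact mul_le_mul_of_nonneg_right this (hWnn σ)
    -- final numeric inequality
    have hkey : 3 + (4 / 3) * (1 + Real.log m0) * u ≤ 3 / 2 + 2 * Real.log n * u := by
      have hbr : (3/2 : ℝ) ≤ 2 * Real.log n - (4 / 3) * (1 + Real.log m0) := by
        linarith [hlogm0, hlog5, hlog2]
      nlinarith [hbr, hu1, hu0]
    have hfin : 3 * P + (1 + Real.log m0) * ((4 / 3) * P * u) ≤ (3 / 2 + 2 * Real.log n * u) * P := by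
      have := mul_le_mul_of_nonneg_left hkey hPnn
      nlinarith [this]
    -- combine
    have hmark : (∑ σ ∈ B, W σ) * (t - 1) ≤ (3 / 2 + 2 * Real.log n * u) * P := by
      have h1 : t * ∑ σ ∈ B, W σ + ∑ σ ∈ G, W σ ≤ 4 * P + (1 + Real.log m0) * ((4 / 3) * P * u) := by
        calc t * ∑ σ ∈ B, W σ + ∑ σ ∈ G, W σ
            ≤ ∑ σ ∈ B, (cycleCount σ : ℝ) * W σ + ∑ σ ∈ G, (cycleCount σ : ℝ) * W σ :=
              add_le_add hBlow hGlow
          _ = ∑ σ : Equiv.Perm (Fin n), (cycleCount σ : ℝ) * W σ := by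
              rw [add_comm]; exact hsplitcc
          _ ≤ 4 * P + (1 + Real.log m0) * ((4 / 3) * P * u) := hEtot
      have h2 : ∑ σ ∈ G, W σ = P - ∑ σ ∈ B, W σ := by linarith
      rw [h2] at h1
      have h3 : (∑ σ ∈ B, W σ) * (t - 1) ≤ 3 * P + (1 + Real.log m0) * ((4 / 3) * P * u) := by
        nlinarith [h1]
      exact le_trans h3 hfin
    have htmin : t - 1 = 2 * (3 / 2 + 2 * Real.log n * u) := by
      rw [htu]; ring
    have hc0 : (0:ℝ) < 3 / 2 + 2 * Real.log n * u := by positivity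
    have hBle : ∑ σ ∈ B, W σ ≤ P / 2 := by
      rw [htmin] at hmark
      nlinarith [hmark, hc0]
    have hgoal : ∑ σ ∈ G, W σ = P - ∑ σ ∈ B, W σ := by linarith
    rw [hG] at hgoal
    rw [hgoal]
    linarith
end

section
/- Let m, n be positive integers and let Δ_{m,n} be the set of vectors (α_1,...,α_n) of non-negative integers with α_1 + ... + α_n = m. Suppose P is a probability measure on Δ_{m,n} of the form P(α) = w(α)/(α_1!⋯α_n!) for non-negative weights w, and for some 0 < δ ≤ 1 the weights satisfy w(α) ≤ δ^{-1} w(β) whenever Σ_i |α_i − β_i| = 2. If m ≥ δn, then P({α : max_i α_i ≥ 3m ln n / (δ n ln ln n)}) ≤ 1/n. -/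
open scoped Classical

namespace LCI
open Finset

variable {n m : ℕ} {i j : Fin n} {a : ℕ}

noncomputable def PP {n : ℕ} (w : (Fin n → ℕ) → ℝ) (α : Fin n → ℕ) : ℝ :=
  w α / ∏ i, ((α i).factorial : ℝ)

lemma prodfact_pos {n : ℕ} (α : Fin n → ℕ) : 0 < ∏ i, ((α i).factorial : ℝ) :=
  Finset.prod_pos fun i _ => by exact_mod_cast (α i).factorial_pos

lemma PP_nonneg {n : ℕ} {w : (Fin n → ℕ) → ℝ} (hw : ∀ α, 0 ≤ w α) (α : Fin n → ℕ) :
    0 ≤ PP w α := div_nonneg (hw α) (prodfact_pos α).le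

lemma sum_split {M : Type*} [AddCommMonoid M] {n : ℕ} {i j : Fin n} (hij : j ≠ i)
    (f : Fin n → M) :
    ∑ k, f k = f i + (f j + ∑ k ∈ (Finset.univ.erase i).erase j, f k) := by
  rw [Finset.add_sum_erase _ _ (Finset.mem_erase.mpr ⟨hij, Finset.mem_univ j⟩),
      Finset.add_sum_erase _ _ (Finset.mem_univ i)]

lemma prod_split {M : Type*} [CommMonoid M] {n : ℕ} {i j : Fin n} (hij : j ≠ i)
    (f : Fin n → M) :
    ∏ k, f k = f i * (f j * ∏ k ∈ (Finset.univ.erase i).erase j, f k) := by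
  rw [Finset.mul_prod_erase _ _ (Finset.mem_erase.mpr ⟨hij, Finset.mem_univ j⟩),
      Finset.mul_prod_erase _ _ (Finset.mem_univ i)]

/-- move one unit from coordinate `i` (which has value `a`) to coordinate `j` -/
def mv {n : ℕ} (i j : Fin n) (a : ℕ) (α : Fin n → ℕ) : Fin n → ℕ :=
  fun k => if k = i then a - 1 else if k = j then α k + 1 else α k

variable {n m : ℕ} {i j : Fin n} {a : ℕ}

lemma mv_i (a : ℕ) (α : Fin n → ℕ) : mv i j a α i = a - 1 := if_pos rfl
lemma mv_j (hij : j ≠ i) (a : ℕ) (α : Fin n → ℕ) : mv i j a α j = α j + 1 := by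
  simp [mv, hij]
lemma mv_k (a : ℕ) (α : Fin n → ℕ) {k : Fin n} (hki : k ≠ i) (hkj : k ≠ j) :
    mv i j a α k = α k := by simp [mv, hki, hkj]

lemma mv_sum (hij : j ≠ i) (ha : 1 ≤ a) (α : Fin n → ℕ) (hαm : ∑ k, α k = m) (hαi : α i = a) :
    ∑ k, mv i j a α k = m := by
  rw [sum_split hij (mv i j a α), mv_i, mv_j hij]
  rw [sum_split hij α, hαi] at hαm
  have : ∑ k ∈ (Finset.univ.erase i).erase j, mv i j a α k
      = ∑ k ∈ (Finset.univ.erase i).erase j, α k := by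
    refine Finset.sum_congr rfl fun k hk => ?_
    rw [Finset.mem_erase, Finset.mem_erase] at hk
    exact mv_k a α hk.2.1 hk.1
  rw [this]; omega

lemma mv_dist (hij : j ≠ i) (ha : 1 ≤ a) (α : Fin n → ℕ) (hαi : α i = a) :
    ∑ k, ((α k : ℤ) - mv i j a α k).natAbs = 2 := by
  rw [sum_split hij, mv_i, mv_j hij, hαi]
  have h1 : ((a : ℤ) - ((a - 1 : ℕ) : ℤ)).natAbs = 1 := by
    rw [Nat.cast_sub ha]; simp
  have h2 : ((α j : ℤ) - ((α j + 1 : ℕ) : ℤ)).natAbs = 1 := by push_cast; simp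
  have h3 : ∑ k ∈ (Finset.univ.erase i).erase j,
      ((α k : ℤ) - mv i j a α k).natAbs = 0 := by
    refine Finset.sum_eq_zero fun k hk => ?_
    rw [Finset.mem_erase, Finset.mem_erase] at hk
    rw [mv_k a α hk.2.1 hk.1]; simp
  rw [h1, h2, h3]; rfl

lemma mv_prodfact (hij : j ≠ i) (ha : 1 ≤ a) (α : Fin n → ℕ) (hαi : α i = a) :
    (a : ℝ) * ∏ k, ((mv i j a α k).factorial : ℝ)
      = ((α j : ℝ) + 1) * ∏ k, ((α k).factorial : ℝ) := by
  obtain ⟨b, rfl⟩ : ∃ b, a = b + 1 := ⟨a - 1, (Nat.succ_pred_eq_of_pos ha).symm⟩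
  rw [prod_split hij (fun k => ((mv i j (b+1) α k).factorial : ℝ)),
      prod_split hij (fun k => (((α k)).factorial : ℝ))]
  have : ∏ k ∈ (Finset.univ.erase i).erase j, ((mv i j (b+1) α k).factorial : ℝ)
      = ∏ k ∈ (Finset.univ.erase i).erase j, ((α k).factorial : ℝ) := by
    refine Finset.prod_congr rfl fun k hk => ?_
    rw [Finset.mem_erase, Finset.mem_erase] at hk
    rw [mv_k _ α hk.2.1 hk.1]
  rw [this, mv_i, mv_j hij, hαi]
  simp only [Nat.add_sub_cancel, Nat.factorial_succ (α j), Nat.factorial_succ b]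
  push_cast
  ring

lemma key_pt (hij : j ≠ i) (δ : ℝ) (hδ0 : 0 < δ)
    (w : (Fin n → ℕ) → ℝ) (hw : ∀ α, 0 ≤ w α)
    (hstep : ∀ α β : Fin n → ℕ, (∑ k, α k = m) → (∑ k, β k = m) →
        (∑ k, ((α k : ℤ) - β k).natAbs) = 2 → w α ≤ δ⁻¹ * w β)
    (ha : 1 ≤ a) (α : Fin n → ℕ) (hαm : ∑ k, α k = m) (hαi : α i = a) :
    (a : ℝ) * PP w α ≤ δ⁻¹ * ((mv i j a α j : ℕ) : ℝ) * PP w (mv i j a α) := by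
  have hwle : w α ≤ δ⁻¹ * w (mv i j a α) :=
    hstep α _ hαm (mv_sum hij ha α hαm hαi) (mv_dist hij ha α hαi)
  have hF : 0 < ∏ k, ((α k).factorial : ℝ) := prodfact_pos α
  have hG : 0 < ∏ k, ((mv i j a α k).factorial : ℝ) := prodfact_pos (mv i j a α)
  have hpf := mv_prodfact hij ha α hαi
  have hj' : ((mv i j a α j : ℕ) : ℝ) = (α j : ℝ) + 1 := by rw [mv_j hij]; push_cast; ring
  rw [PP, PP, hj']
  have h1 : (a:ℝ) * (w α / ∏ k, ((α k).factorial : ℝ))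
      ≤ (a:ℝ) * ((δ⁻¹ * w (mv i j a α)) / ∏ k, ((α k).factorial : ℝ)) := by
    have ha0 : (0:ℝ) ≤ (a:ℝ) := by positivity
    gcongr
  refine h1.trans (le_of_eq ?_)
  generalize δ⁻¹ = d
  field_simp
  linear_combination (d * w (mv i j a α)) * hpf

def bk {n : ℕ} (i j : Fin n) (a : ℕ) (β : Fin n → ℕ) : Fin n → ℕ :=
  fun k => if k = i then a else if k = j then β k - 1 else β k
variable {n m : ℕ} {i j : Fin n} {a : ℕ}

lemma bk_i (a : ℕ) (β : Fin n → ℕ) : bk i j a β i = a := if_pos rfl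
lemma bk_j (hij : j ≠ i) (a : ℕ) (β : Fin n → ℕ) : bk i j a β j = β j - 1 := by
  simp [bk, hij]
lemma bk_k (a : ℕ) (β : Fin n → ℕ) {k : Fin n} (hki : k ≠ i) (hkj : k ≠ j) :
    bk i j a β k = β k := by simp [bk, hki, hkj]

lemma bk_mv (hij : j ≠ i) (α : Fin n → ℕ) (hαi : α i = a) : bk i j a (mv i j a α) = α := by
  funext k
  rcases eq_or_ne k i with rfl | hki
  · rw [bk_i, hαi]
  rcases eq_or_ne k j with rfl | hkj
  · rw [bk_j hij, mv_j hij]; omega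
  · rw [bk_k _ _ hki hkj, mv_k _ _ hki hkj]

lemma mv_bk (hij : j ≠ i) (β : Fin n → ℕ) (hβi : β i = a - 1) (hβj : 1 ≤ β j) :
    mv i j a (bk i j a β) = β := by
  funext k
  rcases eq_or_ne k i with rfl | hki
  · rw [mv_i, hβi]
  rcases eq_or_ne k j with rfl | hkj
  · rw [mv_j hij, bk_j hij]; omega
  · rw [mv_k _ _ hki hkj, bk_k _ _ hki hkj]

lemma bk_sum (hij : j ≠ i) (ha : 1 ≤ a) (β : Fin n → ℕ) (hβm : ∑ k, β k = m)
    (hβi : β i = a - 1) (hβj : 1 ≤ β j) : ∑ k, bk i j a β k = m := by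
  rw [sum_split hij (bk i j a β), bk_i, bk_j hij]
  rw [sum_split hij β, hβi] at hβm
  have : ∑ k ∈ (Finset.univ.erase i).erase j, bk i j a β k
      = ∑ k ∈ (Finset.univ.erase i).erase j, β k := by
    refine Finset.sum_congr rfl fun k hk => ?_
    rw [Finset.mem_erase, Finset.mem_erase] at hk
    exact bk_k a β hk.2.1 hk.1
  rw [this]; omega

lemma step_j (hij : j ≠ i) (δ : ℝ) (hδ0 : 0 < δ)
    (w : (Fin n → ℕ) → ℝ) (hw : ∀ α, 0 ≤ w α)
    (hstep : ∀ α β : Fin n → ℕ, (∑ k, α k = m) → (∑ k, β k = m) →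
        (∑ k, ((α k : ℤ) - β k).natAbs) = 2 → w α ≤ δ⁻¹ * w β)
    (ha : 1 ≤ a) :
    (a : ℝ) * ∑ α ∈ (Finset.Nat.antidiagonalTuple n m).filter (fun α => α i = a), PP w α
      ≤ δ⁻¹ * ∑ β ∈ (Finset.Nat.antidiagonalTuple n m).filter (fun β => β i = a - 1),
          (β j : ℝ) * PP w β := by
  rw [mul_sum, mul_sum]
  calc ∑ α ∈ (Finset.Nat.antidiagonalTuple n m).filter (fun α => α i = a), (a:ℝ) * PP w α
      ≤ ∑ α ∈ (Finset.Nat.antidiagonalTuple n m).filter (fun α => α i = a),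
          δ⁻¹ * ((mv i j a α j : ℕ) : ℝ) * PP w (mv i j a α) := by
        refine Finset.sum_le_sum fun α hα => ?_
        rw [Finset.mem_filter, Finset.Nat.mem_antidiagonalTuple] at hα
        exact key_pt hij δ hδ0 w hw hstep ha α hα.1 hα.2
    _ = ∑ β ∈ (Finset.Nat.antidiagonalTuple n m).filter (fun β => β i = a - 1 ∧ 1 ≤ β j),
          δ⁻¹ * ((β j : ℕ) : ℝ) * PP w β := by
        refine Finset.sum_nbij' (mv i j a) (bk i j a) ?_ ?_ ?_ ?_ ?_
        · intro α hα
          rw [Finset.mem_filter, Finset.Nat.mem_antidiagonalTuple] at hα ⊢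
          refine ⟨mv_sum hij ha α hα.1 hα.2, mv_i a α, ?_⟩
          rw [mv_j hij]; omega
        · intro β hβ
          rw [Finset.mem_filter, Finset.Nat.mem_antidiagonalTuple] at hβ ⊢
          exact ⟨bk_sum hij ha β hβ.1 hβ.2.1 hβ.2.2, bk_i a β⟩
        · intro α hα
          rw [Finset.mem_filter] at hα
          exact bk_mv hij α hα.2
        · intro β hβ
          rw [Finset.mem_filter] at hβ
          exact mv_bk hij β hβ.2.1 hβ.2.2
        · intro α hα; rfl
    _ ≤ ∑ β ∈ (Finset.Nat.antidiagonalTuple n m).filter (fun β => β i = a - 1),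
          δ⁻¹ * ((β j : ℕ) : ℝ) * PP w β := by
        refine Finset.sum_le_sum_of_subset_of_nonneg ?_ ?_
        · intro β hβ
          rw [Finset.mem_filter] at hβ ⊢
          exact ⟨hβ.1, hβ.2.1⟩
        · intro β hβ _
          have := PP_nonneg hw β
          positivity
    _ = ∑ β ∈ (Finset.Nat.antidiagonalTuple n m).filter (fun β => β i = a - 1),
          δ⁻¹ * ((β j : ℝ) * PP w β) := by
        refine Finset.sum_congr rfl fun β hβ => by ring

lemma step_rec (hn : 2 ≤ n) (δ : ℝ) (hδ0 : 0 < δ)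
    (w : (Fin n → ℕ) → ℝ) (hw : ∀ α, 0 ≤ w α)
    (hstep : ∀ α β : Fin n → ℕ, (∑ k, α k = m) → (∑ k, β k = m) →
        (∑ k, ((α k : ℤ) - β k).natAbs) = 2 → w α ≤ δ⁻¹ * w β)
    (i : Fin n) (ha : 1 ≤ a) :
    ((n:ℝ) - 1) * ((a:ℝ) *
        ∑ α ∈ (Finset.Nat.antidiagonalTuple n m).filter (fun α => α i = a), PP w α)
      ≤ δ⁻¹ * m *
        ∑ α ∈ (Finset.Nat.antidiagonalTuple n m).filter (fun α => α i = a - 1), PP w α := by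
  set D := Finset.Nat.antidiagonalTuple n m with hD
  set S1 := ∑ α ∈ D.filter (fun α => α i = a), PP w α with hS1
  set S0 := ∑ α ∈ D.filter (fun α => α i = a - 1), PP w α with hS0
  have hcard : ((Finset.univ.erase i).card : ℝ) = (n:ℝ) - 1 := by
    rw [Finset.card_erase_of_mem (Finset.mem_univ i), Finset.card_univ, Fintype.card_fin,
      Nat.cast_sub (by omega : 1 ≤ n)]
    norm_num
  have h1 : ((n:ℝ)-1) * ((a:ℝ) * S1) = ∑ _j ∈ Finset.univ.erase i, ((a:ℝ) * S1) := by
    rw [Finset.sum_const, nsmul_eq_mul, hcard]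
  rw [h1]
  calc ∑ _j ∈ Finset.univ.erase i, ((a:ℝ) * S1)
      ≤ ∑ j ∈ Finset.univ.erase i,
          δ⁻¹ * ∑ β ∈ D.filter (fun β => β i = a - 1), (β j : ℝ) * PP w β := by
        refine Finset.sum_le_sum fun j hj => ?_
        exact step_j (Finset.mem_erase.mp hj).1 δ hδ0 w hw hstep ha
    _ = δ⁻¹ * ∑ β ∈ D.filter (fun β => β i = a - 1),
          (∑ j ∈ Finset.univ.erase i, (β j : ℝ)) * PP w β := by
        rw [← Finset.mul_sum]
        congr 1
        rw [Finset.sum_comm]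
        exact Finset.sum_congr rfl fun β _ => by rw [Finset.sum_mul]
    _ ≤ δ⁻¹ * ∑ β ∈ D.filter (fun β => β i = a - 1), (m:ℝ) * PP w β := by
        refine mul_le_mul_of_nonneg_left (Finset.sum_le_sum fun β hβ => ?_)
          (by positivity)
        refine mul_le_mul_of_nonneg_right ?_ (PP_nonneg hw β)
        rw [Finset.mem_filter, hD, Finset.Nat.mem_antidiagonalTuple] at hβ
        have : ∑ j ∈ Finset.univ.erase i, β j ≤ m := by
          rw [← hβ.1]
          exact Finset.sum_le_sum_of_subset (Finset.subset_univ _)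
        rw [← Nat.cast_sum]
        exact_mod_cast this
    _ = δ⁻¹ * m * S0 := by rw [← Finset.mul_sum, hS0]; ring

lemma S_le (hn : 2 ≤ n) (δ : ℝ) (hδ0 : 0 < δ)
    (w : (Fin n → ℕ) → ℝ) (hw : ∀ α, 0 ≤ w α)
    (hprob : ∑ α ∈ Finset.Nat.antidiagonalTuple n m, PP w α = 1)
    (hstep : ∀ α β : Fin n → ℕ, (∑ k, α k = m) → (∑ k, β k = m) →
        (∑ k, ((α k : ℤ) - β k).natAbs) = 2 → w α ≤ δ⁻¹ * w β)
    (i : Fin n) (a : ℕ) :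
    ∑ α ∈ (Finset.Nat.antidiagonalTuple n m).filter (fun α => α i = a), PP w α
      ≤ (δ⁻¹ * m / ((n:ℝ) - 1))^a / (a.factorial : ℝ) := by
  induction a with
  | zero =>
    simp only [pow_zero, Nat.factorial_zero, Nat.cast_one, div_one]
    rw [← hprob]
    exact Finset.sum_le_sum_of_subset_of_nonneg (Finset.filter_subset _ _)
      (fun α _ _ => PP_nonneg hw α)
  | succ a ih =>
    have hn1 : (0:ℝ) < (n:ℝ) - 1 := by
      have : (2:ℝ) ≤ (n:ℝ) := by exact_mod_cast hn
      linarith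
    have ha1 : (0:ℝ) < (a:ℝ) + 1 := by positivity
    have hrec := step_rec hn δ hδ0 w hw hstep i (Nat.le_add_left 1 a)
    simp only [Nat.add_sub_cancel] at hrec
    have hS1 := Finset.sum_nonneg
      (fun α (_ : α ∈ (Finset.Nat.antidiagonalTuple n m).filter (fun α => α i = a + 1)) =>
        PP_nonneg hw α)
    have hstep2 : ((n:ℝ) - 1) * (((a:ℝ)+1) *
        ∑ α ∈ (Finset.Nat.antidiagonalTuple n m).filter (fun α => α i = a + 1), PP w α)
        ≤ δ⁻¹ * m * ((δ⁻¹ * m / ((n:ℝ) - 1))^a / (a.factorial : ℝ)) := by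
      refine le_trans ?_ (mul_le_mul_of_nonneg_left ih (by positivity))
      convert hrec using 3
      case e'_2 => rfl
      case e'_3 => norm_cast
    have hfac : (0:ℝ) < (a.factorial : ℝ) := by exact_mod_cast a.factorial_pos
    have h3 : ∑ α ∈ (Finset.Nat.antidiagonalTuple n m).filter (fun α => α i = a + 1), PP w α
        ≤ δ⁻¹ * m * ((δ⁻¹ * m / ((n:ℝ) - 1))^a / (a.factorial : ℝ))
          / (((n:ℝ) - 1) * ((a:ℝ) + 1)) := by
      rw [le_div_iff₀ (by positivity)]
      linear_combination hstep2
    refine h3.trans (le_of_eq ?_)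
    rw [Nat.factorial_succ, pow_succ]
    push_cast
    field_simp

/-- tail of coordinate i, partitioned by its value -/
lemma tail_partition (w : (Fin n → ℕ) → ℝ) (hw : ∀ α, 0 ≤ w α) (i : Fin n) (t : ℕ)
    (F : ℕ → ℝ) (hF : ∀ a, 0 ≤ F a)
    (hS : ∀ a, ∑ α ∈ (Finset.Nat.antidiagonalTuple n m).filter (fun α => α i = a), PP w α
      ≤ F a) :
    ∑ α ∈ (Finset.Nat.antidiagonalTuple n m).filter (fun α => t ≤ α i), PP w α
      ≤ ∑ a ∈ Finset.Icc t m, F a := by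
  set s := (Finset.Nat.antidiagonalTuple n m).filter (fun α => t ≤ α i) with hs
  have hmaps : ∀ α ∈ s, α i ∈ Finset.Icc t m := by
    intro α hα
    rw [hs, Finset.mem_filter, Finset.Nat.mem_antidiagonalTuple] at hα
    rw [Finset.mem_Icc]
    refine ⟨hα.2, ?_⟩
    rw [← hα.1]
    exact Finset.single_le_sum (fun k _ => Nat.zero_le _) (Finset.mem_univ i)
  rw [← Finset.sum_fiberwise_of_maps_to hmaps (PP w)]
  refine Finset.sum_le_sum fun a _ => ?_
  refine le_trans ?_ (hS a)
  refine Finset.sum_le_sum_of_subset_of_nonneg ?_ (fun α _ _ => PP_nonneg hw α)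
  intro α hα
  rw [Finset.mem_filter] at hα ⊢
  rw [hs, Finset.mem_filter] at hα
  exact ⟨hα.1.1, hα.2⟩

/-- geometric-type bound on the upper tail of the C^a/a! series -/
lemma series_tail (C : ℝ) (hC : 0 < C) (t M : ℕ) (ht : 1 ≤ t)
    (hr : (5:ℝ) * C ≤ t) :
    ∑ a ∈ Finset.Icc t M, C^a / (a.factorial : ℝ)
      ≤ (5/4) * C^t / (t.factorial : ℝ) := by
  have ht0 : (0:ℝ) < t := by exact_mod_cast ht
  have hrle : C / t ≤ 1/5 := by rw [div_le_div_iff₀ ht0 (by norm_num)]; linarith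
  have hterm : ∀ k : ℕ, C^(t+k) / ((t+k).factorial : ℝ)
      ≤ C^t / (t.factorial : ℝ) * (1/5)^k := by
    intro k
    induction k with
    | zero => simp
    | succ k ih =>
      have h1 : (0:ℝ) < ((t+k+1:ℕ):ℝ) := by positivity
      have h2 : C / ((t+k+1:ℕ):ℝ) ≤ 1/5 := by
        refine le_trans ?_ hrle
        rw [div_le_div_iff₀ h1 ht0]
        have : (t:ℝ) ≤ ((t+k+1:ℕ):ℝ) := by push_cast; linarith
        nlinarith
      have hfac : ((t+k+1).factorial : ℝ) = ((t+k+1:ℕ):ℝ) * ((t+k).factorial : ℝ) := by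
        rw [show t+k+1 = (t+k)+1 from rfl, Nat.factorial_succ]; push_cast; ring
      have hfp : (0:ℝ) < ((t+k).factorial : ℝ) := by
        exact_mod_cast (t+k).factorial_pos
      calc C^(t+(k+1)) / ((t+(k+1)).factorial : ℝ)
          = (C^(t+k) / ((t+k).factorial : ℝ)) * (C / ((t+k+1:ℕ):ℝ)) := by
            rw [show t+(k+1) = (t+k)+1 from rfl, pow_succ, Nat.factorial_succ]
            push_cast
            field_simp
        _ ≤ (C^t / (t.factorial : ℝ) * (1/5)^k) * (1/5) := by
            refine mul_le_mul ih h2 (by positivity) ?_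
            positivity
        _ = C^t / (t.factorial : ℝ) * (1/5)^(k+1) := by ring
  calc ∑ a ∈ Finset.Icc t M, C^a / (a.factorial : ℝ)
      = ∑ k ∈ Finset.range (M + 1 - t), C^(t+k) / ((t+k).factorial : ℝ) := by
        rw [← Finset.Ico_add_one_right_eq_Icc, Finset.sum_Ico_eq_sum_range]
    _ ≤ ∑ k ∈ Finset.range (M + 1 - t), C^t / (t.factorial : ℝ) * (1/5)^k :=
        Finset.sum_le_sum fun k _ => hterm k
    _ = C^t / (t.factorial : ℝ) * ∑ k ∈ Finset.range (M + 1 - t), (1/5:ℝ)^k := by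
        rw [Finset.mul_sum]
    _ ≤ (5/4) * C^t / (t.factorial : ℝ) := by
        have hgeom : ∑ k ∈ Finset.range (M + 1 - t), (1/5:ℝ)^k ≤ 5/4 := by
          have hg := geom_sum_eq (by norm_num : (1/5:ℝ) ≠ 1) (M + 1 - t)
          rw [hg]
          have hp : (0:ℝ) ≤ (1/5:ℝ)^(M+1-t) := by positivity
          rw [div_le_iff_of_neg (by norm_num : (1/5:ℝ) - 1 < 0)]
          nlinarith
        have hpos : (0:ℝ) ≤ C^t / (t.factorial : ℝ) := by positivity
        calc C^t / (t.factorial : ℝ) * ∑ k ∈ Finset.range (M + 1 - t), (1/5:ℝ)^k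
            ≤ C^t / (t.factorial : ℝ) * (5/4) := mul_le_mul_of_nonneg_left hgeom hpos
          _ = (5/4) * C^t / (t.factorial : ℝ) := by ring

/-- `e (k/e)^k ≤ k!` for `k ≥ 1` -/
lemma fact_lb (k : ℕ) (hk : 1 ≤ k) :
    Real.exp 1 * ((k:ℝ)/Real.exp 1)^k ≤ (k.factorial : ℝ) := by
  induction k with
  | zero => omega
  | succ k ih =>
    rcases Nat.lt_or_ge k 1 with h1 | h2
    · interval_cases k
      have he : (0:ℝ) < Real.exp 1 := Real.exp_pos 1
      have : Real.exp 1 * (((0+1:ℕ):ℝ)/Real.exp 1)^(0+1) = 1 := by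
        push_cast
        rw [pow_one, mul_one_div, div_self he.ne']
      rw [this]
      norm_num [Nat.factorial]
    · have ihk := ih h2
      have hk0 : (0:ℝ) < (k:ℝ) := by exact_mod_cast h2
      have he : (0:ℝ) < Real.exp 1 := Real.exp_pos 1
      have h3 : (((k:ℝ)+1)/k)^k ≤ Real.exp 1 := by
        have heq : ((k:ℝ)+1)/k = 1/(k:ℝ) + 1 := by field_simp; ring
        rw [heq]
        calc ((1:ℝ)/(k:ℝ) + 1)^k ≤ (Real.exp (1/(k:ℝ)))^k := by
              refine pow_le_pow_left₀ (by positivity) (Real.add_one_le_exp _) k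
          _ = Real.exp 1 := by
              rw [← Real.exp_nat_mul]
              congr 1
              field_simp
      have key : Real.exp 1 * (((k:ℝ)+1)/Real.exp 1)^(k+1)
          = ((k:ℝ)+1) * (((k:ℝ)/Real.exp 1)^k * (((k:ℝ)+1)/k)^k) := by
        rw [pow_succ, div_pow, div_pow, div_pow]
        field_simp
      calc Real.exp 1 * (((k+1:ℕ):ℝ)/Real.exp 1)^(k+1)
          = ((k:ℝ)+1) * (((k:ℝ)/Real.exp 1)^k * (((k:ℝ)+1)/k)^k) := by
            rw [← key]; push_cast; ring_nf
        _ ≤ ((k:ℝ)+1) * (((k:ℝ)/Real.exp 1)^k * Real.exp 1) := by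
            refine mul_le_mul_of_nonneg_left ?_ (by positivity)
            exact mul_le_mul_of_nonneg_left h3 (by positivity)
        _ = ((k:ℝ)+1) * (Real.exp 1 * ((k:ℝ)/Real.exp 1)^k) := by ring
        _ ≤ ((k:ℝ)+1) * (k.factorial : ℝ) := mul_le_mul_of_nonneg_left ihk (by positivity)
        _ = ((k+1).factorial : ℝ) := by rw [Nat.factorial_succ]; push_cast; ring

lemma log_ge_one_sub_inv {x : ℝ} (hx : 0 < x) : 1 - 1/x ≤ Real.log x := by
  have h := Real.log_le_sub_one_of_pos (show (0:ℝ) < 1/x by positivity)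
  rw [one_div, Real.log_inv] at h
  have : 1/x = x⁻¹ := one_div x
  linarith [h, this ▸ h]

lemma log3_lb : (1.0952:ℝ) ≤ Real.log 3 := by
  have h8 : Real.log 8 = 3 * Real.log 2 := by
    rw [show (8:ℝ) = 2^3 by norm_num, Real.log_pow]; push_cast; ring
  have h9 : Real.log 9 = 2 * Real.log 3 := by
    rw [show (9:ℝ) = 3^2 by norm_num, Real.log_pow]; push_cast; ring
  have h98 : Real.log 9 = Real.log 8 + Real.log (9/8) := by
    rw [← Real.log_mul (by norm_num) (by norm_num)]; norm_num
  have h98b : (1:ℝ) - 1/(9/8) ≤ Real.log (9/8) := log_ge_one_sub_inv (by norm_num)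
  have hl2 := Real.log_two_gt_d9
  nlinarith

lemma log3_ub : Real.log 3 ≤ (1.1023:ℝ) := by
  have h8 : Real.log 8 = 3 * Real.log 2 := by
    rw [show (8:ℝ) = 2^3 by norm_num, Real.log_pow]; push_cast; ring
  have h9 : Real.log 9 = 2 * Real.log 3 := by
    rw [show (9:ℝ) = 3^2 by norm_num, Real.log_pow]; push_cast; ring
  have h98 : Real.log 9 = Real.log 8 + Real.log (9/8) := by
    rw [← Real.log_mul (by norm_num) (by norm_num)]; norm_num
  have h98b : Real.log (9/8) ≤ 9/8 - 1 := Real.log_le_sub_one_of_pos (by norm_num)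
  have hl2 := Real.log_two_lt_d9
  nlinarith

set_option maxHeartbeats 1000000 in
lemma Phi_nonneg (n : ℕ) (hn : 3 ≤ n) :
    0 ≤ Real.log (Real.log n) - 3 * Real.log (Real.log (Real.log n)) - 3 + 3 * Real.log 3
      + 3 * (Real.log ((n:ℝ)-1) - Real.log n)
      + (3/4) * (Real.log (Real.log n) / Real.log n) := by
  have hn3 : (3:ℝ) ≤ (n:ℝ) := by exact_mod_cast hn
  have hnpos : (0:ℝ) < n := by linarith
  have hn1pos : (0:ℝ) < (n:ℝ) - 1 := by linarith
  set L := Real.log n with hLdef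
  set lam := Real.log L with hlamdef
  have hL3 : Real.log 3 ≤ L := Real.log_le_log (by norm_num) hn3
  have hLpos : (1:ℝ) < L := by have := log3_lb; linarith
  have hlampos : 0 < lam := Real.log_pos hLpos
  -- bound on the a1 := log(n-1) - log n term
  have ha1 : Real.log ((n:ℝ)-1) - Real.log n = - Real.log ((n:ℝ)/((n:ℝ)-1)) := by
    rw [Real.log_div (by linarith) (by linarith)]; ring
  have ha1b : Real.log ((n:ℝ)/((n:ℝ)-1)) ≤ 1/((n:ℝ)-1) := by
    have h := Real.log_le_sub_one_of_pos (show (0:ℝ) < (n:ℝ)/((n:ℝ)-1) by positivity)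
    have : (n:ℝ)/((n:ℝ)-1) - 1 = 1/((n:ℝ)-1) := by field_simp; ring
    linarith
  have hlam_ub : lam ≤ L - 1 := by
    have := Real.log_le_sub_one_of_pos (show (0:ℝ) < L by linarith)
    exact this
  have hloglam_lb : 1 - lam ≤ - Real.log lam := by
    have := log_ge_one_sub_inv hlampos
    have h2 := Real.log_le_sub_one_of_pos hlampos
    -- -log lam = log (1/lam) ≥ 1 - lam
    have h3 : Real.log lam ≤ lam - 1 := h2
    -- need: log lam ≤ lam - 1 gives -log lam ≥ 1 - lam
    linarith
  have hl2l := Real.log_two_gt_d9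
  have hl2u := Real.log_two_lt_d9
  have hlog8 : Real.log 8 = 3 * Real.log 2 := by
    rw [show (8:ℝ) = 2^3 by norm_num, Real.log_pow]; push_cast; ring
  have hlog16 : Real.log 16 = 4 * Real.log 2 := by
    rw [show (16:ℝ) = 2^4 by norm_num, Real.log_pow]; push_cast; ring
  have h3l := log3_lb
  have h3u := log3_ub
  rcases lt_or_ge n 5 with h5 | h5
  · -- n = 3 or 4 : lam ≤ log 4 - 1 ≤ 0.3863, a1 ≥ -1/2
    have hn4 : (n:ℝ) ≤ 4 := by exact_mod_cast (by omega : n ≤ 4)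
    have hL4 : L ≤ Real.log 4 := Real.log_le_log hnpos hn4
    have hlog4 : Real.log 4 = 2 * Real.log 2 := by
      rw [show (4:ℝ) = 2^2 by norm_num, Real.log_pow]; push_cast; ring
    have hlamu : lam ≤ 0.3863 := by
      have : L - 1 ≤ 0.3863 := by rw [hlog4] at hL4; nlinarith
      linarith
    have ha1c : -(1/2:ℝ) ≤ Real.log ((n:ℝ)-1) - Real.log n := by
      rw [ha1]
      have : 1/((n:ℝ)-1) ≤ 1/2 := by
        rw [div_le_div_iff₀ hn1pos (by norm_num)]; linarith
      linarith
    have hpos : 0 ≤ (3/4) * (lam / L) := by positivity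
    linarith [hloglam_lb]
  rcases lt_or_ge n 9 with h9 | h9
  · -- 5 ≤ n ≤ 8 : lam ≤ log 8 - 1 ≤ 1.0795, a1 ≥ -1/4
    have hn8 : (n:ℝ) ≤ 8 := by exact_mod_cast (by omega : n ≤ 8)
    have hL8 : L ≤ Real.log 8 := Real.log_le_log hnpos hn8
    have hlamu : lam ≤ 1.0795 := by
      have : L - 1 ≤ 1.0795 := by rw [hlog8] at hL8; nlinarith
      linarith
    have ha1c : -(1/4:ℝ) ≤ Real.log ((n:ℝ)-1) - Real.log n := by
      rw [ha1]
      have hn5 : (5:ℝ) ≤ (n:ℝ) := by exact_mod_cast h5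
      have : 1/((n:ℝ)-1) ≤ 1/4 := by
        rw [div_le_div_iff₀ hn1pos (by norm_num)]; linarith
      linarith
    have hpos : 0 ≤ (3/4) * (lam / L) := by positivity
    linarith [hloglam_lb]
  rcases lt_or_ge n 16 with h16 | h16
  · -- 9 ≤ n ≤ 15 : lam ∈ [0.78, 1.02], log lam ≤ 0.02, a1 ≥ -3/8
    have hn15 : (n:ℝ) ≤ 16 := by exact_mod_cast (by omega : n ≤ 16)
    have hL16 : L ≤ Real.log 16 := Real.log_le_log hnpos hn15
    have hLu : L ≤ 2.7725888 := by rw [hlog16] at hL16; nlinarith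
    have hlamu : lam ≤ 1.02 := by
      rw [hlamdef, Real.log_le_iff_le_exp (by linarith)]
      have he := Real.exp_one_gt_d9
      have : Real.exp 1.02 = Real.exp 1 * Real.exp 0.02 := by
        rw [← Real.exp_add]; norm_num
      have h02 : (1.02:ℝ) ≤ Real.exp 0.02 := by
        have := Real.add_one_le_exp (0.02:ℝ); linarith
      have hexp1 : (0:ℝ) < Real.exp 1 := Real.exp_pos 1
      nlinarith
    have hloglamu : Real.log lam ≤ 0.02 := by
      have h := Real.log_le_sub_one_of_pos hlampos
      calc Real.log lam ≤ Real.log 1.02 := Real.log_le_log hlampos hlamu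
        _ ≤ 1.02 - 1 := Real.log_le_sub_one_of_pos (by norm_num)
        _ = 0.02 := by norm_num
    have hlog9 : (2.1905:ℝ) ≤ Real.log 9 := by
      have h9 : Real.log 9 = Real.log 8 + Real.log (9/8) := by
        rw [← Real.log_mul (by norm_num) (by norm_num)]; norm_num
      have h98 := log_ge_one_sub_inv (show (0:ℝ) < 9/8 by norm_num)
      norm_num at h98
      rw [h9, hlog8]; linarith
    have hLl : (2.1905:ℝ) ≤ L := by
      have hn9 : (9:ℝ) ≤ (n:ℝ) := by exact_mod_cast h9
      calc (2.1905:ℝ) ≤ Real.log 9 := hlog9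
        _ ≤ L := Real.log_le_log (by norm_num) hn9
    have hlaml : (0.78:ℝ) ≤ lam := by
      have h1 : Real.log 2.1905 ≤ lam := Real.log_le_log (by norm_num) hLl
      have h2 : Real.log 2.1905 = Real.log 2 + Real.log 1.09525 := by
        rw [← Real.log_mul (by norm_num) (by norm_num)]; norm_num
      have h3 := log_ge_one_sub_inv (show (0:ℝ) < 1.09525 by norm_num)
      norm_num at h3
      linarith
    have ha1c : -(3/8:ℝ) ≤ Real.log ((n:ℝ)-1) - Real.log n := by
      rw [ha1]
      have hn9 : (9:ℝ) ≤ (n:ℝ) := by exact_mod_cast h9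
      have : 1/((n:ℝ)-1) ≤ 1/8 := by
        rw [div_le_div_iff₀ hn1pos (by norm_num)]; linarith
      linarith
    have hpos : 0 ≤ (3/4) * (lam / L) := by positivity
    linarith
  · -- 16 ≤ n : main regime
    have hn16 : (16:ℝ) ≤ (n:ℝ) := by exact_mod_cast h16
    have hL16 : Real.log 16 ≤ L := Real.log_le_log (by norm_num) hn16
    have hLl : (2.7725887:ℝ) ≤ L := by rw [hlog16] at hL16; nlinarith
    have hlam1 : (1:ℝ) ≤ lam := by
      have he := Real.exp_one_lt_d9
      have h1 : Real.log (Real.exp 1) ≤ lam :=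
        Real.log_le_log (Real.exp_pos 1) (by linarith)
      rw [Real.log_exp] at h1
      exact h1
    -- part 1 : lam - 3 log lam - 3 + 3 log 3 ≥ 0
    have hp1 : 0 ≤ lam - 3 * Real.log lam - 3 + 3 * Real.log 3 := by
      have h := Real.log_le_sub_one_of_pos (show (0:ℝ) < lam/3 by linarith)
      rw [Real.log_div (by linarith) (by norm_num)] at h
      linarith
    -- part 2 : 3 a1 + (3/4) lam / L ≥ 0
    have hexp : 16 * (1 + (L - Real.log 16)) ≤ (n:ℝ) := by
      have h1 : (n:ℝ) = Real.exp L := (Real.exp_log hnpos).symm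
      have h2 : Real.exp L = 16 * Real.exp (L - Real.log 16) := by
        rw [show L = Real.log 16 + (L - Real.log 16) by ring, Real.exp_add,
          Real.exp_log (show (0:ℝ) < 16 by norm_num)]
        ring_nf
      have h3 := Real.add_one_le_exp (L - Real.log 16)
      rw [h1, h2]
      nlinarith [Real.exp_pos (L - Real.log 16)]
    have hn1b : 4 * L ≤ (n:ℝ) - 1 := by
      rw [hlog16] at hexp
      nlinarith
    have hp2 : 0 ≤ 3 * (Real.log ((n:ℝ)-1) - Real.log n) + (3/4) * (lam / L) := by
      rw [ha1]
      have hb : Real.log ((n:ℝ)/((n:ℝ)-1)) ≤ 1/(4*L) := by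
        refine ha1b.trans ?_
        rw [div_le_div_iff₀ hn1pos (by positivity)]
        linarith
      have hc : 3/(4*L) ≤ (3/4) * (lam / L) := by
        rw [div_le_iff₀ (by positivity)]
        have heq : (3/4) * (lam / L) * (4 * L) = 3 * lam := by
          field_simp
        rw [heq]
        linarith
      have : 3 * Real.log ((n:ℝ)/((n:ℝ)-1)) ≤ 3/(4*L) := by
        calc 3 * Real.log ((n:ℝ)/((n:ℝ)-1)) ≤ 3 * (1/(4*L)) := by linarith
          _ = 3/(4*L) := by ring
      linarith
    linarith

set_option maxHeartbeats 1600000 in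
lemma partB (n m t0 : ℕ) (hn : 3 ≤ n) (hm : 1 ≤ m) (δ : ℝ) (hδ0 : 0 < δ)
    (hmn : δ * n ≤ (m:ℝ))
    (ht0 : 3 * (m:ℝ) * Real.log n / (δ * (n:ℝ) * Real.log (Real.log n)) ≤ (t0:ℝ)) :
    (5:ℝ) * (δ⁻¹ * (m:ℝ) / ((n:ℝ)-1)) ≤ (t0:ℝ) ∧ 1 ≤ t0 ∧
    (n:ℝ) * ((5/4) * (δ⁻¹ * (m:ℝ) / ((n:ℝ)-1))^t0 / (t0.factorial : ℝ)) ≤ 1 / (n:ℝ) := by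
  have hn3 : (3:ℝ) ≤ (n:ℝ) := by exact_mod_cast hn
  have hnpos : (0:ℝ) < n := by linarith
  have hn1pos : (0:ℝ) < (n:ℝ) - 1 := by linarith
  have hmpos : (0:ℝ) < (m:ℝ) := by exact_mod_cast hm
  set L := Real.log n with hLdef
  set lam := Real.log L with hlamdef
  have hL1 : (1:ℝ) < L := by
    have h1 : Real.log 3 ≤ L := Real.log_le_log (by norm_num) hn3
    have := log3_lb; linarith
  have hLpos : (0:ℝ) < L := by linarith
  have hlampos : (0:ℝ) < lam := Real.log_pos hL1
  have he_pos : (0:ℝ) < Real.exp 1 := Real.exp_pos 1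
  have he_l := Real.exp_one_gt_d9
  have hLlam : Real.exp 1 * lam ≤ L := by
    have h := Real.log_le_sub_one_of_pos (show (0:ℝ) < L / Real.exp 1 by positivity)
    rw [Real.log_div (by linarith) he_pos.ne', Real.log_exp] at h
    have h2 : lam - 1 ≤ L / Real.exp 1 - 1 := by rw [hlamdef]; linarith
    have h3 : lam ≤ L / Real.exp 1 := by linarith
    calc Real.exp 1 * lam ≤ Real.exp 1 * (L / Real.exp 1) :=
          mul_le_mul_of_nonneg_left h3 he_pos.le
      _ = L := by field_simp
  set C := δ⁻¹ * (m:ℝ) / ((n:ℝ)-1) with hCdef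
  have hCpos : 0 < C := by rw [hCdef]; positivity
  set T := 3 * (m:ℝ) * L / (δ * (n:ℝ) * lam) with hTdef
  have hTpos : 0 < T := by rw [hTdef]; positivity
  -- 5C ≤ T
  have hq : 5 * ((n:ℝ) * lam) ≤ 3 * L * ((n:ℝ)-1) := by
    have h1 : 2 * (n:ℝ) ≤ 3 * ((n:ℝ) - 1) := by linarith
    have c0 : (5:ℝ) ≤ 2 * Real.exp 1 := by linarith
    have c1 : 5 * ((n:ℝ)*lam) ≤ 2*Real.exp 1 * ((n:ℝ)*lam) :=
      mul_le_mul_of_nonneg_right c0 (mul_pos hnpos hlampos).le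
    have c2 : 2*Real.exp 1 * ((n:ℝ)*lam) = (Real.exp 1 * lam) * (2*(n:ℝ)) := by ring
    have c3 : (Real.exp 1 * lam) * (2*(n:ℝ)) ≤ L * (2*(n:ℝ)) :=
      mul_le_mul_of_nonneg_right hLlam (by linarith)
    have c4 : L * (2*(n:ℝ)) ≤ L * (3*((n:ℝ)-1)) :=
      mul_le_mul_of_nonneg_left h1 hLpos.le
    have c5 : L * (3*((n:ℝ)-1)) = 3 * L * ((n:ℝ)-1) := by ring
    linarith
  have h5CT : 5 * C ≤ T := by
    rw [hCdef, hTdef, show 5 * (δ⁻¹ * (m:ℝ) / ((n:ℝ)-1)) = (5 * (δ⁻¹ * (m:ℝ))) / ((n:ℝ)-1)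
      from by ring, div_le_div_iff₀ (by linarith) (by positivity)]
    have e1 : 5 * (δ⁻¹ * (m:ℝ)) * (δ * (n:ℝ) * lam) = (m:ℝ) * (5 * ((n:ℝ) * lam)) := by
      field_simp
    have e2 : 3 * (m:ℝ) * L * ((n:ℝ)-1) = (m:ℝ) * (3 * L * ((n:ℝ)-1)) := by ring
    rw [e1, e2]
    exact mul_le_mul_of_nonneg_left hq hmpos.le
  have hTt0 : T ≤ (t0:ℝ) := ht0
  have h5Ct0 : 5 * C ≤ (t0:ℝ) := le_trans h5CT hTt0
  have ht01 : 1 ≤ t0 := by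
    by_contra h
    push_neg at h
    interval_cases t0
    · simp at h5Ct0; nlinarith
  refine ⟨h5Ct0, ht01, ?_⟩
  have htpos : (0:ℝ) < (t0:ℝ) := by
    have : (1:ℝ) ≤ (t0:ℝ) := by exact_mod_cast ht01
    linarith
  -- R and its log
  set R := 3 * L * ((n:ℝ)-1) / (Real.exp 1 * (n:ℝ) * lam) with hRdef
  have hRpos : 0 < R := by rw [hRdef]; positivity
  have hTeq : T = Real.exp 1 * C * R := by
    rw [hTdef, hCdef, hRdef]
    field_simp
  have hlogT : Real.log T = 1 + Real.log C + Real.log R := by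
    rw [hTeq, Real.log_mul (by positivity) hRpos.ne', Real.log_mul he_pos.ne' hCpos.ne',
      Real.log_exp]
  have hlogRexpand : Real.log R = Real.log 3 + lam - Real.log lam - 1
      + (Real.log ((n:ℝ)-1) - Real.log n) := by
    rw [hRdef, Real.log_div (by positivity) (by positivity),
      Real.log_mul (by positivity) hn1pos.ne',
      Real.log_mul (by norm_num) hLpos.ne',
      Real.log_mul (by positivity) hlampos.ne',
      Real.log_mul he_pos.ne' hnpos.ne', Real.log_exp]
    ring
  have hlogR0 : 0 ≤ Real.log R := by
    refine Real.log_nonneg ?_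
    rw [hRdef, le_div_iff₀ (by positivity)]
    have d2 : (Real.exp 1 * lam) * (n:ℝ) ≤ L * (n:ℝ) :=
      mul_le_mul_of_nonneg_right hLlam hnpos.le
    have d3 : L * (n:ℝ) ≤ L * (3*((n:ℝ)-1)) :=
      mul_le_mul_of_nonneg_left (by linarith) hLpos.le
    nlinarith
  -- T ≥ 3L/lam
  have hT3 : 3 * (L / lam) ≤ T := by
    rw [hTdef, show 3 * (L/lam) = (3*L)/lam from by ring,
      div_le_div_iff₀ hlampos (by positivity)]
    have hx := mul_le_mul_of_nonneg_left hmn (by positivity : (0:ℝ) ≤ 3*L*lam)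
    linear_combination hx
  -- Phi gives : 3 (L/lam) log R ≥ 2L - 3/4
  have hPhi := Phi_nonneg n hn
  have hkey2 : 2 * L - 3/4 ≤ 3 * (L/lam) * Real.log R := by
    have hfac : 0 ≤ L / lam := by positivity
    have hmul := mul_nonneg hfac hPhi
    have heq : (L/lam) * (lam - 3 * Real.log lam - 3 + 3 * Real.log 3
        + 3 * (Real.log ((n:ℝ)-1) - Real.log n) + (3/4) * (lam / L))
        = 3 * (L/lam) * Real.log R - 2*L + 3/4 := by
      rw [hlogRexpand]
      field_simp
      ring
    rw [← hLdef, ← hlamdef] at hmul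
    rw [heq] at hmul
    linarith
  have hTlogR : 2 * L - 3/4 ≤ T * Real.log R := by
    have h1 : 3 * (L/lam) * Real.log R ≤ T * Real.log R :=
      mul_le_mul_of_nonneg_right (by linarith) hlogR0
    linarith
  -- main log inequality
  have hlogt : Real.log T ≤ Real.log (t0:ℝ) := Real.log_le_log hTpos hTt0
  have hmain : 2 * L + Real.log (5/4) - 1 ≤ (t0:ℝ) * (Real.log (t0:ℝ) - 1 - Real.log C) := by
    have h1 : Real.log R ≤ Real.log (t0:ℝ) - 1 - Real.log C := by
      rw [hlogT] at hlogt; linarith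
    have h2 : T * Real.log R ≤ (t0:ℝ) * Real.log R :=
      mul_le_mul_of_nonneg_right hTt0 hlogR0
    have h3 : (t0:ℝ) * Real.log R ≤ (t0:ℝ) * (Real.log (t0:ℝ) - 1 - Real.log C) :=
      mul_le_mul_of_nonneg_left h1 htpos.le
    have h54 : Real.log (5/4) ≤ 1/4 := by
      have := Real.log_le_sub_one_of_pos (show (0:ℝ) < 5/4 by norm_num)
      linarith
    linarith
  -- convert to multiplicative
  have hfaclb := fact_lb t0 ht01
  have hfacpos : (0:ℝ) < (t0.factorial : ℝ) := by exact_mod_cast t0.factorial_pos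
  have e1 : (5/4:ℝ) * (n:ℝ)^2 * C^t0
      = Real.exp (Real.log (5/4) + 2*L + (t0:ℝ) * Real.log C) := by
    rw [Real.exp_add, Real.exp_add, Real.exp_log (show (0:ℝ) < 5/4 by norm_num),
      show (2:ℝ)*L = L + L by ring, Real.exp_add, Real.exp_log hnpos,
      Real.exp_nat_mul, Real.exp_log hCpos]
    ring
  have e2 : Real.exp 1 * ((t0:ℝ)/Real.exp 1)^t0
      = Real.exp (1 + (t0:ℝ) * (Real.log (t0:ℝ) - 1)) := by
    rw [Real.exp_add, Real.exp_nat_mul, Real.exp_sub, Real.exp_log htpos]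
  have hexple : (5/4:ℝ) * (n:ℝ)^2 * C^t0 ≤ Real.exp 1 * ((t0:ℝ)/Real.exp 1)^t0 := by
    rw [e1, e2]
    refine Real.exp_le_exp.mpr ?_
    nlinarith [hmain]
  have hfinal : (5/4:ℝ) * (n:ℝ)^2 * C^t0 ≤ (t0.factorial : ℝ) :=
    le_trans hexple hfaclb
  rw [le_div_iff₀ hnpos]
  calc (n:ℝ) * ((5/4) * C^t0 / (t0.factorial:ℝ)) * (n:ℝ)
      = ((5/4) * (n:ℝ)^2 * C^t0) / (t0.factorial:ℝ) := by ring
    _ ≤ 1 := by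
        rw [div_le_one hfacpos]
        exact hfinal

end LCI

/-- Theorem 1.8: Let `Δ_{m,n}` be the nonnegative integer vectors
summing to `m`, and let `P(α) = w(α)/(α₁!⋯αₙ!)` be a probability measure whose
weights satisfy `w(α) ≤ δ⁻¹ w(β)` whenever `∑|αᵢ - βᵢ| = 2`. If `m ≥ δn`, then
the probability that some coordinate is at least `3m ln n/(δ n ln ln n)` is at
most `1/n`. -/
theorem large_coordinate_improbable (m n : ℕ) (hm : 0 < m) (hn : 3 ≤ n)
    (δ : ℝ) (hδ0 : 0 < δ) (hδ1 : δ ≤ 1)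
    (w : (Fin n → ℕ) → ℝ) (hw : ∀ α, 0 ≤ w α)
    (hprob : ∑ α ∈ Finset.Nat.antidiagonalTuple n m,
        w α / ∏ i, ((α i).factorial : ℝ) = 1)
    (hstep : ∀ α β : Fin n → ℕ, (∑ i, α i = m) → (∑ i, β i = m) →
        (∑ i, ((α i : ℤ) - β i).natAbs) = 2 → w α ≤ δ⁻¹ * w β)
    (hmn : δ * n ≤ (m : ℝ)) :
    ∑ α ∈ (Finset.Nat.antidiagonalTuple n m).filter
        (fun α => 3 * m * Real.log n / (δ * n * Real.log (Real.log n)) ≤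
          ((Finset.univ.sup α : ℕ) : ℝ)),
      w α / ∏ i, ((α i).factorial : ℝ) ≤ 1 / (n : ℝ) := by
  classical
  set D := Finset.Nat.antidiagonalTuple n m with hD
  set T : ℝ := 3 * m * Real.log n / (δ * n * Real.log (Real.log n)) with hTdef
  set t0 : ℕ := ⌈T⌉₊ with ht0def
  have hTt0 : T ≤ (t0:ℝ) := Nat.le_ceil T
  obtain ⟨h5C, ht01, hB⟩ := LCI.partB n m t0 hn hm δ hδ0 hmn hTt0
  set C : ℝ := δ⁻¹ * m / ((n:ℝ)-1) with hC
  have hmR : (0:ℝ) < (m:ℝ) := by exact_mod_cast hm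
  have hn1 : (0:ℝ) < (n:ℝ) - 1 := by
    have : (3:ℝ) ≤ (n:ℝ) := by exact_mod_cast hn
    linarith
  have hCpos : 0 < C := by
    rw [hC]
    exact div_pos (mul_pos (inv_pos.mpr hδ0) hmR) hn1
  have hprob' : ∑ α ∈ D, LCI.PP w α = 1 := hprob
  have hn2 : 2 ≤ n := by omega
  -- tail bound for each coordinate
  have htail : ∀ i : Fin n, ∑ α ∈ D.filter (fun α => t0 ≤ α i), LCI.PP w α
      ≤ (5/4) * C^t0 / (t0.factorial : ℝ) := by
    intro i
    refine le_trans (LCI.tail_partition w hw i t0 (fun a => C^a/(a.factorial:ℝ))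
      (fun a => by positivity) (fun a => LCI.S_le hn2 δ hδ0 w hw hprob' hstep i a)) ?_
    exact LCI.series_tail C hCpos t0 m ht01 h5C
  -- pointwise union bound
  have hsup : ∀ α ∈ D.filter (fun α => T ≤ ((Finset.univ.sup α : ℕ) : ℝ)),
      LCI.PP w α ≤ ∑ i : Fin n, (if t0 ≤ α i then LCI.PP w α else 0) := by
    intro α hα
    rw [Finset.mem_filter] at hα
    have hne : (Finset.univ : Finset (Fin n)).Nonempty :=
      ⟨⟨0, by omega⟩, Finset.mem_univ _⟩
    obtain ⟨i0, -, hi0⟩ := Finset.exists_mem_eq_sup Finset.univ hne α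
    have hcl : t0 ≤ α i0 := by
      rw [← hi0]
      exact Nat.ceil_le.mpr hα.2
    have hnn : ∀ i : Fin n, i ∈ Finset.univ → 0 ≤ (if t0 ≤ α i then LCI.PP w α else 0) := by
      intro i _
      split
      · exact LCI.PP_nonneg hw α
      · exact le_rfl
    calc LCI.PP w α = (if t0 ≤ α i0 then LCI.PP w α else 0) := by rw [if_pos hcl]
      _ ≤ ∑ i : Fin n, (if t0 ≤ α i then LCI.PP w α else 0) :=
          Finset.single_le_sum hnn (Finset.mem_univ i0)
  calc ∑ α ∈ D.filter (fun α => T ≤ ((Finset.univ.sup α : ℕ) : ℝ)),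
        LCI.PP w α
      ≤ ∑ α ∈ D.filter (fun α => T ≤ ((Finset.univ.sup α : ℕ) : ℝ)),
          ∑ i : Fin n, (if t0 ≤ α i then LCI.PP w α else 0) :=
        Finset.sum_le_sum hsup
    _ = ∑ i : Fin n, ∑ α ∈ D.filter (fun α => T ≤ ((Finset.univ.sup α : ℕ) : ℝ)),
          (if t0 ≤ α i then LCI.PP w α else 0) := Finset.sum_comm
    _ ≤ ∑ i : Fin n, ∑ α ∈ D, (if t0 ≤ α i then LCI.PP w α else 0) := by
        refine Finset.sum_le_sum fun i _ => ?_
        refine Finset.sum_le_sum_of_subset_of_nonneg (Finset.filter_subset _ _) ?_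
        intro α _ _
        split
        · exact LCI.PP_nonneg hw α
        · exact le_rfl
    _ = ∑ i : Fin n, ∑ α ∈ D.filter (fun α => t0 ≤ α i), LCI.PP w α := by
        refine Finset.sum_congr rfl fun i _ => ?_
        rw [Finset.sum_filter]
    _ ≤ ∑ _i : Fin n, (5/4) * C^t0 / (t0.factorial : ℝ) :=
        Finset.sum_le_sum fun i _ => htail i
    _ = (n:ℝ) * ((5/4) * C^t0 / (t0.factorial : ℝ)) := by
        rw [Finset.sum_const, Finset.card_univ, Fintype.card_fin, nsmul_eq_mul]
    _ ≤ 1 / (n:ℝ) := hB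
end

section
/- With Δ_{m,n}, w, and δ as in Theorem 1.8, define f(x_1,...,x_n) = Σ_{α ∈ Δ_{m,n}} (w(α)/(α_1!⋯α_n!)) x_1^{α_1}⋯x_n^{α_n} and f_i = ∂f/∂x_i. Then for all 1 ≤ i, j ≤ n and all x_1,...,x_n ≥ 0, f_i(x_1,...,x_n) ≤ δ^{-1} f_j(x_1,...,x_n). -/
open scoped Classical

open Finset

lemma fder_aux (n : ℕ) (A : Finset (Fin n → ℕ)) (c : (Fin n → ℕ) → ℝ)
    (x : Fin n → ℝ) (i : Fin n) :
    fderiv ℝ (fun y : Fin n → ℝ => ∑ α ∈ A, c α * ∏ k, y k ^ α k) x (Pi.single i 1)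
      = ∑ α ∈ A, c α * ((α i : ℝ) * x i ^ (α i - 1) * ∏ l ∈ univ.erase i, x l ^ α l) := by
  have hprod : ∀ α : Fin n → ℕ, HasFDerivAt (fun y : Fin n → ℝ => ∏ k, y k ^ α k)
      (∑ k : Fin n, (∏ l ∈ univ.erase k, x l ^ α l) •
        (((α k : ℝ) * x k ^ (α k - 1)) • (ContinuousLinearMap.proj k : (Fin n → ℝ) →L[ℝ] ℝ))) x := by
    intro α
    refine HasFDerivAt.finset_prod (fun k _ => ?_)
    exact (hasDerivAt_pow (α k) (x k)).comp_hasFDerivAt x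
      ((ContinuousLinearMap.proj k : (Fin n → ℝ) →L[ℝ] ℝ).hasFDerivAt)
  have hsum : HasFDerivAt (fun y : Fin n → ℝ => ∑ α ∈ A, c α * ∏ k, y k ^ α k)
      (∑ α ∈ A, c α • (∑ k : Fin n, (∏ l ∈ univ.erase k, x l ^ α l) •
        (((α k : ℝ) * x k ^ (α k - 1)) • (ContinuousLinearMap.proj k : (Fin n → ℝ) →L[ℝ] ℝ)))) x :=
    HasFDerivAt.fun_sum (fun α _ => (hprod α).const_mul (c α))
  rw [hsum.fderiv]
  simp only [ContinuousLinearMap.coe_sum', Finset.sum_apply, ContinuousLinearMap.coe_smul',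
    Pi.smul_apply, ContinuousLinearMap.proj_apply, smul_eq_mul]
  refine Finset.sum_congr rfl fun α _ => ?_
  rw [Finset.sum_eq_single i]
  · simp [Pi.single_apply]; left; ring
  · intro k _ hk
    simp [Pi.single_apply, hk]
  · simp

lemma reindex_aux (n m : ℕ) (w : (Fin n → ℕ) → ℝ) (x : Fin n → ℝ) (i : Fin n) :
    ∑ α ∈ Finset.Nat.antidiagonalTuple n (m + 1),
      (w α / ∏ k, ((α k).factorial : ℝ)) *
        ((α i : ℝ) * x i ^ (α i - 1) * ∏ l ∈ univ.erase i, x l ^ α l)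
    = ∑ β ∈ Finset.Nat.antidiagonalTuple n m,
      (w (Function.update β i (β i + 1)) / ∏ k, ((β k).factorial : ℝ)) * ∏ k, x k ^ β k := by
  rw [← Finset.sum_filter_of_ne (p := fun α => α i ≠ 0)
    (fun α _ h => by
      intro h0
      apply h
      simp [h0])]
  refine Finset.sum_nbij' (fun α => Function.update α i (α i - 1))
    (fun β => Function.update β i (β i + 1)) ?_ ?_ ?_ ?_ ?_
  · intro α hα
    rw [Finset.mem_filter, Finset.Nat.mem_antidiagonalTuple] at hα
    rw [Finset.Nat.mem_antidiagonalTuple]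
    rw [Finset.sum_update_of_mem (Finset.mem_univ i)]
    rw [← Finset.add_sum_erase _ _ (Finset.mem_univ i), Finset.erase_eq] at hα
    omega
  · intro β hβ
    rw [Finset.Nat.mem_antidiagonalTuple] at hβ
    rw [Finset.mem_filter, Finset.Nat.mem_antidiagonalTuple]
    rw [Finset.sum_update_of_mem (Finset.mem_univ i)]
    rw [← Finset.add_sum_erase _ _ (Finset.mem_univ i), Finset.erase_eq] at hβ
    constructor
    · omega
    · simp
  · intro α hα
    rw [Finset.mem_filter] at hα
    funext k
    rcases eq_or_ne k i with rfl | hk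
    · simp [Function.update_apply]
      omega
    · simp [Function.update_apply, hk]
  · intro β hβ
    funext k
    rcases eq_or_ne k i with rfl | hk
    · simp [Function.update_apply]
    · simp [Function.update_apply, hk]
  · intro α hα
    rw [Finset.mem_filter, Finset.Nat.mem_antidiagonalTuple] at hα
    obtain ⟨-, hαi⟩ := hα
    have hupd : Function.update (Function.update α i (α i - 1)) i
        (Function.update α i (α i - 1) i + 1) = α := by
      funext k
      rcases eq_or_ne k i with rfl | hk
      · simp [Function.update_apply]
        omega
      · simp [Function.update_apply, hk]
    rw [hupd]
    -- split products at i
    have hprodFac : (∏ k, ((α k).factorial : ℝ))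
        = ((α i).factorial : ℝ) * ∏ l ∈ univ.erase i, ((α l).factorial : ℝ) :=
      (Finset.mul_prod_erase univ _ (Finset.mem_univ i)).symm
    have hprodFac' : (∏ k, ((Function.update α i (α i - 1) k).factorial : ℝ))
        = ((α i - 1).factorial : ℝ) *
          ∏ l ∈ univ.erase i, ((α l).factorial : ℝ) := by
      rw [← Finset.mul_prod_erase univ _ (Finset.mem_univ i)]
      congr 1
      · simp
      · refine Finset.prod_congr rfl fun l hl => ?_
        rw [Function.update_apply, if_neg (Finset.ne_of_mem_erase hl)]
    have hprodX : (∏ k, x k ^ Function.update α i (α i - 1) k)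
        = x i ^ (α i - 1) * ∏ l ∈ univ.erase i, x l ^ α l := by
      rw [← Finset.mul_prod_erase univ _ (Finset.mem_univ i)]
      congr 1
      · simp
      · refine Finset.prod_congr rfl fun l hl => ?_
        rw [Function.update_apply, if_neg (Finset.ne_of_mem_erase hl)]
    rw [hprodFac, hprodFac', hprodX]
    have hfac : ((α i).factorial : ℝ) = (α i : ℝ) * ((α i - 1).factorial : ℝ) := by
      rw [← Nat.cast_mul]
      congr 1
      have := Nat.succ_pred_eq_of_pos (Nat.pos_of_ne_zero hαi)
      calc (α i).factorial = (α i - 1 + 1).factorial := by rw [Nat.sub_add_cancel (Nat.one_le_iff_ne_zero.2 hαi)]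
        _ = (α i) * (α i - 1).factorial := by rw [Nat.factorial_succ, Nat.sub_add_cancel (Nat.one_le_iff_ne_zero.2 hαi)]
    rw [hfac]
    have h1 : ((α i - 1).factorial : ℝ) ≠ 0 := Nat.cast_ne_zero.2 (Nat.factorial_ne_zero _)
    have h2 : (∏ l ∈ univ.erase i, ((α l).factorial : ℝ)) ≠ 0 :=
      Finset.prod_ne_zero_iff.2 fun l _ => Nat.cast_ne_zero.2 (Nat.factorial_ne_zero _)
    have h3 : (α i : ℝ) ≠ 0 := Nat.cast_ne_zero.2 hαi
    field_simp

/-- Lemma 3.1: with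
`f(x) = ∑_{α ∈ Δ_{m,n}} (w(α)/(α₁!⋯αₙ!)) x^α` and `f_i = ∂f/∂x_i`, one has
`f_i(x) ≤ δ⁻¹ f_j(x)` for all `i, j` and all `x ≥ 0`. -/
theorem partial_derivatives_comparable (m n : ℕ)
    (δ : ℝ) (hδ0 : 0 < δ) (hδ1 : δ ≤ 1)
    (w : (Fin n → ℕ) → ℝ) (hw : ∀ α, 0 ≤ w α)
    (hstep : ∀ α β : Fin n → ℕ, (∑ i, α i = m) → (∑ i, β i = m) →
        (∑ i, ((α i : ℤ) - β i).natAbs) = 2 → w α ≤ δ⁻¹ * w β)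
    (i j : Fin n) (x : Fin n → ℝ) (hx : ∀ k, 0 ≤ x k) :
    fderiv ℝ
        (fun y : Fin n → ℝ =>
          ∑ α ∈ Finset.Nat.antidiagonalTuple n m,
            (w α / ∏ k, ((α k).factorial : ℝ)) * ∏ k, y k ^ α k)
        x (Pi.single i 1) ≤
      δ⁻¹ *
        fderiv ℝ
          (fun y : Fin n → ℝ =>
            ∑ α ∈ Finset.Nat.antidiagonalTuple n m,
              (w α / ∏ k, ((α k).factorial : ℝ)) * ∏ k, y k ^ α k)
          x (Pi.single j 1) := by
  have hδinv : (1 : ℝ) ≤ δ⁻¹ := by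
    have h : δ * δ⁻¹ = 1 := mul_inv_cancel₀ hδ0.ne'
    nlinarith [inv_pos.2 hδ0]
  rw [fder_aux, fder_aux]
  rcases m with _ | M
  · -- m = 0 : all exponents are zero, both sums vanish
    have hz : ∀ α ∈ Finset.Nat.antidiagonalTuple n 0, ∀ k : Fin n, α k = 0 := by
      intro α hα k
      rw [Finset.Nat.mem_antidiagonalTuple] at hα
      exact Finset.sum_eq_zero_iff.1 hα k (Finset.mem_univ k)
    have hsi : ∀ i' : Fin n, ∑ α ∈ Finset.Nat.antidiagonalTuple n 0,
        (w α / ∏ k, ((α k).factorial : ℝ)) *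
          ((α i' : ℝ) * x i' ^ (α i' - 1) * ∏ l ∈ univ.erase i', x l ^ α l) = 0 := by
      intro i'
      refine Finset.sum_eq_zero fun α hα => ?_
      rw [hz α hα i']
      simp
    rw [hsi i, hsi j]
    simp
  · rw [reindex_aux, reindex_aux, Finset.mul_sum]
    refine Finset.sum_le_sum fun β hβ => ?_
    rw [Finset.Nat.mem_antidiagonalTuple] at hβ
    have hF : (0 : ℝ) < ∏ k, ((β k).factorial : ℝ) :=
      Finset.prod_pos fun k _ => Nat.cast_pos.2 (Nat.factorial_pos _)
    have hX : (0 : ℝ) ≤ ∏ k, x k ^ β k :=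
      Finset.prod_nonneg fun k _ => pow_nonneg (hx k) _
    have hkey : w (Function.update β i (β i + 1)) ≤ δ⁻¹ * w (Function.update β j (β j + 1)) := by
      rcases eq_or_ne i j with rfl | hij
      · nlinarith [hw (Function.update β i (β i + 1))]
      · have hupd_sum : ∀ (i' : Fin n),
            ∑ k, Function.update β i' (β i' + 1) k = (∑ k, β k) + 1 := by
          intro i'
          have h1 : ∀ k, Function.update β i' (β i' + 1) k
              = β k + (if k = i' then 1 else 0) := by
            intro k
            rcases eq_or_ne k i' with rfl | h
            · simp
            · simp [Function.update_apply, h]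
          rw [Finset.sum_congr rfl fun k _ => h1 k, Finset.sum_add_distrib]
          simp
        refine hstep _ _ ?_ ?_ ?_
        · rw [hupd_sum i, hβ]
        · rw [hupd_sum j, hβ]
        · have hterm : ∀ k : Fin n,
              (((Function.update β i (β i + 1) k : ℕ) : ℤ) -
                (Function.update β j (β j + 1) k : ℕ)).natAbs
              = (if k = i then 1 else 0) + (if k = j then 1 else 0) := by
            intro k
            rcases eq_or_ne k i with rfl | hki
            · rw [Function.update_self, Function.update_apply, if_neg hij,
                if_pos rfl, if_neg hij]
              omega
            · rcases eq_or_ne k j with rfl | hkj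
              · rw [Function.update_self, Function.update_apply, if_neg hki,
                  if_neg hki, if_pos rfl]
                omega
              · rw [Function.update_apply, if_neg hki, Function.update_apply, if_neg hkj,
                  if_neg hki, if_neg hkj]
                omega
          rw [Finset.sum_congr rfl fun k _ => hterm k, Finset.sum_add_distrib]
          simp
    calc (w (Function.update β i (β i + 1)) / ∏ k, ((β k).factorial : ℝ)) * ∏ k, x k ^ β k
        = w (Function.update β i (β i + 1)) *
            ((∏ k, ((β k).factorial : ℝ))⁻¹ * ∏ k, x k ^ β k) := by ring
      _ ≤ (δ⁻¹ * w (Function.update β j (β j + 1))) *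
            ((∏ k, ((β k).factorial : ℝ))⁻¹ * ∏ k, x k ^ β k) :=
          mul_le_mul_of_nonneg_right hkey (mul_nonneg (inv_nonneg.2 hF.le) hX)
      _ = δ⁻¹ * ((w (Function.update β j (β j + 1)) / ∏ k, ((β k).factorial : ℝ)) *
            ∏ k, x k ^ β k) := by ring
end

section
/- With the hypotheses of Lemma 3.1 and additionally f(1,...,1) = 1 (i.e., P is a probability measure), for all t ≥ 0 one has f(e^t, 1, ..., 1) ≤ ((e^t + (n−1)δ)/(1 + (n−1)δ))^m. -/
open scoped Classical

open Finset

lemma analytic_step (m : ℕ) (c x : ℝ) (hc : 0 < c) (hx : 1 ≤ x)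
    (a : ℕ → ℝ) (ha : ∀ j, 0 ≤ a j)
    (hsum : ∑ j ∈ range (m+1), a j = 1)
    (hrec : ∀ j < m, c * (j+1) * a (j+1) ≤ ((m : ℝ) - j) * a j) :
    ∑ j ∈ range (m+1), a j * x ^ j ≤ ((x + c) / (1 + c)) ^ m := by
  have hc1 : (0:ℝ) < 1 + c := by linarith
  have hc1m : (0:ℝ) < (1 + c) ^ m := pow_pos hc1 m
  set p : ℕ → ℝ := fun j => (m.choose j : ℝ) * c ^ (m - j) / (1 + c) ^ m with hp
  have hppos : ∀ j ∈ range (m+1), 0 < p j := by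
    intro j hj
    rw [mem_range] at hj
    have : 0 < m.choose j := Nat.choose_pos (by omega)
    have := pow_pos hc (m - j)
    positivity
  have hbinom : ∀ y : ℝ, ∑ j ∈ range (m+1), p j * y ^ j = ((y + c)/(1+c)) ^ m := by
    intro y
    have h := add_pow y c m
    rw [div_pow, h, Finset.sum_div]
    apply Finset.sum_congr rfl
    intro j hj
    simp only [hp]
    ring
  have hpsum : ∑ j ∈ range (m+1), p j = 1 := by
    have h1 := hbinom 1
    simp only [one_pow, mul_one] at h1
    rw [h1, div_self (ne_of_gt hc1)]
    simp
  set u : ℕ → ℝ := fun j => a j / p j with hu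
  have hau : ∀ j ∈ range (m+1), a j = p j * u j := by
    intro j hj
    rw [hu]
    field_simp [ne_of_gt (hppos j hj)]
  have hmono : ∀ i j, i ≤ j → j ≤ m → u j ≤ u i := by
    have key : ∀ j, j < m → u (j+1) ≤ u j := by
      intro j hj
      have hjm : j ∈ range (m+1) := mem_range.mpr (by omega)
      have hjm1 : j+1 ∈ range (m+1) := mem_range.mpr (by omega)
      have hpj := hppos j hjm
      have hpj1 := hppos (j+1) hjm1
      have hr := hrec j hj
      have hnat : m.choose (j+1) * (j+1) = m.choose j * (m - j) :=
        Nat.choose_succ_right_eq m j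
      have hkey : c * (j+1) * p (j+1) = ((m:ℝ) - j) * p j := by
        simp only [hp]
        have hmj : m - (j+1) + 1 = m - j := by omega
        have hpow : c * c ^ (m - (j+1)) = c ^ (m - j) := by
          rw [← hmj, pow_succ]; ring
        have hcast : ((m.choose (j+1)) : ℝ) * ((j:ℝ)+1) = (m.choose j : ℝ) * ((m:ℝ) - j) := by
          have := congrArg (Nat.cast : ℕ → ℝ) hnat
          push_cast [Nat.cast_sub (le_of_lt hj)] at this
          linarith [this]
        calc c*((j:ℝ)+1) * ((m.choose (j+1):ℝ) * c^(m-(j+1)) / (1+c)^m)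
            = ((m.choose (j+1):ℝ) * ((j:ℝ)+1)) * (c * c^(m-(j+1))) / (1+c)^m := by ring
          _ = ((m.choose j:ℝ) * ((m:ℝ)-j)) * c^(m-j)/(1+c)^m := by rw [hpow, hcast]
          _ = ((m:ℝ)-j) * ((m.choose j:ℝ) * c^(m-j)/(1+c)^m) := by ring
      have h2 : c*((j:ℝ)+1) * (a (j+1) * p j) ≤ c*((j:ℝ)+1) * (a j * p (j+1)) := by
        calc c*((j:ℝ)+1) * (a (j+1) * p j) = (c*((j:ℝ)+1)*a (j+1)) * p j := by ring
        _ ≤ (((m:ℝ)-j)*a j) * p j := mul_le_mul_of_nonneg_right hr hpj.le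
        _ = c*((j:ℝ)+1) * (a j * p (j+1)) := by linear_combination (-(a j)) * hkey
      have h3 : a (j+1) * p j ≤ a j * p (j+1) :=
        le_of_mul_le_mul_left h2 (by positivity)
      rw [hu]
      rw [div_le_div_iff₀ hpj1 hpj]
      linarith
    intro i j hij hjm
    induction j with
    | zero => interval_cases i; rfl
    | succ k ih =>
      rcases Nat.lt_or_ge i (k+1) with h | h
      · exact le_trans (key k (by omega)) (ih (by omega) (by omega))
      · have : i = k+1 := by omega
        simp [this]
  rw [← hbinom x]
  have hsumu : ∑ j ∈ range (m+1), p j * u j = 1 := by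
    rw [← hsum]; exact Finset.sum_congr rfl fun j hj => (hau j hj).symm
  set s := (range (m+1)).filter (fun j => u j < 1) with hs
  by_cases hse : s = ∅
  · have hall : ∀ j ∈ range (m+1), 1 ≤ u j := by
      intro j hj
      by_contra h
      have : j ∈ s := mem_filter.mpr ⟨hj, by linarith⟩
      simp [hse] at this
    have hzero : ∑ j ∈ range (m+1), p j * (u j - 1) = 0 := by
      have : ∑ j ∈ range (m+1), p j * (u j - 1)
          = (∑ j ∈ range (m+1), p j * u j) - ∑ j ∈ range (m+1), p j := by
        rw [← Finset.sum_sub_distrib]; exact Finset.sum_congr rfl fun j _ => by ring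
      rw [this, hsumu, hpsum]; ring
    have heach := (Finset.sum_eq_zero_iff_of_nonneg (fun j hj =>
      mul_nonneg (hppos j hj).le (by linarith [hall j hj]))).mp hzero
    apply le_of_eq
    apply Finset.sum_congr rfl
    intro j hj
    have := heach j hj
    have hune : u j = 1 := by
      have hpj := hppos j hj
      rcases mul_eq_zero.mp this with h | h
      · exact absurd h (ne_of_gt hpj)
      · linarith
    rw [hau j hj, hune, mul_one]
  · have hne : s.Nonempty := Finset.nonempty_of_ne_empty hse
    set J := s.min' hne with hJ
    have hJs : J ∈ s := Finset.min'_mem s hne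
    have hJr : J ∈ range (m+1) := (mem_filter.mp hJs).1
    have hJu : u J < 1 := (mem_filter.mp hJs).2
    have key : ∀ j ∈ range (m+1), a j * x ^ j ≤ p j * x ^ j + (a j - p j) * x ^ J := by
      intro j hj
      rw [hau j hj]
      have h0 : p j * (u j - 1) * (x ^ j - x ^ J) ≤ 0 := by
        rcases lt_or_ge (u j) 1 with h | h
        · have hjs : j ∈ s := mem_filter.mpr ⟨hj, h⟩
          have hJj : J ≤ j := Finset.min'_le s j hjs
          have hxx : x ^ J ≤ x ^ j := pow_le_pow_right₀ hx hJj
          have hpjj := hppos j hj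
          have h1 : 0 ≤ (1 - u j) * (x^j - x^J) := mul_nonneg (by linarith) (by linarith)
          nlinarith [mul_nonneg hpjj.le h1]
        · have hjJ : j ≤ J := by
            by_contra hcon
            push_neg at hcon
            have : u j ≤ u J := hmono J j (le_of_lt hcon) (by
              rw [mem_range] at hj; omega)
            linarith
          have hxx : x ^ j ≤ x ^ J := pow_le_pow_right₀ hx hjJ
          have hpjj := hppos j hj
          have h1 : 0 ≤ (u j - 1) * (x^J - x^j) := mul_nonneg (by linarith) (by linarith)
          nlinarith [mul_nonneg hpjj.le h1]
      nlinarith [h0]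
    calc ∑ j ∈ range (m+1), a j * x ^ j
        ≤ ∑ j ∈ range (m+1), (p j * x ^ j + (a j - p j) * x ^ J) :=
          Finset.sum_le_sum key
      _ = ∑ j ∈ range (m+1), p j * x ^ j
          + ((∑ j ∈ range (m+1), a j) - ∑ j ∈ range (m+1), p j) * x ^ J := by
          rw [Finset.sum_add_distrib, ← Finset.sum_mul, Finset.sum_sub_distrib]
      _ = ∑ j ∈ range (m+1), p j * x ^ j := by rw [hsum, hpsum]; ring

/-- Lemma 3.2: with `f` as in Lemma 3.1 and `f(1,…,1) = 1`, for
all `t ≥ 0` one has `f(e^t, 1, …, 1) ≤ ((e^t + (n-1)δ)/(1 + (n-1)δ))^m`. -/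
theorem exp_moment_bound (m n : ℕ) (hn : 0 < n)
    (δ : ℝ) (hδ0 : 0 < δ) (hδ1 : δ ≤ 1)
    (w : (Fin n → ℕ) → ℝ) (hw : ∀ α, 0 ≤ w α)
    (hstep : ∀ α β : Fin n → ℕ, (∑ i, α i = m) → (∑ i, β i = m) →
        (∑ i, ((α i : ℤ) - β i).natAbs) = 2 → w α ≤ δ⁻¹ * w β)
    (hprob : ∑ α ∈ Finset.Nat.antidiagonalTuple n m,
        w α / ∏ i, ((α i).factorial : ℝ) = 1)
    (t : ℝ) (ht : 0 ≤ t) :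
    ∑ α ∈ Finset.Nat.antidiagonalTuple n m,
        (w α / ∏ k, ((α k).factorial : ℝ)) *
          ∏ k : Fin n, (if k = ⟨0, hn⟩ then Real.exp t else 1) ^ α k ≤
      ((Real.exp t + ((n : ℝ) - 1) * δ) / (1 + ((n : ℝ) - 1) * δ)) ^ m := by
  have hx : 1 ≤ Real.exp t := Real.one_le_exp ht
  by_cases hn1 : n = 1
  · subst hn1
    rw [Finset.Nat.antidiagonalTuple_one] at hprob ⊢
    rw [Finset.sum_singleton] at hprob ⊢
    have hk : ∀ k : Fin 1, k = ⟨0, hn⟩ := fun k => Subsingleton.elim _ _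
    simp only [hk] at *
    norm_num
    have h1 : w ![m] / (m.factorial:ℝ) = 1 := by simpa using hprob
    rw [h1, one_mul]
  · have hn2 : 2 ≤ n := by omega
    classical
    have hx : 1 ≤ Real.exp t := Real.one_le_exp ht
    set i0 : Fin n := ⟨0, hn⟩ with hi0
    set x := Real.exp t with hxd
    set T := Finset.Nat.antidiagonalTuple n m with hT
    set cc : (Fin n → ℕ) → ℝ := fun α => w α / ∏ k, ((α k).factorial : ℝ) with hcc
    have hprodpos : ∀ α : Fin n → ℕ, (0:ℝ) < ∏ k, ((α k).factorial : ℝ) := by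
      intro α
      apply Finset.prod_pos
      intro k _
      exact_mod_cast Nat.factorial_pos _
    have hccnn : ∀ α, 0 ≤ cc α := fun α => div_nonneg (hw α) (hprodpos α).le
    set a : ℕ → ℝ := fun j => ∑ α ∈ T.filter (fun α => α i0 = j), cc α with ha
    have hann : ∀ j, 0 ≤ a j := fun j => Finset.sum_nonneg fun α _ => hccnn α
    have hmaps : ∀ α ∈ T, α i0 ∈ Finset.range (m+1) := by
      intro α hα
      rw [Finset.mem_range]
      rw [hT, Finset.Nat.mem_antidiagonalTuple] at hα
      have : α i0 ≤ ∑ i, α i :=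
        Finset.single_le_sum (fun i _ => Nat.zero_le _) (Finset.mem_univ i0)
      omega
    have hfib : ∀ (g : (Fin n → ℕ) → ℝ),
        ∑ j ∈ Finset.range (m+1), ∑ α ∈ T.filter (fun α => α i0 = j), g α
          = ∑ α ∈ T, g α :=
      fun g => Finset.sum_fiberwise_of_maps_to hmaps g
    have hsum_a : ∑ j ∈ Finset.range (m+1), a j = 1 := by
      rw [ha, hfib cc]
      exact hprob
    -- the recurrence
    have hrec : ∀ j, j < m → (((n:ℝ)-1)*δ) * ((j:ℝ)+1) * a (j+1) ≤ ((m:ℝ) - j) * a j := by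
      intro j hj
      set A := T.filter (fun α => α i0 = j+1) with hA
      set B := T.filter (fun α => α i0 = j) with hB
      set E := (Finset.univ : Finset (Fin n)).erase i0 with hE
      have hcardE : (E.card : ℝ) = (n:ℝ) - 1 := by
        rw [hE, Finset.card_erase_of_mem (Finset.mem_univ i0), Finset.card_univ,
          Fintype.card_fin]
        have h1 : 1 ≤ n := hn
        push_cast [Nat.cast_sub h1]
        ring
      have hmemA : ∀ α ∈ A, (∑ k, α k = m) ∧ α i0 = j + 1 := by
        intro α hα
        rw [hA, Finset.mem_filter, hT, Finset.Nat.mem_antidiagonalTuple] at hα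
        exact hα
      have hmemB : ∀ α ∈ B, (∑ k, α k = m) ∧ α i0 = j := by
        intro α hα
        rw [hB, Finset.mem_filter, hT, Finset.Nat.mem_antidiagonalTuple] at hα
        exact hα
      have hkey : ∀ i ∈ E, (∑ α ∈ A, δ*((j:ℝ)+1)*cc α) ≤ ∑ α ∈ B, (α i : ℝ) * cc α := by
        intro i hiE
        have hii0 : i ≠ i0 := (Finset.mem_erase.mp hiE).1
        set φ : (Fin n → ℕ) → (Fin n → ℕ) :=
          fun α => Function.update (Function.update α i0 j) i (α i + 1) with hφ
        have hφi : ∀ α, φ α i = α i + 1 := by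
          intro α; rw [hφ]; simp
        have hφi0 : ∀ α, φ α i0 = j := by
          intro α; rw [hφ]
          simp only [Function.update_of_ne (Ne.symm hii0), Function.update_self]
        have hφk : ∀ α k, k ≠ i → k ≠ i0 → φ α k = α k := by
          intro α k hki hk0
          rw [hφ]
          simp only [Function.update_of_ne hki, Function.update_of_ne hk0]
        have hi0E : i0 ∈ Finset.univ.erase i :=
          Finset.mem_erase.mpr ⟨Ne.symm hii0, Finset.mem_univ i0⟩
        have hφsum : ∀ α, (∑ k, α k = m) → α i0 = j + 1 → ∑ k, φ α k = m := by
          intro α hαs hαi0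
          have h1 : ∑ k, φ α k = (α i + 1) + ∑ k ∈ Finset.univ.erase i,
              (Function.update α i0 j) k := by
            rw [Finset.erase_eq]
            simp only [hφ]
            exact Finset.sum_update_of_mem (Finset.mem_univ i) _ _
          have h2 : ∑ k ∈ Finset.univ.erase i, Function.update α i0 j k
              = j + ∑ k ∈ (Finset.univ.erase i).erase i0, α k := by
            rw [Finset.erase_eq (Finset.univ.erase i) i0]
            exact Finset.sum_update_of_mem hi0E _ _
          have h3 : α i0 + ∑ k ∈ (Finset.univ.erase i).erase i0, α k
              = ∑ k ∈ Finset.univ.erase i, α k :=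
            Finset.add_sum_erase _ _ hi0E
          have h4 : α i + ∑ k ∈ Finset.univ.erase i, α k = ∑ k, α k :=
            Finset.add_sum_erase _ _ (Finset.mem_univ i)
          omega
        have hφprod : ∀ α, α i0 = j + 1 →
            (j+1) * ∏ k, (φ α k).factorial = (α i + 1) * ∏ k, (α k).factorial := by
          intro α hαi0
          have h1 : ∏ k, (φ α k).factorial = (α i + 1).factorial *
              ∏ k ∈ Finset.univ.erase i, ((Function.update α i0 j) k).factorial := by
            rw [← Finset.mul_prod_erase Finset.univ (fun k => (φ α k).factorial)
              (Finset.mem_univ i), hφi]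
            congr 1
            apply Finset.prod_congr rfl
            intro k hk
            simp only [hφ]
            rw [Function.update_of_ne (Finset.mem_erase.mp hk).1]
          have h2 : ∏ k ∈ Finset.univ.erase i, ((Function.update α i0 j) k).factorial
              = j.factorial * ∏ k ∈ (Finset.univ.erase i).erase i0, (α k).factorial := by
            rw [← Finset.mul_prod_erase (Finset.univ.erase i)
              (fun k => ((Function.update α i0 j) k).factorial) hi0E, Function.update_self]
            congr 1
            apply Finset.prod_congr rfl
            intro k hk
            rw [Function.update_of_ne (Finset.mem_erase.mp hk).1]
          have h3 : ∏ k, (α k).factorial = (α i).factorial *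
              ((α i0).factorial * ∏ k ∈ (Finset.univ.erase i).erase i0, (α k).factorial) := by
            rw [← Finset.mul_prod_erase Finset.univ (fun k => (α k).factorial)
              (Finset.mem_univ i),
              ← Finset.mul_prod_erase (Finset.univ.erase i) (fun k => (α k).factorial) hi0E]
          rw [h1, h2, h3, hαi0, Nat.factorial_succ (α i), Nat.factorial_succ j]
          ring
        have hnatabs : ∀ α, α i0 = j + 1 →
            (∑ k, ((α k : ℤ) - (φ α k : ℤ)).natAbs) = 2 := by
          intro α hαi0
          have hterm : ∀ k : Fin n, ((α k : ℤ) - (φ α k : ℤ)).natAbs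
              = (if k = i0 then 1 else 0) + (if k = i then 1 else 0) := by
            intro k
            rcases eq_or_ne k i0 with rfl | hk0
            · rw [hφi0, hαi0, if_pos rfl, if_neg (Ne.symm hii0)]
              push_cast
              simp
            · rcases eq_or_ne k i with rfl | hki
              · rw [hφi, if_neg hk0, if_pos rfl]
                push_cast
                simp
              · rw [hφk α k hki hk0, if_neg hk0, if_neg hki, sub_self]
                simp
          rw [Finset.sum_congr rfl fun k _ => hterm k, Finset.sum_add_distrib]
          simp
        have hterm : ∀ α ∈ A, δ*((j:ℝ)+1)*cc α ≤ ((φ α i : ℕ) : ℝ) * cc (φ α) := by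
          intro α hα
          obtain ⟨hαs, hαi0⟩ := hmemA α hα
          have hφs := hφsum α hαs hαi0
          have hδw : δ * w α ≤ w (φ α) := by
            have h := hstep α (φ α) hαs hφs (hnatabs α hαi0)
            calc δ * w α ≤ δ * (δ⁻¹ * w (φ α)) :=
                  mul_le_mul_of_nonneg_left h hδ0.le
            _ = w (φ α) := by field_simp
          have hPrel : ((j:ℝ)+1) * ∏ k, ((φ α k).factorial : ℝ)
              = ((α i:ℝ)+1) * ∏ k, ((α k).factorial : ℝ) := by
            have h := congrArg (Nat.cast : ℕ → ℝ) (hφprod α hαi0)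
            push_cast at h
            exact h
          have hPα := hprodpos α
          have hPφ := hprodpos (φ α)
          rw [hcc, hφi]
          simp only
          push_cast
          have key : (δ*((j:ℝ)+1)*w α) * (∏ k, ((φ α k).factorial:ℝ))
              ≤ (((α i:ℝ)+1) * w (φ α)) * ∏ k, ((α k).factorial:ℝ) := by
            calc (δ*((j:ℝ)+1)*w α) * (∏ k, ((φ α k).factorial:ℝ))
                = (((j:ℝ)+1) * ∏ k, ((φ α k).factorial:ℝ)) * (δ * w α) := by ring
              _ ≤ (((j:ℝ)+1) * ∏ k, ((φ α k).factorial:ℝ)) * w (φ α) :=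
                  mul_le_mul_of_nonneg_left hδw (by positivity)
              _ = (((α i:ℝ)+1) * ∏ k, ((α k).factorial:ℝ)) * w (φ α) := by rw [hPrel]
              _ = (((α i:ℝ)+1) * w (φ α)) * ∏ k, ((α k).factorial:ℝ) := by ring
          have e1 : δ*((j:ℝ)+1)*(w α / ∏ k, ((α k).factorial:ℝ))
              = (δ*((j:ℝ)+1)*w α) / ∏ k, ((α k).factorial:ℝ) := by ring
          have e2 : ((α i:ℝ)+1)*(w (φ α) / ∏ k, ((φ α k).factorial:ℝ))
              = (((α i:ℝ)+1)*w (φ α)) / ∏ k, ((φ α k).factorial:ℝ) := by ring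
          rw [e1, e2, div_le_div_iff₀ hPα hPφ]
          exact key
        -- now sum it up
        have hinj : ∀ α ∈ A, ∀ α' ∈ A, φ α = φ α' → α = α' := by
          intro α hα α' hα' h
          obtain ⟨_, hαi0⟩ := hmemA α hα
          obtain ⟨_, hα'i0⟩ := hmemA α' hα'
          funext k
          rcases eq_or_ne k i with rfl | hki
          · have := congrFun h k
            rw [hφi, hφi] at this
            omega
          · rcases eq_or_ne k i0 with rfl | hk0
            · rw [hαi0, hα'i0]
            · have := congrFun h k
              rwa [hφk α k hki hk0, hφk α' k hki hk0] at this
        have himg : A.image φ ⊆ B := by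
          intro β hβ
          obtain ⟨α, hαA, rfl⟩ := Finset.mem_image.mp hβ
          obtain ⟨hαs, hαi0⟩ := hmemA α hαA
          rw [hB, Finset.mem_filter, hT, Finset.Nat.mem_antidiagonalTuple]
          exact ⟨hφsum α hαs hαi0, hφi0 α⟩
        calc ∑ α ∈ A, δ*((j:ℝ)+1)*cc α
            ≤ ∑ α ∈ A, ((φ α i : ℕ) : ℝ) * cc (φ α) := Finset.sum_le_sum hterm
          _ = ∑ β ∈ A.image φ, ((β i : ℕ):ℝ) * cc β := (Finset.sum_image (f := fun β => ((β i : ℕ):ℝ) * cc β) hinj).symm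
          _ ≤ ∑ β ∈ B, ((β i : ℕ):ℝ) * cc β :=
              Finset.sum_le_sum_of_subset_of_nonneg himg
                (fun β _ _ => mul_nonneg (Nat.cast_nonneg _) (hccnn β))
      -- assemble the recurrence
      have haj1 : a (j+1) = ∑ α ∈ A, cc α := by rw [ha, hA]
      have haj : a j = ∑ α ∈ B, cc α := by rw [ha, hB]
      calc (((n:ℝ)-1)*δ) * ((j:ℝ)+1) * a (j+1)
          = ∑ i ∈ E, ∑ α ∈ A, δ*((j:ℝ)+1)*cc α := by
            rw [Finset.sum_const, nsmul_eq_mul, hcardE, haj1, ← Finset.mul_sum]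
            ring
        _ ≤ ∑ i ∈ E, ∑ α ∈ B, (α i : ℝ) * cc α := Finset.sum_le_sum hkey
        _ = ∑ α ∈ B, ((m:ℝ)-j) * cc α := by
            rw [Finset.sum_comm]
            apply Finset.sum_congr rfl
            intro α hα
            rw [← Finset.sum_mul]
            congr 1
            obtain ⟨hαs, hαi0⟩ := hmemB α hα
            have h4 : α i0 + ∑ k ∈ E, α k = ∑ k, α k := by
              rw [hE]
              exact Finset.add_sum_erase _ _ (Finset.mem_univ i0)
            have hE2 : ∑ k ∈ E, α k = m - j := by omega
            rw [← Nat.cast_sum, hE2, Nat.cast_sub (le_of_lt hj)]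
        _ = ((m:ℝ)-j) * a j := by rw [haj, Finset.mul_sum]
    -- assemble everything
    have hc : (0:ℝ) < ((n:ℝ)-1)*δ := by
      have : (2:ℝ) ≤ n := by exact_mod_cast hn2
      nlinarith
    have hmain : ∑ α ∈ T, (w α / ∏ k, ((α k).factorial : ℝ)) *
        ∏ k : Fin n, (if k = i0 then x else 1) ^ α k
        = ∑ j ∈ Finset.range (m+1), a j * x ^ j := by
      have hLHSα : ∀ α : Fin n → ℕ,
          (∏ k : Fin n, (if k = i0 then x else 1) ^ α k) = x ^ α i0 := by
        intro α
        rw [Finset.prod_eq_single i0]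
        · rw [if_pos rfl]
        · intro k _ hk
          rw [if_neg hk, one_pow]
        · intro h
          exact absurd (Finset.mem_univ i0) h
      calc ∑ α ∈ T, (w α / ∏ k, ((α k).factorial : ℝ)) *
            ∏ k : Fin n, (if k = i0 then x else 1) ^ α k
          = ∑ α ∈ T, cc α * x ^ α i0 :=
            Finset.sum_congr rfl fun α _ => by rw [hLHSα α, hcc]
        _ = ∑ j ∈ Finset.range (m+1), ∑ α ∈ T.filter (fun α => α i0 = j), cc α * x ^ α i0 :=
            (hfib _).symm
        _ = ∑ j ∈ Finset.range (m+1), a j * x ^ j := by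
            apply Finset.sum_congr rfl
            intro j hj
            rw [ha, Finset.sum_mul]
            apply Finset.sum_congr rfl
            intro α hα
            rw [(Finset.mem_filter.mp hα).2]
    rw [hmain]
    exact analytic_step m (((n:ℝ)-1)*δ) x hc hx a hann hsum_a
      (fun j hj => hrec j hj)
end

section
/- Let A be a symmetric n×n matrix with positive entries bounded by 1 below by δ > 0. Define a probability measure on spanning trees of K_n by P(τ) = weight(τ)/spt(A). Let a = (α_1,...,α_n) with α_1 > 0 and b = (α_1−1, α_2+1, α_3, ..., α_n), and let T(a) be the set of spanning trees with deg_i(τ) = α_i + 1 for all i. Then (α_2+1) P(T(b)) ≤ δ^{-1} α_1 P(T(a)). -/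
open scoped Classical
open Finset SimpleGraph

namespace TreeShiftAux

variable {V : Type*} [Fintype V] [DecidableEq V]

omit [Fintype V] [DecidableEq V] in
lemma reach_delete_or' {G : SimpleGraph V} (a b : V) {x c : V} (p : G.Walk x c) :
    (G.deleteEdges {s(a,b)}).Reachable x c ∨ (G.deleteEdges {s(a,b)}).Reachable x a ∨
      (G.deleteEdges {s(a,b)}).Reachable x b := by
  induction p with
  | nil => exact Or.inl (Reachable.refl _)
  | @cons u y _ h q ih =>
    by_cases he : s(u,y) = s(a,b)
    · rw [Sym2.eq_iff] at he
      rcases he with ⟨rfl, rfl⟩ | ⟨rfl, rfl⟩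
      · exact Or.inr (Or.inl (Reachable.refl _))
      · exact Or.inr (Or.inr (Reachable.refl _))
    · have hadj : (G.deleteEdges {s(a,b)}).Adj u y := by
        rw [SimpleGraph.deleteEdges_adj]
        exact ⟨h, by simpa using he⟩
      rcases ih with h1 | h1 | h1
      · exact Or.inl (hadj.reachable.trans h1)
      · exact Or.inr (Or.inl (hadj.reachable.trans h1))
      · exact Or.inr (Or.inr (hadj.reachable.trans h1))

omit [Fintype V] [DecidableEq V] in
/-- After deleting edge `s(a,b)`, every vertex with a walk to `a` can still reach `a` or `b`. -/
lemma reach_delete_or {G : SimpleGraph V} {a b x : V} (p : G.Walk x a) :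
    (G.deleteEdges {s(a,b)}).Reachable x a ∨ (G.deleteEdges {s(a,b)}).Reachable x b := by
  rcases reach_delete_or' a b p with h | h | h
  · exact Or.inl h
  · exact Or.inl h
  · exact Or.inr h

omit [Fintype V] [DecidableEq V] in
lemma acyclic_mono {G H : SimpleGraph V} (hle : G ≤ H) (hH : H.IsAcyclic) : G.IsAcyclic :=
  fun _ c hc => hH (c.mapLe hle) (hc.mapLe hle)

omit [Fintype V] [DecidableEq V] in
lemma acyclic_sup_edge {G : SimpleGraph V} (hG : G.IsAcyclic) {x y : V} (hxy : x ≠ y)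
    (hr : ¬ G.Reachable x y) : (G ⊔ SimpleGraph.edge x y).IsAcyclic := by
  intro u c hc
  by_cases he : s(x,y) ∈ c.edges
  · have h2 := (SimpleGraph.adj_and_reachable_delete_edges_iff_exists_cycle.mpr ⟨u, c, hc, he⟩).2
    apply hr
    refine h2.mono ?_
    intro p q hpq
    rw [SimpleGraph.deleteEdges_adj] at hpq
    rcases hpq with ⟨hsup, hne⟩
    rw [SimpleGraph.sup_adj] at hsup
    rcases hsup with h' | h'
    · exact h'
    · exfalso
      apply hne
      rw [SimpleGraph.edge_adj] at h'
      rcases h'.1 with ⟨rfl, rfl⟩ | ⟨rfl, rfl⟩ <;> simp [Sym2.eq_iff]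
  · have hc' : ∀ e ∈ c.edges, e ∈ G.edgeSet := by
      intro e hec
      have hmem := c.edges_subset_edgeSet hec
      rw [SimpleGraph.edgeSet_sup, SimpleGraph.edge_edgeSet_of_ne hxy] at hmem
      rcases hmem with h' | h'
      · exact h'
      · exact absurd (h' ▸ hec) he
    exact hG (c.transfer G hc') (hc.transfer hc')

end TreeShiftAux

namespace TreeShiftAux

variable {V : Type*} [Fintype V] [DecidableEq V]

/-- the exchange graph: delete `{v1,v}`, add `{v0,v}`. -/
noncomputable def Fg (v0 v1 : V) (τ : SimpleGraph V) (v : V) : SimpleGraph V :=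
  τ.deleteEdges {s(v1,v)} ⊔ SimpleGraph.edge v0 v

section core

variable {v0 v1 v : V} {τ : SimpleGraph V}
  (hne : v0 ≠ v1) (hτ : τ.IsTree) (hadj : τ.Adj v1 v)
  (hreach : (τ.deleteEdges {s(v1,v)}).Reachable v1 v0)

set_option linter.unusedSectionVars false

include hτ hadj in
lemma bridge_not_reach : ¬ (τ.deleteEdges {s(v1,v)}).Reachable v1 v := by
  have hb := (SimpleGraph.isAcyclic_iff_forall_edge_isBridge.mp hτ.IsAcyclic)
    ((SimpleGraph.mem_edgeSet τ).mpr hadj)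
  rw [SimpleGraph.isBridge_iff] at hb
  exact hb

include hτ hadj hreach in
lemma v_ne_v0 : v ≠ v0 := by
  rintro rfl
  exact bridge_not_reach hτ hadj hreach

include hne hτ hadj hreach in
lemma not_adj_v0 : ¬ τ.Adj v0 v := by
  intro h
  have hd : (τ.deleteEdges {s(v1,v)}).Adj v0 v := by
    rw [SimpleGraph.deleteEdges_adj]
    refine ⟨h, ?_⟩
    simp only [Set.mem_singleton_iff, Sym2.eq_iff]
    push_neg
    exact ⟨fun h0 => absurd h0 hne, fun h0 => absurd h0.symm (v_ne_v0 hτ hadj hreach)⟩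
  exact bridge_not_reach hτ hadj (hreach.trans hd.reachable)

include hne hτ hadj hreach in
lemma Fg_isTree : (Fg v0 v1 τ v).IsTree := by
  have hvv0 : v ≠ v0 := v_ne_v0 hτ hadj hreach
  constructor
  · -- connected
    have hreach0 : ∀ x, (Fg v0 v1 τ v).Reachable x v0 := by
      intro x
      obtain ⟨p⟩ := hτ.isConnected.preconnected x v1
      rcases reach_delete_or (b := v) p with h | h
      · exact ((h.trans hreach).mono le_sup_left)
      · have hE : (Fg v0 v1 τ v).Adj v0 v := by
          rw [Fg, SimpleGraph.sup_adj, SimpleGraph.edge_adj]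
          exact Or.inr ⟨Or.inl ⟨rfl, rfl⟩, fun h0 => hvv0 h0.symm⟩
        exact ((h.mono le_sup_left).trans hE.symm.reachable)
    have : Nonempty V := ⟨v0⟩
    exact SimpleGraph.Connected.mk (fun x y => (hreach0 x).trans (hreach0 y).symm)
  · -- acyclic
    refine acyclic_sup_edge (acyclic_mono (SimpleGraph.deleteEdges_le _) hτ.IsAcyclic)
      (Ne.symm hvv0) ?_
    intro h
    exact bridge_not_reach hτ hadj (hreach.trans h)

include hne hτ hadj hreach in
lemma Fg_adj_iff (x y : V) : (Fg v0 v1 τ v).Adj x y ↔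
    (τ.Adj x y ∧ s(x,y) ≠ s(v1,v)) ∨ (x = v0 ∧ y = v) ∨ (x = v ∧ y = v0) := by
  have hvv0 : v ≠ v0 := v_ne_v0 hτ hadj hreach
  rw [Fg, SimpleGraph.sup_adj, SimpleGraph.deleteEdges_adj, SimpleGraph.edge_adj]
  constructor
  · rintro (⟨h1, h2⟩ | ⟨(⟨rfl, rfl⟩ | ⟨rfl, rfl⟩), h3⟩)
    · exact Or.inl ⟨h1, by simpa using h2⟩
    · exact Or.inr (Or.inl ⟨rfl, rfl⟩)
    · exact Or.inr (Or.inr ⟨rfl, rfl⟩)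
  · rintro (⟨h1, h2⟩ | ⟨rfl, rfl⟩ | ⟨rfl, rfl⟩)
    · exact Or.inl ⟨h1, by simpa using h2⟩
    · exact Or.inr ⟨Or.inl ⟨rfl, rfl⟩, fun h => hvv0 h.symm⟩
    · exact Or.inr ⟨Or.inr ⟨rfl, rfl⟩, hvv0⟩

include hne hτ hadj hreach in
lemma Fg_edgeSet : (Fg v0 v1 τ v).edgeSet
    = (τ.edgeSet \ {s(v1,v)}) ∪ {s(v0,v)} := by
  rw [Fg, SimpleGraph.edgeSet_sup, SimpleGraph.edgeSet_deleteEdges,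
    SimpleGraph.edge_edgeSet_of_ne (fun h => (v_ne_v0 hτ hadj hreach) h.symm)]

include hne hτ hadj hreach in
lemma Fg_nb_v1 : (Fg v0 v1 τ v).neighborFinset v1 = (τ.neighborFinset v1).erase v := by
  ext y
  rw [SimpleGraph.mem_neighborFinset, Finset.mem_erase, SimpleGraph.mem_neighborFinset,
    Fg_adj_iff hne hτ hadj hreach]
  constructor
  · rintro (⟨h1, h2⟩ | ⟨h1, h2⟩ | ⟨h1, h2⟩)
    · refine ⟨fun hy => h2 ?_, h1⟩
      rw [hy]
    · exact absurd h1 hne.symm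
    · exact absurd h1 hadj.ne
  · rintro ⟨hyv, h1⟩
    refine Or.inl ⟨h1, ?_⟩
    intro hs99
    rw [Sym2.eq_iff] at hs99
    revert hs99
    rintro (⟨-, h⟩ | ⟨h, -⟩)
    · exact hyv h
    · exact hadj.ne h

include hne hτ hadj hreach in
lemma Fg_nb_v0 : (Fg v0 v1 τ v).neighborFinset v0 = insert v (τ.neighborFinset v0) := by
  ext y
  rw [SimpleGraph.mem_neighborFinset, Finset.mem_insert, SimpleGraph.mem_neighborFinset,
    Fg_adj_iff hne hτ hadj hreach]
  constructor
  · rintro (⟨h1, h2⟩ | ⟨h1, h2⟩ | ⟨h1, h2⟩)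
    · exact Or.inr h1
    · exact Or.inl h2
    · exact absurd h1.symm (v_ne_v0 hτ hadj hreach).symm.symm
  · rintro (rfl | h1)
    · exact Or.inr (Or.inl ⟨rfl, rfl⟩)
    · refine Or.inl ⟨h1, ?_⟩
      intro hs99
      rw [Sym2.eq_iff] at hs99
      revert hs99
      rintro (⟨h, -⟩ | ⟨h, -⟩)
      · exact hne h
      · exact (v_ne_v0 hτ hadj hreach) h.symm

include hne hτ hadj hreach in
lemma Fg_nb_v : (Fg v0 v1 τ v).neighborFinset v
    = insert v0 ((τ.neighborFinset v).erase v1) := by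
  ext y
  rw [SimpleGraph.mem_neighborFinset, Finset.mem_insert, Finset.mem_erase,
    SimpleGraph.mem_neighborFinset, Fg_adj_iff hne hτ hadj hreach]
  constructor
  · rintro (⟨h1, h2⟩ | ⟨h1, h2⟩ | ⟨h1, h2⟩)
    · refine Or.inr ⟨fun hy => h2 ?_, h1⟩
      rw [hy, Sym2.eq_swap]
    · exact absurd h1 (v_ne_v0 hτ hadj hreach)
    · exact Or.inl h2
  · rintro (rfl | ⟨hyv1, h1⟩)
    · exact Or.inr (Or.inr ⟨rfl, rfl⟩)
    · refine Or.inl ⟨h1, ?_⟩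
      intro hs99
      rw [Sym2.eq_iff] at hs99
      revert hs99
      rintro (⟨h, -⟩ | ⟨-, h⟩)
      · exact hadj.ne h.symm
      · exact hyv1 h

include hne hτ hadj hreach in
lemma Fg_nb_other (x : V) (h0 : x ≠ v0) (h1 : x ≠ v1) (hv : x ≠ v) :
    (Fg v0 v1 τ v).neighborFinset x = τ.neighborFinset x := by
  ext y
  rw [SimpleGraph.mem_neighborFinset, SimpleGraph.mem_neighborFinset,
    Fg_adj_iff hne hτ hadj hreach]
  constructor
  · rintro (⟨h2, -⟩ | ⟨h2, -⟩ | ⟨h2, -⟩)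
    · exact h2
    · exact absurd h2 h0
    · exact absurd h2 hv
  · intro h2
    refine Or.inl ⟨h2, ?_⟩
    intro hs99
    rw [Sym2.eq_iff] at hs99
    revert hs99
    rintro (⟨h, -⟩ | ⟨h, -⟩)
    · exact h1 h
    · exact hv h

include hne hτ hadj hreach in
lemma Fg_deg_v1 : (Fg v0 v1 τ v).degree v1 = τ.degree v1 - 1 := by
  rw [← SimpleGraph.card_neighborFinset_eq_degree, ← SimpleGraph.card_neighborFinset_eq_degree,
    Fg_nb_v1 hne hτ hadj hreach,
    Finset.card_erase_of_mem ((SimpleGraph.mem_neighborFinset _ _ _).mpr hadj)]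

include hne hτ hadj hreach in
lemma Fg_deg_v0 : (Fg v0 v1 τ v).degree v0 = τ.degree v0 + 1 := by
  rw [← SimpleGraph.card_neighborFinset_eq_degree, ← SimpleGraph.card_neighborFinset_eq_degree,
    Fg_nb_v0 hne hτ hadj hreach, Finset.card_insert_of_notMem]
  intro hmem
  exact (not_adj_v0 hne hτ hadj hreach) ((SimpleGraph.mem_neighborFinset _ _ _).mp hmem)

include hne hτ hadj hreach in
lemma Fg_deg_v : (Fg v0 v1 τ v).degree v = τ.degree v := by
  have hmem : v1 ∈ τ.neighborFinset v := (SimpleGraph.mem_neighborFinset _ _ _).mpr hadj.symm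
  have hpos : 0 < (τ.neighborFinset v).card := Finset.card_pos.mpr ⟨v1, hmem⟩
  rw [← SimpleGraph.card_neighborFinset_eq_degree, ← SimpleGraph.card_neighborFinset_eq_degree,
    Fg_nb_v hne hτ hadj hreach, Finset.card_insert_of_notMem, Finset.card_erase_of_mem hmem]
  · omega
  · intro hmem0
    exact (not_adj_v0 hne hτ hadj hreach)
      (((SimpleGraph.mem_neighborFinset _ _ _).mp (Finset.mem_of_mem_erase hmem0)).symm)

include hne hτ hadj hreach in
lemma Fg_deg_other (x : V) (h0 : x ≠ v0) (h1 : x ≠ v1) (hv : x ≠ v) :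
    (Fg v0 v1 τ v).degree x = τ.degree x := by
  rw [← SimpleGraph.card_neighborFinset_eq_degree, ← SimpleGraph.card_neighborFinset_eq_degree,
    Fg_nb_other hne hτ hadj hreach x h0 h1 hv]

include hne hτ hadj hreach in
lemma Fg_edgeFilter :
    (Finset.univ.filter (fun e : Sym2 V => e ∈ (Fg v0 v1 τ v).edgeSet))
      = insert s(v0,v)
        ((Finset.univ.filter (fun e : Sym2 V => e ∈ τ.edgeSet)).erase s(v1,v)) := by
  ext e
  simp only [Finset.mem_filter, Finset.mem_univ, true_and, Finset.mem_insert, Finset.mem_erase,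
    Fg_edgeSet hne hτ hadj hreach, Set.mem_union, Set.mem_diff, Set.mem_singleton_iff]
  tauto

include hne hτ hadj hreach in
lemma Wt_Fg_ge {δ : ℝ} (hδ0 : 0 < δ) (hδ1 : δ ≤ 1) (w : Sym2 V → ℝ)
    (hw : ∀ e, δ ≤ w e ∧ w e ≤ 1) :
    δ * (∏ e ∈ Finset.univ.filter (fun e : Sym2 V => e ∈ τ.edgeSet), w e)
      ≤ ∏ e ∈ Finset.univ.filter (fun e : Sym2 V => e ∈ (Fg v0 v1 τ v).edgeSet), w e := by
  set Eτ := Finset.univ.filter (fun e : Sym2 V => e ∈ τ.edgeSet) with hEτ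
  have hs1 : s(v1,v) ∈ Eτ := by
    rw [hEτ, Finset.mem_filter]
    exact ⟨Finset.mem_univ _, (SimpleGraph.mem_edgeSet τ).mpr hadj⟩
  have hs0 : s(v0,v) ∉ (Eτ.erase s(v1,v)) := by
    intro hmem
    have := Finset.mem_of_mem_erase hmem
    rw [hEτ, Finset.mem_filter] at this
    exact (not_adj_v0 hne hτ hadj hreach) ((SimpleGraph.mem_edgeSet τ).mp this.2)
  have hR : (0:ℝ) ≤ ∏ e ∈ Eτ.erase s(v1,v), w e :=
    Finset.prod_nonneg fun e _ => le_trans hδ0.le (hw e).1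
  rw [Fg_edgeFilter hne hτ hadj hreach, Finset.prod_insert hs0,
    ← Finset.mul_prod_erase Eτ w hs1]
  have h1 : δ * w s(v1,v) ≤ w s(v0,v) :=
    le_trans (le_trans (mul_le_mul_of_nonneg_left (hw s(v1,v)).2 hδ0.le) (by simp))
      (hw s(v0,v)).1
  calc δ * (w s(v1,v) * ∏ e ∈ Eτ.erase s(v1,v), w e)
      = (δ * w s(v1,v)) * ∏ e ∈ Eτ.erase s(v1,v), w e := by ring
    _ ≤ w s(v0,v) * ∏ e ∈ Eτ.erase s(v1,v), w e := mul_le_mul_of_nonneg_right h1 hR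

end core

omit [Fintype V] [DecidableEq V] in
lemma exists_cons_path {G : SimpleGraph V} {u w : V} (hne : u ≠ w) (h : G.Reachable u w) :
    ∃ (y : V) (h1 : G.Adj u y) (q : G.Walk y w), (SimpleGraph.Walk.cons h1 q).IsPath := by
  obtain ⟨p0⟩ := h
  have hp : (p0.toPath : G.Walk u w).IsPath := p0.toPath.2
  generalize (p0.toPath : G.Walk u w) = p at hp
  cases p with
  | nil => exact absurd rfl hne
  | cons h1 q => exact ⟨_, h1, q, hp⟩

lemma card_S_ge {v0 v1 : V} (hne : v0 ≠ v1) {τ : SimpleGraph V} (hτ : τ.IsTree) :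
    τ.degree v1 - 1 ≤ ((τ.neighborFinset v1).filter
      (fun v => (τ.deleteEdges {s(v1,v)}).Reachable v1 v0)).card := by
  obtain ⟨y, hadj1, q, hq⟩ :=
    exists_cons_path (G := τ) hne.symm (hτ.isConnected.preconnected v1 v0)
  rw [SimpleGraph.Walk.cons_isPath_iff] at hq
  have hbad : (τ.neighborFinset v1).filter
      (fun v => ¬ (τ.deleteEdges {s(v1,v)}).Reachable v1 v0) ⊆ {y} := by
    intro v hv
    rw [Finset.mem_filter, SimpleGraph.mem_neighborFinset] at hv
    obtain ⟨hadjv, hnr⟩ := hv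
    rw [Finset.mem_singleton]
    by_contra hvy
    apply hnr
    have hsub : ∀ e ∈ (SimpleGraph.Walk.cons hadj1 q).edges,
        e ∈ (τ.deleteEdges {s(v1,v)}).edgeSet := by
      intro e he
      rw [SimpleGraph.edgeSet_deleteEdges, Set.mem_diff, Set.mem_singleton_iff]
      refine ⟨(SimpleGraph.Walk.cons hadj1 q).edges_subset_edgeSet he, ?_⟩
      rw [SimpleGraph.Walk.edges_cons, List.mem_cons] at he
      rcases he with rfl | he
      · rw [Sym2.eq_iff]
        rintro (⟨-, h⟩ | ⟨h, -⟩)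
        · exact hvy h.symm
        · exact hadjv.ne h
      · rintro rfl
        exact hq.2 (SimpleGraph.Walk.fst_mem_support_of_mem_edges q he)
    exact ((SimpleGraph.Walk.cons hadj1 q).transfer _ hsub).reachable
  have hcards := Finset.card_filter_add_card_filter_not
    (s := τ.neighborFinset v1)
    (p := fun v => (τ.deleteEdges {s(v1,v)}).Reachable v1 v0)
  have hb1 : ((τ.neighborFinset v1).filter
      (fun v => ¬ (τ.deleteEdges {s(v1,v)}).Reachable v1 v0)).card ≤ 1 := by
    have := Finset.card_le_card hbad
    simpa using this
  have hdeg : (τ.neighborFinset v1).card = τ.degree v1 :=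
    SimpleGraph.card_neighborFinset_eq_degree τ v1
  omega

lemma edgeSet_of_Fg_eq {v0 v1 v : V} (hne : v0 ≠ v1) {τ τ' : SimpleGraph V}
    (hτ : τ.IsTree) (hadj : τ.Adj v1 v)
    (hreach : (τ.deleteEdges {s(v1,v)}).Reachable v1 v0)
    (heq : Fg v0 v1 τ v = τ') :
    τ.edgeSet = (τ'.edgeSet \ {s(v0,v)}) ∪ {s(v1,v)} := by
  have hs1 : s(v1,v) ∈ τ.edgeSet := (SimpleGraph.mem_edgeSet τ).mpr hadj
  have hs0 : s(v0,v) ∉ τ.edgeSet := fun h =>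
    (not_adj_v0 hne hτ hadj hreach) ((SimpleGraph.mem_edgeSet τ).mp h)
  have hss : s(v0,v) ≠ s(v1,v) := by
    intro h
    rw [Sym2.eq_iff] at h
    rcases h with ⟨h, -⟩ | ⟨h, -⟩
    · exact hne h
    · exact (v_ne_v0 hτ hadj hreach) h.symm
  rw [← heq, Fg_edgeSet hne hτ hadj hreach]
  ext e
  simp only [Set.mem_union, Set.mem_diff, Set.mem_singleton_iff]
  constructor
  · intro he
    by_cases h1 : e = s(v1,v)
    · exact Or.inr h1
    · exact Or.inl ⟨Or.inl ⟨he, h1⟩, fun h0 => hs0 (h0 ▸ he)⟩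
  · rintro (⟨(⟨he, -⟩ | rfl), h0⟩ | rfl)
    · exact he
    · exact absurd rfl h0
    · exact hs1

lemma delete_eq_of_Fg_eq {v0 v1 v : V} (hne : v0 ≠ v1) {τ τ' : SimpleGraph V}
    (hτ : τ.IsTree) (hadj : τ.Adj v1 v)
    (hreach : (τ.deleteEdges {s(v1,v)}).Reachable v1 v0)
    (heq : Fg v0 v1 τ v = τ') :
    τ.deleteEdges {s(v1,v)} = τ'.deleteEdges {s(v0,v)} := by
  rw [← SimpleGraph.edgeSet_inj, SimpleGraph.edgeSet_deleteEdges,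
    SimpleGraph.edgeSet_deleteEdges, ← heq, Fg_edgeSet hne hτ hadj hreach]
  have hs0 : s(v0,v) ∉ τ.edgeSet := fun h =>
    (not_adj_v0 hne hτ hadj hreach) ((SimpleGraph.mem_edgeSet τ).mp h)
  have hss : s(v0,v) ≠ s(v1,v) := by
    intro h
    rw [Sym2.eq_iff] at h
    rcases h with ⟨h, -⟩ | ⟨h, -⟩
    · exact hne h
    · exact (v_ne_v0 hτ hadj hreach) h.symm
  ext e
  simp only [Set.mem_union, Set.mem_diff, Set.mem_singleton_iff]
  constructor
  · rintro ⟨he, h1⟩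
    exact ⟨Or.inl ⟨he, h1⟩, fun h0 => hs0 (h0 ▸ he)⟩
  · rintro ⟨(⟨he, h1⟩ | rfl), h0⟩
    · exact ⟨he, h1⟩
    · exact absurd rfl h0

lemma fiber_card_le {v0 v1 : V} (hne : v0 ≠ v1) {τ' : SimpleGraph V} (hτ' : τ'.IsTree)
    (P : Finset (SimpleGraph V × V))
    (hP : ∀ p ∈ P, p.1.IsTree ∧ p.1.Adj v1 p.2 ∧
      (p.1.deleteEdges {s(v1,p.2)}).Reachable v1 v0) :
    (P.filter (fun p => Fg v0 v1 p.1 p.2 = τ')).card ≤ τ'.degree v0 - 1 := by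
  obtain ⟨y, hady, q, hq⟩ :=
    exists_cons_path (G := τ') hne (hτ'.isConnected.preconnected v0 v1)
  rw [SimpleGraph.Walk.cons_isPath_iff] at hq
  have hcard : ((τ'.neighborFinset v0).erase y).card = τ'.degree v0 - 1 := by
    rw [Finset.card_erase_of_mem ((SimpleGraph.mem_neighborFinset _ _ _).mpr hady),
      SimpleGraph.card_neighborFinset_eq_degree]
  rw [← hcard]
  apply Finset.card_le_card_of_injOn (fun p => p.2)
  · -- maps to
    intro p hp
    rw [Finset.mem_coe, Finset.mem_filter] at hp
    obtain ⟨hpP, heq⟩ := hp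
    obtain ⟨hτ, hadj, hreach⟩ := hP p hpP
    have hreach' : (τ'.deleteEdges {s(v0,p.2)}).Reachable v1 v0 :=
      (delete_eq_of_Fg_eq hne hτ hadj hreach heq) ▸ hreach
    rw [Finset.mem_coe, Finset.mem_erase, SimpleGraph.mem_neighborFinset]
    constructor
    · -- p.2 ≠ y
      rintro rfl
      -- q : τ'.Walk y v1, transfer to deleted graph
      have hsub : ∀ e ∈ q.edges, e ∈ (τ'.deleteEdges {s(v0,p.2)}).edgeSet := by
        intro e he
        rw [SimpleGraph.edgeSet_deleteEdges, Set.mem_diff, Set.mem_singleton_iff]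
        refine ⟨q.edges_subset_edgeSet he, ?_⟩
        rintro rfl
        exact hq.2 (SimpleGraph.Walk.fst_mem_support_of_mem_edges q he)
      have h1 : (τ'.deleteEdges {s(v0,p.2)}).Reachable p.2 v0 :=
        ((q.transfer _ hsub).reachable).trans hreach'
      exact bridge_not_reach (v1 := v0) hτ' hady h1.symm
    · -- τ'.Adj v0 p.2
      rw [← heq, Fg_adj_iff hne hτ hadj hreach]
      exact Or.inr (Or.inl ⟨rfl, rfl⟩)
  · -- injective
    intro p1 hp1 p2 hp2 hsnd
    rw [Finset.coe_filter, Set.mem_setOf_eq] at hp1 hp2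
    obtain ⟨hp1P, heq1⟩ := hp1
    obtain ⟨hp2P, heq2⟩ := hp2
    obtain ⟨hτ1, hadj1, hreach1⟩ := hP p1 hp1P
    obtain ⟨hτ2, hadj2, hreach2⟩ := hP p2 hp2P
    have hE1 := edgeSet_of_Fg_eq hne hτ1 hadj1 hreach1 heq1
    have hE2 := edgeSet_of_Fg_eq hne hτ2 hadj2 hreach2 heq2
    have hsnd' : p1.2 = p2.2 := hsnd
    rw [hsnd'] at hE1
    have : p1.1 = p2.1 := by
      rw [← SimpleGraph.edgeSet_inj, hE1, hE2]
    exact Prod.ext this hsnd'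

noncomputable def Wt (w : Sym2 V → ℝ) (G : SimpleGraph V) : ℝ :=
  ∏ e ∈ Finset.univ.filter (fun e : Sym2 V => e ∈ G.edgeSet), w e

lemma Wt_nonneg {δ : ℝ} (hδ0 : 0 < δ) {w : Sym2 V → ℝ} (hw : ∀ e, δ ≤ w e ∧ w e ≤ 1)
    (G : SimpleGraph V) : 0 ≤ Wt w G :=
  Finset.prod_nonneg fun e _ => le_trans hδ0.le (hw e).1

lemma key {v0 v1 : V} (hne : v0 ≠ v1) {δ : ℝ} (hδ0 : 0 < δ) (hδ1 : δ ≤ 1)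
    (w : Sym2 V → ℝ) (hw : ∀ e, δ ≤ w e ∧ w e ≤ 1) (a : V → ℕ) (ha1 : 0 < a v0) :
    δ * ((a v1 : ℝ) + 1) *
      ∑ G ∈ Finset.univ.filter (fun G : SimpleGraph V => G.IsTree ∧ ∀ i, G.degree i =
        Function.update (Function.update a v0 (a v0 - 1)) v1 (a v1 + 1) i + 1), Wt w G
    ≤ (a v0 : ℝ) *
      ∑ G ∈ Finset.univ.filter
        (fun G : SimpleGraph V => G.IsTree ∧ ∀ i, G.degree i = a i + 1), Wt w G := by
  set b : V → ℕ := Function.update (Function.update a v0 (a v0 - 1)) v1 (a v1 + 1) with hb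
  have hbv1 : b v1 = a v1 + 1 := by rw [hb, Function.update_self]
  have hbv0 : b v0 = a v0 - 1 := by
    rw [hb, Function.update_of_ne hne, Function.update_self]
  have hbother : ∀ x, x ≠ v0 → x ≠ v1 → b x = a x := by
    intro x h0 h1
    rw [hb, Function.update_of_ne h1, Function.update_of_ne h0]
  set Tb : Finset (SimpleGraph V) := Finset.univ.filter
    (fun G : SimpleGraph V => G.IsTree ∧ ∀ i, G.degree i = b i + 1) with hTb
  set Ta : Finset (SimpleGraph V) := Finset.univ.filter
    (fun G : SimpleGraph V => G.IsTree ∧ ∀ i, G.degree i = a i + 1) with hTa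
  set Sfin : SimpleGraph V → Finset V := fun G =>
    (G.neighborFinset v1).filter
      (fun v => (G.deleteEdges {s(v1,v)}).Reachable v1 v0) with hSfin
  set P : Finset (SimpleGraph V × V) := Finset.univ.filter
    (fun p : SimpleGraph V × V => p.1 ∈ Tb ∧ p.2 ∈ Sfin p.1) with hP
  have hPmem : ∀ p : SimpleGraph V × V, p ∈ P ↔ p.1 ∈ Tb ∧ p.2 ∈ Sfin p.1 := by
    intro p
    rw [hP, Finset.mem_filter]
    simp
  -- basic facts for p ∈ P
  have hPfacts : ∀ p ∈ P, p.1.IsTree ∧ p.1.Adj v1 p.2 ∧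
      (p.1.deleteEdges {s(v1,p.2)}).Reachable v1 v0 := by
    intro p hp
    rw [hPmem] at hp
    obtain ⟨h1, h2⟩ := hp
    rw [hTb, Finset.mem_filter] at h1
    rw [hSfin] at h2
    simp only [Finset.mem_filter, SimpleGraph.mem_neighborFinset] at h2
    exact ⟨h1.2.1, h2.1, h2.2⟩
  have hWnn : ∀ G, 0 ≤ Wt w G := Wt_nonneg hδ0 hw
  -- images land in Ta
  have hmaps : ∀ p ∈ P, Fg v0 v1 p.1 p.2 ∈ Ta := by
    intro p hp
    obtain ⟨hτ, hadj, hreach⟩ := hPfacts p hp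
    have hdegb : ∀ i, p.1.degree i = b i + 1 := by
      have := (hPmem p).mp hp
      rw [hTb, Finset.mem_filter] at this
      exact this.1.2.2
    refine Finset.mem_filter.mpr ⟨Finset.mem_univ _, Fg_isTree hne hτ hadj hreach, ?_⟩
    intro i
    have hvv0 : p.2 ≠ v0 := v_ne_v0 hτ hadj hreach
    have hvv1 : p.2 ≠ v1 := fun h => hadj.ne h.symm
    by_cases hi0 : i = v0
    · subst hi0
      rw [Fg_deg_v0 hne hτ hadj hreach, hdegb, hbv0]
      omega
    · by_cases hi1 : i = v1
      · subst hi1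
        rw [Fg_deg_v1 hne hτ hadj hreach, hdegb, hbv1]
        omega
      · by_cases hiv : i = p.2
        · subst hiv
          rw [Fg_deg_v hne hτ hadj hreach, hdegb, hbother _ hvv0 hvv1]
        · rw [Fg_deg_other hne hτ hadj hreach i hi0 hi1 hiv, hdegb,
            hbother _ hi0 hi1]
  -- Step A : card of Sfin
  have hcardS : ∀ G ∈ Tb, a v1 + 1 ≤ (Sfin G).card := by
    intro G hG
    rw [hTb, Finset.mem_filter] at hG
    have h1 := card_S_ge hne hG.2.1 (v1 := v1)
    have h2 : G.degree v1 = a v1 + 2 := by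
      rw [hG.2.2 v1, hbv1]
    have h1' : G.degree v1 - 1 ≤ (Sfin G).card := h1
    omega
  -- sum over P as double sum
  have hsum_eq : ∀ f : SimpleGraph V × V → ℝ,
      ∑ p ∈ P, f p = ∑ G ∈ Tb, ∑ v ∈ Sfin G, f (G, v) := by
    intro f
    exact Finset.sum_finset_product P Tb Sfin (fun p => hPmem p) (f := fun p => f p)
  calc δ * ((a v1 : ℝ) + 1) * ∑ G ∈ Tb, Wt w G
      = ∑ G ∈ Tb, ((a v1 : ℝ) + 1) * (δ * Wt w G) := by
        rw [Finset.mul_sum]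
        refine Finset.sum_congr rfl fun G _ => by ring
    _ ≤ ∑ G ∈ Tb, ((Sfin G).card : ℝ) * (δ * Wt w G) := by
        refine Finset.sum_le_sum fun G hG => ?_
        refine mul_le_mul_of_nonneg_right ?_
          (mul_nonneg hδ0.le (hWnn G))
        have := hcardS G hG
        push_cast
        exact_mod_cast Nat.cast_le.mpr this
    _ = ∑ G ∈ Tb, ∑ _v ∈ Sfin G, (δ * Wt w G) := by
        refine Finset.sum_congr rfl fun G _ => ?_
        rw [Finset.sum_const, nsmul_eq_mul]
    _ = ∑ p ∈ P, δ * Wt w p.1 := by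
        rw [hsum_eq (fun p => δ * Wt w p.1)]
    _ ≤ ∑ p ∈ P, Wt w (Fg v0 v1 p.1 p.2) := by
        refine Finset.sum_le_sum fun p hp => ?_
        obtain ⟨hτ, hadj, hreach⟩ := hPfacts p hp
        exact Wt_Fg_ge hne hτ hadj hreach hδ0 hδ1 w hw
    _ = ∑ G ∈ Ta, ∑ p ∈ P.filter (fun p => Fg v0 v1 p.1 p.2 = G), Wt w G := by
        exact (Finset.sum_fiberwise_of_maps_to' hmaps (fun G => Wt w G)).symm
    _ ≤ ∑ G ∈ Ta, (a v0 : ℝ) * Wt w G := by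
        refine Finset.sum_le_sum fun G hG => ?_
        rw [Finset.sum_const, nsmul_eq_mul]
        refine mul_le_mul_of_nonneg_right ?_ (hWnn G)
        have hGa := Finset.mem_filter.mp hG
        have hcard := fiber_card_le hne hGa.2.1 P (fun p hp => hPfacts p hp)
        have hdeg : G.degree v0 = a v0 + 1 := hGa.2.2 v0
        have : (P.filter (fun p => Fg v0 v1 p.1 p.2 = G)).card ≤ a v0 := by omega
        exact_mod_cast Nat.cast_le.mpr this
    _ = (a v0 : ℝ) * ∑ G ∈ Ta, Wt w G := by rw [Finset.mul_sum]

omit [Fintype V] [DecidableEq V] in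
lemma alg {δ x y nb na s : ℝ} (hδ0 : 0 < δ)
    (hkey : δ * (y + 1) * nb ≤ x * na) (hs : 0 ≤ s) :
    (y + 1) * (nb / s) ≤ δ⁻¹ * x * (na / s) := by
  rcases hs.eq_or_lt with h | h
  · rw [← h, div_zero, div_zero, mul_zero, mul_zero]
  · rw [mul_div_assoc', mul_div_assoc', div_le_div_iff₀ h h]
    have h1 : (y + 1) * nb ≤ δ⁻¹ * x * na := by
      have h2 : δ⁻¹ * (δ * (y + 1) * nb) ≤ δ⁻¹ * (x * na) :=
        mul_le_mul_of_nonneg_left hkey (inv_nonneg.mpr hδ0.le)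
      calc (y + 1) * nb = δ⁻¹ * (δ * (y + 1) * nb) := by
            field_simp
          _ ≤ δ⁻¹ * (x * na) := h2
          _ = δ⁻¹ * x * na := by ring
    nlinarith [h1, h.le]

end TreeShiftAux

/-- with `P(τ) = weight(τ)/spt(A)` on spanning trees of `Kₙ`,
`T(a)` the trees with `deg_i(τ) = aᵢ + 1`, `a₁ > 0`, and
`b = (a₁ - 1, a₂ + 1, a₃, …, aₙ)`, one has `(a₂+1) P(T(b)) ≤ δ⁻¹ a₁ P(T(a))`.
(Vertices `1, 2` of the paper are `0, 1 : Fin n`.) -/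
theorem tree_degree_shift_inequality (n : ℕ) (hn : 2 ≤ n)
    (δ : ℝ) (hδ0 : 0 < δ) (hδ1 : δ ≤ 1)
    (A : Matrix (Fin n) (Fin n) ℝ)
    (hsymm : ∀ i j, A i j = A j i)
    (hA : ∀ i j, δ ≤ A i j ∧ A i j ≤ 1)
    (a : Fin n → ℕ) (ha : ∑ i, a i = n - 2) (ha1 : 0 < a ⟨0, by omega⟩) :
    ((a ⟨1, by omega⟩ : ℝ) + 1) *
        ((∑ T : SimpleGraph (Fin n),
            if T.IsTree ∧
                (∀ i : Fin n, T.degree i =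
                  Function.update (Function.update a ⟨0, by omega⟩
                      (a ⟨0, by omega⟩ - 1)) ⟨1, by omega⟩
                      (a ⟨1, by omega⟩ + 1) i + 1) then
              ∏ e ∈ Finset.univ.filter (fun e : Sym2 (Fin n) => e ∈ T.edgeSet),
                Sym2.lift ⟨fun i j => A i j, fun i j => hsymm i j⟩ e
            else 0) /
          (∑ T : SimpleGraph (Fin n),
            if T.IsTree then
              ∏ e ∈ Finset.univ.filter (fun e : Sym2 (Fin n) => e ∈ T.edgeSet),
                Sym2.lift ⟨fun i j => A i j, fun i j => hsymm i j⟩ e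
            else 0)) ≤
      δ⁻¹ * (a ⟨0, by omega⟩ : ℝ) *
        ((∑ T : SimpleGraph (Fin n),
            if T.IsTree ∧ (∀ i : Fin n, T.degree i = a i + 1) then
              ∏ e ∈ Finset.univ.filter (fun e : Sym2 (Fin n) => e ∈ T.edgeSet),
                Sym2.lift ⟨fun i j => A i j, fun i j => hsymm i j⟩ e
            else 0) /
          (∑ T : SimpleGraph (Fin n),
            if T.IsTree then
              ∏ e ∈ Finset.univ.filter (fun e : Sym2 (Fin n) => e ∈ T.edgeSet),
                Sym2.lift ⟨fun i j => A i j, fun i j => hsymm i j⟩ e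
            else 0)) := by
  have hne01 : (⟨0, by omega⟩ : Fin n) ≠ ⟨1, by omega⟩ := by
    intro h
    rw [Fin.mk.injEq] at h
    omega
  have hw : ∀ e : Sym2 (Fin n),
      δ ≤ Sym2.lift ⟨fun i j => A i j, fun i j => hsymm i j⟩ e ∧
        Sym2.lift ⟨fun i j => A i j, fun i j => hsymm i j⟩ e ≤ 1 := by
    intro e
    induction e using Sym2.ind with
    | _ i j => simpa using hA i j
  have hkey := TreeShiftAux.key (v0 := (⟨0, by omega⟩ : Fin n))
    (v1 := (⟨1, by omega⟩ : Fin n)) hne01 hδ0 hδ1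
    (Sym2.lift ⟨fun i j => A i j, fun i j => hsymm i j⟩) hw a ha1
  rw [Finset.sum_filter, Finset.sum_filter] at hkey
  simp only [TreeShiftAux.Wt] at hkey
  refine TreeShiftAux.alg hδ0 (by convert hkey) ?_
  refine Finset.sum_nonneg fun T _ => ?_
  by_cases hT : T.IsTree
  · rw [if_pos hT]
    exact Finset.prod_nonneg fun e _ => le_trans hδ0.le (hw e).1
  · rw [if_neg hT]
end

section
/- Let A be an n×n matrix with δ ≤ a_{ij} ≤ 1. Define a probability measure on closed walks of length n by P(π) = weight(π)/trace(A^n). For a = (α_1,...,α_n) with Σα_i = n and α_1 > 0, let Π(a) be the set of closed walks π of length n with deg_i(π) = α_i for all i, and let b = (α_1−1, α_2+1, α_3,...,α_n). Then (α_2+1) P(Π(b)) ≤ δ^{-2} α_1 P(Π(a)). -/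
open scoped Classical

open Finset in
lemma mem_deg_update {n : ℕ} (π : Fin n → Fin n) (k u v : Fin n)
    (hπ : π k = u) (huv : u ≠ v) (c : Fin n → ℕ)
    (hπc : ∀ i, (univ.filter fun j => π j = i).card = c i) :
    ∀ i, (univ.filter fun j => Function.update π k v j = i).card =
      Function.update (Function.update c u (c u - 1)) v (c v + 1) i := by
  intro i
  have key : (univ.filter fun j => Function.update π k v j = i) =
      if i = v then insert k (univ.filter fun j => π j = i)
      else (univ.filter fun j => π j = i).erase k := by
    split_ifs with hiv
    · subst hiv
      ext j
      rcases eq_or_ne j k with rfl | hj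
      · simp
      · simp [Function.update_of_ne hj, hj]
    · ext j
      rcases eq_or_ne j k with rfl | hj
      · simp [Ne.symm hiv]
      · simp [Function.update_of_ne hj, hj]
  rw [key]
  rcases eq_or_ne i v with rfl | hiv
  · rw [if_pos rfl, Finset.card_insert_of_notMem (by simp [hπ, huv]), hπc]
    simp [Function.update_self]
  · rw [if_neg hiv]
    rcases eq_or_ne i u with rfl | hiu
    · rw [Finset.card_erase_of_mem (by simp [hπ]), hπc]
      rw [Function.update_of_ne hiv, Function.update_self]
    · rw [Finset.erase_eq_of_notMem (by simp [hπ, Ne.symm hiu]), hπc]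
      rw [Function.update_of_ne hiv, Function.update_of_ne hiu]

open Finset in
lemma weight_update_ge {n : ℕ} [NeZero n] (δ : ℝ) (hδ0 : 0 < δ)
    (A : Matrix (Fin n) (Fin n) ℝ) (hA : ∀ i j, δ ≤ A i j ∧ A i j ≤ 1)
    (v0 v1 : Fin n) (hv1 : v1 ≠ 0) (π : Fin n → Fin n) (k : Fin n) :
    δ ^ 2 * ∏ j : Fin n, A (π j) (π (j + v1)) ≤
      ∏ j : Fin n, A (Function.update π k v0 j) (Function.update π k v0 (j + v1)) := by
  set π' := Function.update π k v0 with hπ'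
  have hkk : k - v1 ≠ k := fun h => hv1 (sub_eq_self.mp h)
  set s : Finset (Fin n) := {k - v1, k} with hs
  have hprod : ∀ f : Fin n → Fin n, (∏ j : Fin n, A (f j) (f (j + v1))) =
      (A (f (k - v1)) (f (k - v1 + v1)) * A (f k) (f (k + v1))) *
        ∏ j ∈ sᶜ, A (f j) (f (j + v1)) := by
    intro f
    rw [← Finset.prod_mul_prod_compl s fun j => A (f j) (f (j + v1)), Finset.prod_pair hkk]
  have hout : ∀ j ∈ sᶜ, A (π' j) (π' (j + v1)) = A (π j) (π (j + v1)) := by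
    intro j hj
    simp only [hs, Finset.mem_compl, Finset.mem_insert, Finset.mem_singleton, not_or] at hj
    rw [hπ', Function.update_of_ne hj.2, Function.update_of_ne
      (fun h => hj.1 (eq_sub_of_add_eq h))]
  rw [hprod π, hprod π', Finset.prod_congr rfl hout]
  have hR : 0 ≤ ∏ j ∈ sᶜ, A (π j) (π (j + v1)) :=
    Finset.prod_nonneg fun j _ => le_trans hδ0.le (hA _ _).1
  set R := ∏ j ∈ sᶜ, A (π j) (π (j + v1))
  have hf1 := hA (π (k - v1)) (π (k - v1 + v1))
  have hf2 := hA (π k) (π (k + v1))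
  have hg1 := hA (π' (k - v1)) (π' (k - v1 + v1))
  have hg2 := hA (π' k) (π' (k + v1))
  have h12 : A (π (k - v1)) (π (k - v1 + v1)) * A (π k) (π (k + v1)) ≤ 1 :=
    mul_le_one₀ hf1.2 (le_trans hδ0.le hf2.1) hf2.2
  have hgg : δ * δ ≤ A (π' (k - v1)) (π' (k - v1 + v1)) * A (π' k) (π' (k + v1)) :=
    mul_le_mul hg1.1 hg2.1 hδ0.le (le_trans hδ0.le hg1.1)
  calc δ ^ 2 * (A (π (k - v1)) (π (k - v1 + v1)) * A (π k) (π (k + v1)) * R)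
      = (A (π (k - v1)) (π (k - v1 + v1)) * A (π k) (π (k + v1))) * (δ ^ 2 * R) := by ring
    _ ≤ 1 * (δ ^ 2 * R) := mul_le_mul_of_nonneg_right h12 (by positivity)
    _ = (δ * δ) * R := by ring
    _ ≤ (A (π' (k - v1)) (π' (k - v1 + v1)) * A (π' k) (π' (k + v1))) * R :=
        mul_le_mul_of_nonneg_right hgg hR

open Finset in
lemma key_ineq {n : ℕ} [NeZero n] (δ : ℝ) (hδ0 : 0 < δ)
    (A : Matrix (Fin n) (Fin n) ℝ) (hA : ∀ i j, δ ≤ A i j ∧ A i j ≤ 1)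
    (v0 v1 : Fin n) (hv : v0 ≠ v1) (hv1 : v1 ≠ 0)
    (a : Fin n → ℕ) (ha1 : 0 < a v0) :
    δ ^ 2 * (((a v1 : ℝ) + 1) *
      ∑ π ∈ univ.filter (fun π : Fin n → Fin n => ∀ i,
          (univ.filter fun k => π k = i).card =
            Function.update (Function.update a v0 (a v0 - 1)) v1 (a v1 + 1) i),
        ∏ k : Fin n, A (π k) (π (k + v1))) ≤
    (a v0 : ℝ) * ∑ π ∈ univ.filter (fun π : Fin n → Fin n => ∀ i,
          (univ.filter fun k => π k = i).card = a i),
        ∏ k : Fin n, A (π k) (π (k + v1)) := by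
  set b : Fin n → ℕ := Function.update (Function.update a v0 (a v0 - 1)) v1 (a v1 + 1) with hb
  set W : (Fin n → Fin n) → ℝ := fun π => ∏ k : Fin n, A (π k) (π (k + v1)) with hW
  set Pb := univ.filter (fun π : Fin n → Fin n => ∀ i,
      (univ.filter fun k => π k = i).card = b i) with hPb
  set Pa := univ.filter (fun π : Fin n → Fin n => ∀ i,
      (univ.filter fun k => π k = i).card = a i) with hPa
  have hbv1 : b v1 = a v1 + 1 := by rw [hb, Function.update_self]
  have hbv0 : b v0 = a v0 - 1 := by
    rw [hb, Function.update_of_ne hv, Function.update_self]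
  have hba : Function.update (Function.update b v1 (b v1 - 1)) v0 (b v0 + 1) = a := by
    funext i
    rcases eq_or_ne i v0 with rfl | h0
    · rw [Function.update_self, hbv0]; omega
    · rw [Function.update_of_ne h0]
      rcases eq_or_ne i v1 with rfl | h1
      · rw [Function.update_self, hbv1]; omega
      · rw [Function.update_of_ne h1, hb, Function.update_of_ne h1,
          Function.update_of_ne h0]
  have stepA : δ ^ 2 * (((a v1 : ℝ) + 1) * ∑ π ∈ Pb, W π) =
      ∑ π ∈ Pb, ∑ _k ∈ univ.filter (fun k => π k = v1), δ ^ 2 * W π := by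
    rw [Finset.mul_sum, Finset.mul_sum]
    refine Finset.sum_congr rfl fun π hπ => ?_
    have hc : (univ.filter fun k => π k = v1).card = a v1 + 1 := by
      rw [(Finset.mem_filter.mp hπ).2 v1, hbv1]
    rw [Finset.sum_const, hc, nsmul_eq_mul]
    push_cast; ring
  have stepB : ∑ π ∈ Pb, ∑ k ∈ univ.filter (fun k => π k = v1), δ ^ 2 * W π ≤
      ∑ π ∈ Pb, ∑ k ∈ univ.filter (fun k => π k = v1), W (Function.update π k v0) := by
    refine Finset.sum_le_sum fun π _ => Finset.sum_le_sum fun k _ => ?_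
    exact weight_update_ge δ hδ0 A hA v0 v1 hv1 π k
  have stepC : ∑ π ∈ Pb, ∑ k ∈ univ.filter (fun k => π k = v1), W (Function.update π k v0) =
      ∑ σ ∈ Pa, ∑ k ∈ univ.filter (fun k => σ k = v0), W σ := by
    rw [Finset.sum_sigma' Pb (fun π => univ.filter (fun k => π k = v1))
        (fun π k => W (Function.update π k v0)),
      Finset.sum_sigma' Pa (fun σ => univ.filter (fun k => σ k = v0)) (fun σ _ => W σ)]
    refine Finset.sum_nbij' (fun p => ⟨Function.update p.1 p.2 v0, p.2⟩)
      (fun q => ⟨Function.update q.1 q.2 v1, q.2⟩) ?_ ?_ ?_ ?_ ?_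
    · rintro ⟨π, k⟩ hp
      rw [Finset.mem_sigma] at hp
      obtain ⟨h1, h2⟩ := hp
      rw [hPb, Finset.mem_filter] at h1
      rw [Finset.mem_filter] at h2
      rw [Finset.mem_sigma]
      constructor
      · rw [hPa, Finset.mem_filter]
        refine ⟨Finset.mem_univ _, ?_⟩
        have := mem_deg_update π k v1 v0 h2.2 hv.symm b h1.2
        rw [hba] at this
        exact this
      · simp
    · rintro ⟨σ, k⟩ hq
      rw [Finset.mem_sigma] at hq
      obtain ⟨h1, h2⟩ := hq
      rw [hPa, Finset.mem_filter] at h1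
      rw [Finset.mem_filter] at h2
      rw [Finset.mem_sigma]
      constructor
      · rw [hPb, Finset.mem_filter]
        exact ⟨Finset.mem_univ _, mem_deg_update σ k v0 v1 h2.2 hv a h1.2⟩
      · simp
    · rintro ⟨π, k⟩ hp
      rw [Finset.mem_sigma] at hp
      have hk : π k = v1 := (Finset.mem_filter.mp hp.2).2
      simp only [Function.update_idem]
      rw [← hk, Function.update_eq_self]
    · rintro ⟨σ, k⟩ hq
      rw [Finset.mem_sigma] at hq
      have hk : σ k = v0 := (Finset.mem_filter.mp hq.2).2
      simp only [Function.update_idem]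
      rw [← hk, Function.update_eq_self]
    · rintro ⟨π, k⟩ _; rfl
  have stepD : ∑ σ ∈ Pa, ∑ _k ∈ univ.filter (fun k => σ k = v0), W σ =
      (a v0 : ℝ) * ∑ σ ∈ Pa, W σ := by
    rw [Finset.mul_sum]
    refine Finset.sum_congr rfl fun σ hσ => ?_
    rw [Finset.sum_const, (Finset.mem_filter.mp hσ).2 v0, nsmul_eq_mul]
  rw [stepA]
  calc _ ≤ _ := stepB
    _ = _ := stepC
    _ = _ := stepD

open Finset in
lemma trace_pow_pos {n : ℕ} (hn : 1 ≤ n) (δ : ℝ) (hδ0 : 0 < δ)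
    (A : Matrix (Fin n) (Fin n) ℝ) (hA : ∀ i j, δ ≤ A i j ∧ A i j ≤ 1) :
    0 < Matrix.trace (A ^ n) := by
  haveI : NeZero n := ⟨by omega⟩
  have hpow : ∀ m, 1 ≤ m → ∀ i j, 0 < (A ^ m) i j := by
    intro m
    induction m with
    | zero => omega
    | succ m ih =>
      intro _ i j
      rcases Nat.eq_zero_or_pos m with rfl | hm
      · simpa using lt_of_lt_of_le hδ0 (hA i j).1
      · rw [pow_succ, Matrix.mul_apply]
        refine Finset.sum_pos (fun k _ => mul_pos (ih hm i k)
          (lt_of_lt_of_le hδ0 (hA k j).1)) univ_nonempty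
  rw [Matrix.trace]
  exact Finset.sum_pos (fun i _ => hpow n hn i i) univ_nonempty

/-- with `P(π) = weight(π)/trace(Aⁿ)` on closed walks of length
`n`, and `Π(a)` the walks with degree sequence `a`, if `a₁ > 0` and
`b = (a₁ - 1, a₂ + 1, a₃, …, aₙ)` then `(a₂+1) P(Π(b)) ≤ δ⁻² a₁ P(Π(a))`.
(Vertices `1, 2` of the paper are `0, 1 : Fin n`.) -/
theorem walk_degree_shift_inequality (n : ℕ) (hn : 2 ≤ n)
    (δ : ℝ) (hδ0 : 0 < δ) (hδ1 : δ < 1)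
    (A : Matrix (Fin n) (Fin n) ℝ)
    (hA : ∀ i j, δ ≤ A i j ∧ A i j ≤ 1)
    (a : Fin n → ℕ) (ha : ∑ i, a i = n) (ha1 : 0 < a ⟨0, by omega⟩) :
    ((a ⟨1, by omega⟩ : ℝ) + 1) *
        ((∑ π ∈ Finset.univ.filter
            (fun π : Fin n → Fin n => ∀ i : Fin n,
              (Finset.univ.filter fun k : Fin n => π k = i).card =
                Function.update (Function.update a ⟨0, by omega⟩
                  (a ⟨0, by omega⟩ - 1)) ⟨1, by omega⟩ (a ⟨1, by omega⟩ + 1) i),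
            ∏ k : Fin n, A (π k) (π (k + ⟨1, by omega⟩))) /
          Matrix.trace (A ^ n)) ≤
      (δ ^ 2)⁻¹ * (a ⟨0, by omega⟩ : ℝ) *
        ((∑ π ∈ Finset.univ.filter
            (fun π : Fin n → Fin n => ∀ i : Fin n,
              (Finset.univ.filter fun k : Fin n => π k = i).card = a i),
            ∏ k : Fin n, A (π k) (π (k + ⟨1, by omega⟩))) /
          Matrix.trace (A ^ n)) := by
  haveI : NeZero n := ⟨by omega⟩
  have hT : 0 < Matrix.trace (A ^ n) := trace_pow_pos (by omega) δ hδ0 A hA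
  have hv : (⟨0, by omega⟩ : Fin n) ≠ ⟨1, by omega⟩ := by simp [Fin.ext_iff]
  have hv1 : (⟨1, by omega⟩ : Fin n) ≠ 0 := by simp [Fin.ext_iff]
  have key := key_ineq δ hδ0 A hA ⟨0, by omega⟩ ⟨1, by omega⟩ hv hv1 a ha1
  have hδ2 : (0 : ℝ) < δ ^ 2 := by positivity
  rw [← mul_div_assoc, ← mul_div_assoc, div_le_div_iff_of_pos_right hT, mul_assoc,
    inv_mul_eq_div, le_div_iff₀ hδ2, mul_comm]
  exact key
end
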